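/- arXiv:2109.13443 — 4 statements merged into one kernel-verified Lean document; each statement's English description precedes it below -/
import Mathlib

section
/- Let (h, g; α, ▷) be a differential crossed module and V a real vector space. For any alternating k₁-linear map A₁ : V^{k₁} → g, alternating k₂-linear map A₂ : V^{k₂} → g, and alternating t-linear map B : V^t → h, one has (A₁ ∧^{[,]} A₂) ∧^▷ B = A₁ ∧^▷ (A₂ ∧^▷ B) + (−1)^{k₁ k₂ + 1} A₂ ∧^▷ (A₁ ∧^▷ B) as alternating (k₁+k₂+t)-linear maps V^{k₁+k₂+t} → h. -/
/-- A (k, l)-shuffle: a permutation of `Fin (k + l)` that is strictly increasing on the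
first `k` indices and on the last `l` indices. -/
def IsShuffle (k l : ℕ) (σ : Equiv.Perm (Fin (k + l))) : Prop :=
  (∀ i j : Fin k, i < j → σ (Fin.castAdd l i) < σ (Fin.castAdd l j)) ∧
  (∀ i j : Fin l, i < j → σ (Fin.natAdd k i) < σ (Fin.natAdd k j))

instance (k l : ℕ) (σ : Equiv.Perm (Fin (k + l))) : Decidable (IsShuffle k l σ) := by
  unfold IsShuffle; infer_instance

/-- The wedge product, via a bilinear pairing `μ : E → F → W`, of a `k`-form `A` and an
`l`-form `B` (given as functions on tuples of vectors):
`(A ∧^μ B)(v) = Σ_σ sgn(σ) μ(A(v_{σ(1)},…,v_{σ(k)}), B(v_{σ(k+1)},…,v_{σ(k+l)}))`,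
the sum ranging over `(k, l)`-shuffles `σ`. -/
def wedge {V E F W : Type*} [AddCommGroup W]
    (μ : E → F → W) {k l : ℕ}
    (A : (Fin k → V) → E) (B : (Fin l → V) → F) :
    (Fin (k + l) → V) → W :=
  fun v => ∑ σ : Equiv.Perm (Fin (k + l)),
    if IsShuffle k l σ then
      (Equiv.Perm.sign σ : ℤ) •
        μ (A fun i => v (σ (Fin.castAdd l i))) (B fun i => v (σ (Fin.natAdd k i)))
    else 0

/-- Identify `m`-forms with `n`-forms along an equality `m = n` of arities. -/
def reindex {V W : Type*} {m n : ℕ} (h : m = n) (f : (Fin m → V) → W) :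
    (Fin n → V) → W :=
  fun v => f fun i => v (Fin.cast h i)

open Equiv Equiv.Perm Finset

namespace BWAux

variable {m n : ℕ}

/-- Extend a permutation of `Fin m` to `Fin (m + n)`, acting as identity on the last block. -/
def extL (n : ℕ) (ρ : Perm (Fin m)) : Perm (Fin (m + n)) :=
  Equiv.permCongr finSumFinEquiv (Equiv.Perm.sumCongr ρ 1)

@[simp] lemma extL_castAdd (ρ : Perm (Fin m)) (i : Fin m) :
    extL n ρ (Fin.castAdd n i) = Fin.castAdd n (ρ i) := by
  simp [extL, Equiv.permCongr_apply, finSumFinEquiv_symm_apply_castAdd]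

@[simp] lemma extL_natAdd (ρ : Perm (Fin m)) (i : Fin n) :
    extL n ρ (Fin.natAdd m i) = Fin.natAdd m i := by
  simp [extL, Equiv.permCongr_apply, finSumFinEquiv_symm_apply_natAdd]

@[simp] lemma sign_extL (ρ : Perm (Fin m)) : sign (extL n ρ) = sign ρ := by
  simp [extL]

lemma extL_mul (a b : Perm (Fin m)) : extL n (a * b) = extL n a * extL n b := by
  ext x
  rcases h : finSumFinEquiv.symm x with i | i <;>
    simp [extL, Equiv.permCongr_apply, Perm.mul_apply, h]

@[simp] lemma extL_one : extL n (1 : Perm (Fin m)) = 1 := by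
  ext x
  simp [extL, Equiv.Perm.sumCongr_one, Equiv.permCongr_apply]

@[simp] lemma extL_mul_inv_cancel (a : Perm (Fin m)) : extL n a * extL n a⁻¹ = 1 := by
  rw [← extL_mul, mul_inv_cancel, extL_one]

/-- Extend a permutation of `Fin n` to `Fin (m + n)`, acting as identity on the first block. -/
def extR (m : ℕ) (ρ : Perm (Fin n)) : Perm (Fin (m + n)) :=
  Equiv.permCongr finSumFinEquiv (Equiv.Perm.sumCongr 1 ρ)

@[simp] lemma extR_castAdd (ρ : Perm (Fin n)) (i : Fin m) :
    extR m ρ (Fin.castAdd n i) = Fin.castAdd n i := by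
  simp [extR, Equiv.permCongr_apply, finSumFinEquiv_symm_apply_castAdd]

@[simp] lemma extR_natAdd (ρ : Perm (Fin n)) (i : Fin n) :
    extR m ρ (Fin.natAdd m i) = Fin.natAdd m (ρ i) := by
  simp [extR, Equiv.permCongr_apply, finSumFinEquiv_symm_apply_natAdd]

@[simp] lemma sign_extR (ρ : Perm (Fin n)) : sign (extR m ρ) = sign ρ := by
  simp [extR]

lemma extR_mul (a b : Perm (Fin n)) : extR m (a * b) = extR m a * extR m b := by
  ext x
  rcases h : finSumFinEquiv.symm x with i | i <;>
    simp [extR, Equiv.permCongr_apply, Perm.mul_apply, h]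

@[simp] lemma extR_one : extR m (1 : Perm (Fin n)) = 1 := by
  ext x
  simp [extR, Equiv.Perm.sumCongr_one, Equiv.permCongr_apply]

@[simp] lemma extR_mul_inv_cancel (a : Perm (Fin n)) : extR m a * extR m a⁻¹ = 1 := by
  rw [← extR_mul, mul_inv_cancel, extR_one]

/-- Uniqueness of the sorting permutation of an injective tuple. -/
lemma eq_sort_of_monotone {N : ℕ} {u : Fin n → Fin N} (hu : Function.Injective u)
    {π : Perm (Fin n)} (hmono : Monotone (u ∘ π)) : π = Tuple.sort u := by
  have h2 : u ∘ π = u ∘ Tuple.sort u := Tuple.comp_sort_eq_comp_iff_monotone.mpr hmono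
  exact Equiv.ext fun x => hu (congrFun h2 x)

lemma strictMono_sort {N : ℕ} {u : Fin n → Fin N} (hu : Function.Injective u) :
    StrictMono (u ∘ Tuple.sort u) :=
  (Tuple.monotone_sort u).strictMono_of_injective (hu.comp (Equiv.injective _))

/-! ### Conjugating permutations along an arity equality -/

def conjC {M N : ℕ} (h : M = N) (τ : Perm (Fin M)) : Perm (Fin N) :=
  Equiv.permCongr (finCongr h) τ

@[simp] lemma conjC_apply {M N : ℕ} (h : M = N) (τ : Perm (Fin M)) (x : Fin N) :
    conjC h τ x = Fin.cast h (τ (Fin.cast h.symm x)) := by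
  simp [conjC, Equiv.permCongr_apply]

@[simp] lemma sign_conjC {M N : ℕ} (h : M = N) (τ : Perm (Fin M)) :
    sign (conjC h τ) = sign τ := sign_permCongr _ _

lemma cast_cast_self {a b : ℕ} (h1 : a = b) (h2 : b = a) (y : Fin a) :
    Fin.cast h2 (Fin.cast h1 y) = y := Fin.ext (by simp)

lemma conjC_symm_conjC {M N : ℕ} (h : M = N) (τ : Perm (Fin M)) :
    conjC h.symm (conjC h τ) = τ := by
  ext x
  simp only [conjC_apply]
  rw [cast_cast_self, cast_cast_self]

lemma conjC_conjC_symm {M N : ℕ} (h : M = N) (τ : Perm (Fin N)) :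
    conjC h (conjC h.symm τ) = τ := by
  ext x
  simp only [conjC_apply]
  rw [cast_cast_self, cast_cast_self]

lemma cast_lt_cast {M N : ℕ} (h : M = N) {a b : Fin M} :
    Fin.cast h a < Fin.cast h b ↔ a < b := by
  rw [Fin.lt_def, Fin.lt_def, Fin.coe_cast, Fin.coe_cast]

/-! ### The rotation permutation swapping two blocks -/

open Fin.NatCast in
lemma finRotate_pow_apply {n : ℕ} (m : ℕ) (x : Fin (n + 1)) :
    ((finRotate (n + 1)) ^ m) x = x + (m : Fin (n + 1)) := by
  induction m with
  | zero => simp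
  | succ m ih =>
      rw [pow_succ', Perm.mul_apply, finRotate_succ_apply, ih]
      rw [Nat.cast_succ, add_assoc]

open Fin.NatCast in
lemma rot_val {K : ℕ} (m : ℕ) (x : Fin K) :
    (((finRotate K) ^ m) x).val = (x.val + m) % K := by
  rcases K with _ | n
  · exact x.elim0
  · rw [finRotate_pow_apply]
    simp [Fin.add_def, Fin.val_natCast, Nat.add_mod_mod]

def rotP (k₁ k₂ : ℕ) : Perm (Fin (k₁ + k₂)) := (finRotate (k₁ + k₂)) ^ k₂

lemma sign_rotP (k₁ k₂ : ℕ) : sign (rotP k₁ k₂) = (-1) ^ (k₁ * k₂) := by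
  rcases k₂ with _ | c
  · simp [rotP]
  · rw [rotP, map_pow]
    rw [show sign (finRotate (k₁ + (c + 1))) = (-1) ^ (k₁ + c) from by rw [sign_finRotate]; rfl]
    rw [← pow_mul, show (k₁ + c) * (c + 1) = k₁ * (c + 1) + c * (c + 1) from by ring,
      pow_add, (Nat.even_mul_succ_self c).neg_one_pow, mul_one]

lemma rotP_castAdd {k₁ k₂ : ℕ} (i : Fin k₁) :
    rotP k₁ k₂ (Fin.castAdd k₂ i) = ⟨k₂ + i.1, by omega⟩ := by
  apply Fin.ext
  rw [rotP, rot_val]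
  simp only [Fin.coe_castAdd]
  rw [Nat.mod_eq_of_lt (by omega)]
  omega

lemma rotP_natAdd {k₁ k₂ : ℕ} (i : Fin k₂) :
    rotP k₁ k₂ (Fin.natAdd k₁ i) = ⟨i.1, by omega⟩ := by
  apply Fin.ext
  rw [rotP, rot_val]
  simp only [Fin.coe_natAdd]
  rw [show k₁ + ↑i + k₂ = (k₁ + k₂) + ↑i from by omega, Nat.add_mod_left,
    Nat.mod_eq_of_lt (by omega)]

/-! ### Three-block shuffles -/

def Sh3 (k₁ k₂ t : ℕ) (τ : Perm (Fin (k₁ + k₂ + t))) : Prop :=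
  (∀ i j : Fin k₁, i < j →
      τ (Fin.castAdd t (Fin.castAdd k₂ i)) < τ (Fin.castAdd t (Fin.castAdd k₂ j))) ∧
  (∀ i j : Fin k₂, i < j →
      τ (Fin.castAdd t (Fin.natAdd k₁ i)) < τ (Fin.castAdd t (Fin.natAdd k₁ j))) ∧
  (∀ i j : Fin t, i < j →
      τ (Fin.natAdd (k₁ + k₂) i) < τ (Fin.natAdd (k₁ + k₂) j))

instance {k₁ k₂ t : ℕ} (τ : Perm (Fin (k₁ + k₂ + t))) : Decidable (Sh3 k₁ k₂ t τ) := by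
  unfold Sh3; infer_instance

def T {V E₁ E₂ E₃ W : Type*} [AddCommGroup W] (ν : E₁ → E₂ → E₃ → W) {k₁ k₂ t : ℕ}
    (A₁ : (Fin k₁ → V) → E₁) (A₂ : (Fin k₂ → V) → E₂) (B : (Fin t → V) → E₃) :
    (Fin (k₁ + k₂ + t) → V) → W :=
  fun v => ∑ τ : Perm (Fin (k₁ + k₂ + t)),
    if Sh3 k₁ k₂ t τ then
      (sign τ : ℤ) • ν (A₁ fun i => v (τ (Fin.castAdd t (Fin.castAdd k₂ i))))
        (A₂ fun i => v (τ (Fin.castAdd t (Fin.natAdd k₁ i))))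
        (B fun i => v (τ (Fin.natAdd (k₁ + k₂) i)))
    else 0

variable {k₁ k₂ t : ℕ}

lemma castAdd_inj (τ : Perm (Fin (k₁ + k₂ + t))) :
    Function.Injective (fun i : Fin (k₁ + k₂) => τ (Fin.castAdd t i)) := by
  intro a b hab
  have := τ.injective hab
  exact Fin.ext (by simpa using congrArg Fin.val this)

def sortL (τ : Perm (Fin (k₁ + k₂ + t))) : Perm (Fin (k₁ + k₂)) :=
  Tuple.sort (fun i : Fin (k₁ + k₂) => τ (Fin.castAdd t i))

lemma phiL_mem {σ : Perm (Fin (k₁ + k₂ + t))} {ρ : Perm (Fin (k₁ + k₂))}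
    (hσ : IsShuffle (k₁ + k₂) t σ) (hρ : IsShuffle k₁ k₂ ρ) :
    Sh3 k₁ k₂ t (σ * extL t ρ) := by
  refine ⟨fun i j hij => ?_, fun i j hij => ?_, fun i j hij => ?_⟩
  · simp only [Perm.mul_apply, extL_castAdd]
    exact hσ.1 _ _ (hρ.1 i j hij)
  · simp only [Perm.mul_apply, extL_castAdd]
    exact hσ.1 _ _ (hρ.2 i j hij)
  · simp only [Perm.mul_apply, extL_natAdd]
    exact hσ.2 i j hij

lemma psiL_mem₁ {τ : Perm (Fin (k₁ + k₂ + t))} (hτ : Sh3 k₁ k₂ t τ) :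
    IsShuffle (k₁ + k₂) t (τ * extL t (sortL τ)) := by
  refine ⟨fun i j hij => ?_, fun i j hij => ?_⟩
  · simp only [Perm.mul_apply, extL_castAdd]
    exact strictMono_sort (castAdd_inj τ) hij
  · simp only [Perm.mul_apply, extL_natAdd]
    exact hτ.2.2 i j hij

lemma psiL_mem₂ {τ : Perm (Fin (k₁ + k₂ + t))} (hτ : Sh3 k₁ k₂ t τ) :
    IsShuffle k₁ k₂ (sortL τ)⁻¹ := by
  have hs := strictMono_sort (castAdd_inj τ)
  constructor
  · intro i j hij
    rw [← hs.lt_iff_lt]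
    show τ (Fin.castAdd t (sortL τ ((sortL τ)⁻¹ _))) < τ (Fin.castAdd t (sortL τ ((sortL τ)⁻¹ _)))
    rw [Perm.coe_inv, Equiv.apply_symm_apply, Equiv.apply_symm_apply]
    exact hτ.1 i j hij
  · intro i j hij
    rw [← hs.lt_iff_lt]
    show τ (Fin.castAdd t (sortL τ ((sortL τ)⁻¹ _))) < τ (Fin.castAdd t (sortL τ ((sortL τ)⁻¹ _)))
    rw [Perm.coe_inv, Equiv.apply_symm_apply, Equiv.apply_symm_apply]
    exact hτ.2.1 i j hij

lemma sortL_mul {σ : Perm (Fin (k₁ + k₂ + t))} (hσ : IsShuffle (k₁ + k₂) t σ)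
    (ρ : Perm (Fin (k₁ + k₂))) : sortL (σ * extL t ρ) = ρ⁻¹ := by
  refine (eq_sort_of_monotone (castAdd_inj (σ * extL t ρ)) ?_).symm
  have he : ((fun i : Fin (k₁ + k₂) => (σ * extL t ρ) (Fin.castAdd t i)) ∘ ⇑(ρ⁻¹))
      = fun i => σ (Fin.castAdd t i) := by
    funext i
    simp [Function.comp, Perm.mul_apply]
  rw [he]
  exact (show StrictMono fun i => σ (Fin.castAdd t i) from fun i j hij => hσ.1 i j hij).monotone

private def phiAux {E F W : Type*} [AddCommGroup E] [AddCommGroup W] (μ : E → F → W)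
    (hadd : ∀ x x' y, μ (x + x') y = μ x y + μ x' y) (c : F) : E →+ W :=
  AddMonoidHom.mk' (fun x => μ x c) (fun a b => hadd a b c)

theorem wedge_wedge_left {V E₁ E₂ E F W : Type*} [AddCommGroup E] [AddCommGroup W]
    (μ : E → F → W) (hadd : ∀ x x' y, μ (x + x') y = μ x y + μ x' y)
    (μ' : E₁ → E₂ → E)
    (A₁ : (Fin k₁ → V) → E₁) (A₂ : (Fin k₂ → V) → E₂) (B : (Fin t → V) → F) :
    wedge μ (wedge μ' A₁ A₂) B = T (fun x y z => μ (μ' x y) z) A₁ A₂ B := by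
  funext v
  have h2 : ∀ (c : F) (g : Perm (Fin (k₁ + k₂)) → E),
      μ (∑ ρ : Perm (Fin (k₁ + k₂)), g ρ) c = ∑ ρ : Perm (Fin (k₁ + k₂)), μ (g ρ) c :=
    fun c g => map_sum (phiAux μ hadd c) g univ
  have h3 : ∀ (c : F) (z : ℤ) (x : E), μ (z • x) c = z • μ x c :=
    fun c z x => map_zsmul (phiAux μ hadd c) z x
  have h4 : ∀ c : F, μ 0 c = 0 := fun c => map_zero (phiAux μ hadd c)
  have key : ∀ σ : Perm (Fin (k₁ + k₂ + t)), (if IsShuffle (k₁ + k₂) t σ then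
        (Equiv.Perm.sign σ : ℤ) • μ (wedge μ' A₁ A₂ fun i => v (σ (Fin.castAdd t i)))
          (B fun i => v (σ (Fin.natAdd (k₁ + k₂) i))) else 0)
      = ∑ ρ : Perm (Fin (k₁ + k₂)),
          (if IsShuffle (k₁ + k₂) t σ ∧ IsShuffle k₁ k₂ ρ then
            ((Equiv.Perm.sign σ * Equiv.Perm.sign ρ : ℤˣ) : ℤ) •
              μ (μ' (A₁ fun i => v (σ (Fin.castAdd t (ρ (Fin.castAdd k₂ i)))))
                   (A₂ fun i => v (σ (Fin.castAdd t (ρ (Fin.natAdd k₁ i))))))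
                (B fun i => v (σ (Fin.natAdd (k₁ + k₂) i))) else 0) := by
    intro σ
    by_cases hσ : IsShuffle (k₁ + k₂) t σ
    · rw [if_pos hσ]
      show (Equiv.Perm.sign σ : ℤ) • μ (∑ ρ : Perm (Fin (k₁ + k₂)),
          if IsShuffle k₁ k₂ ρ then (Equiv.Perm.sign ρ : ℤ) •
            μ' (A₁ fun i => v (σ (Fin.castAdd t (ρ (Fin.castAdd k₂ i)))))
               (A₂ fun i => v (σ (Fin.castAdd t (ρ (Fin.natAdd k₁ i))))) else 0)
          (B fun i => v (σ (Fin.natAdd (k₁ + k₂) i))) = _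
      rw [h2, Finset.smul_sum]
      refine Finset.sum_congr rfl fun ρ _ => ?_
      by_cases hρ : IsShuffle k₁ k₂ ρ
      · rw [if_pos hρ, if_pos ⟨hσ, hρ⟩, h3, smul_smul, ← Units.val_mul]
      · rw [if_neg hρ, if_neg (fun hc => hρ hc.2), h4, smul_zero]
    · rw [if_neg hσ]
      exact (Finset.sum_eq_zero fun ρ _ => if_neg (fun hc => hσ hc.1)).symm
  have lhs_eq : wedge μ (wedge μ' A₁ A₂) B v
      = ∑ p : Perm (Fin (k₁ + k₂ + t)) × Perm (Fin (k₁ + k₂)),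
          (if IsShuffle (k₁ + k₂) t p.1 ∧ IsShuffle k₁ k₂ p.2 then
            ((Equiv.Perm.sign p.1 * Equiv.Perm.sign p.2 : ℤˣ) : ℤ) •
              μ (μ' (A₁ fun i => v (p.1 (Fin.castAdd t (p.2 (Fin.castAdd k₂ i)))))
                   (A₂ fun i => v (p.1 (Fin.castAdd t (p.2 (Fin.natAdd k₁ i))))))
                (B fun i => v (p.1 (Fin.natAdd (k₁ + k₂) i))) else 0) := by
    rw [Fintype.sum_prod_type]
    exact Finset.sum_congr rfl fun σ _ => key σ
  rw [lhs_eq]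
  show _ = ∑ τ : Perm (Fin (k₁ + k₂ + t)),
    if Sh3 k₁ k₂ t τ then
      (Equiv.Perm.sign τ : ℤ) •
        μ (μ' (A₁ fun i => v (τ (Fin.castAdd t (Fin.castAdd k₂ i))))
             (A₂ fun i => v (τ (Fin.castAdd t (Fin.natAdd k₁ i)))))
          (B fun i => v (τ (Fin.natAdd (k₁ + k₂) i)))
    else 0
  rw [← Finset.sum_filter, ← Finset.sum_filter]
  refine Finset.sum_nbij' (fun p => p.1 * extL t p.2)
    (fun τ => (τ * extL t (sortL τ), (sortL τ)⁻¹)) ?_ ?_ ?_ ?_ ?_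
  · intro p hp
    simp only [Finset.mem_filter, Finset.mem_univ, true_and] at hp ⊢
    exact phiL_mem hp.1 hp.2
  · intro τ hτ
    simp only [Finset.mem_filter, Finset.mem_univ, true_and] at hτ ⊢
    exact ⟨psiL_mem₁ hτ, psiL_mem₂ hτ⟩
  · intro p hp
    simp only [Finset.mem_filter, Finset.mem_univ, true_and] at hp
    have hs : sortL (p.1 * extL t p.2) = p.2⁻¹ := sortL_mul hp.1 p.2
    refine Prod.ext ?_ ?_
    · show p.1 * extL t p.2 * extL t (sortL (p.1 * extL t p.2)) = p.1
      rw [hs, mul_assoc, extL_mul_inv_cancel, mul_one]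
    · show (sortL (p.1 * extL t p.2))⁻¹ = p.2
      rw [hs, inv_inv]
  · intro τ hτ
    show τ * extL t (sortL τ) * extL t (sortL τ)⁻¹ = τ
    rw [mul_assoc, extL_mul_inv_cancel, mul_one]
  · intro p hp
    simp only [Perm.mul_apply, extL_castAdd, extL_natAdd, Equiv.Perm.sign_mul, sign_extL]

/-! ### The right-associated expansion -/

lemma c1 (h : k₁ + (k₂ + t) = k₁ + k₂ + t) (i : Fin k₁) :
    Fin.cast h (Fin.castAdd (k₂ + t) i) = Fin.castAdd t (Fin.castAdd k₂ i) :=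
  Fin.ext (by simp)

lemma c2 (h : k₁ + (k₂ + t) = k₁ + k₂ + t) (i : Fin k₂) :
    Fin.cast h (Fin.natAdd k₁ (Fin.castAdd t i)) = Fin.castAdd t (Fin.natAdd k₁ i) :=
  Fin.ext (by simp)

lemma c3 (h : k₁ + (k₂ + t) = k₁ + k₂ + t) (i : Fin t) :
    Fin.cast h (Fin.natAdd k₁ (Fin.natAdd k₂ i)) = Fin.natAdd (k₁ + k₂) i :=
  Fin.ext (by simp [add_assoc])

def uR (h : k₁ + (k₂ + t) = k₁ + k₂ + t) (τ : Perm (Fin (k₁ + k₂ + t)))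
    (i : Fin (k₂ + t)) : Fin (k₁ + k₂ + t) :=
  τ (Fin.cast h (Fin.natAdd k₁ i))

lemma uR_inj (h : k₁ + (k₂ + t) = k₁ + k₂ + t) (τ : Perm (Fin (k₁ + k₂ + t))) :
    Function.Injective (uR h τ) := by
  intro a b hab
  have := τ.injective hab
  have := congrArg Fin.val this
  simp only [Fin.coe_cast, Fin.coe_natAdd] at this
  exact Fin.ext (by omega)

def sortR (h : k₁ + (k₂ + t) = k₁ + k₂ + t) (τ : Perm (Fin (k₁ + k₂ + t))) :
    Perm (Fin (k₂ + t)) :=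
  Tuple.sort (uR h τ)

lemma phiR_mem (h : k₁ + (k₂ + t) = k₁ + k₂ + t) {σ : Perm (Fin (k₁ + (k₂ + t)))}
    {ρ : Perm (Fin (k₂ + t))} (hσ : IsShuffle k₁ (k₂ + t) σ) (hρ : IsShuffle k₂ t ρ) :
    Sh3 k₁ k₂ t (conjC h (σ * extR k₁ ρ)) := by
  refine ⟨fun i j hij => ?_, fun i j hij => ?_, fun i j hij => ?_⟩
  · simp only [conjC_apply, Perm.mul_apply]
    simp only [show ∀ x : Fin k₁, Fin.cast h.symm (Fin.castAdd t (Fin.castAdd k₂ x))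
        = Fin.castAdd (k₂ + t) x from fun x => Fin.ext (by simp)]
    simp only [extR_castAdd, cast_lt_cast]
    exact hσ.1 i j hij
  · simp only [conjC_apply, Perm.mul_apply]
    simp only [show ∀ x : Fin k₂, Fin.cast h.symm (Fin.castAdd t (Fin.natAdd k₁ x))
        = Fin.natAdd k₁ (Fin.castAdd t x) from fun x => Fin.ext (by simp)]
    simp only [extR_natAdd, cast_lt_cast]
    exact hσ.2 _ _ (hρ.1 i j hij)
  · simp only [conjC_apply, Perm.mul_apply]
    simp only [show ∀ x : Fin t, Fin.cast h.symm (Fin.natAdd (k₁ + k₂) x)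
        = Fin.natAdd k₁ (Fin.natAdd k₂ x) from fun x => Fin.ext (by simp [add_assoc])]
    simp only [extR_natAdd, cast_lt_cast]
    exact hσ.2 _ _ (hρ.2 i j hij)

lemma psiR_mem₁ (h : k₁ + (k₂ + t) = k₁ + k₂ + t) {τ : Perm (Fin (k₁ + k₂ + t))}
    (hτ : Sh3 k₁ k₂ t τ) :
    IsShuffle k₁ (k₂ + t) (conjC h.symm τ * extR k₁ (sortR h τ)) := by
  refine ⟨fun i j hij => ?_, fun i j hij => ?_⟩
  · simp only [Perm.mul_apply, extR_castAdd, conjC_apply]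
    rw [show ∀ x : Fin k₁, Fin.cast h.symm.symm (Fin.castAdd (k₂ + t) x)
        = Fin.castAdd t (Fin.castAdd k₂ x) from fun x => Fin.ext (by simp)]
    simp only [cast_lt_cast]
    exact hτ.1 i j hij
  · simp only [Perm.mul_apply, extR_natAdd, conjC_apply]
    have : ∀ x : Fin (k₂ + t), Fin.cast h.symm.symm (Fin.natAdd k₁ x)
        = Fin.cast h (Fin.natAdd k₁ x) := fun x => Fin.ext (by simp)
    rw [this, this]
    simp only [cast_lt_cast]
    exact strictMono_sort (uR_inj h τ) hij

lemma psiR_mem₂ (h : k₁ + (k₂ + t) = k₁ + k₂ + t) {τ : Perm (Fin (k₁ + k₂ + t))}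
    (hτ : Sh3 k₁ k₂ t τ) : IsShuffle k₂ t (sortR h τ)⁻¹ := by
  have hs := strictMono_sort (uR_inj h τ)
  constructor
  · intro i j hij
    rw [← hs.lt_iff_lt]
    show uR h τ (sortR h τ ((sortR h τ)⁻¹ _)) < uR h τ (sortR h τ ((sortR h τ)⁻¹ _))
    rw [Perm.coe_inv, Equiv.apply_symm_apply, Equiv.apply_symm_apply]
    show τ _ < τ _
    rw [c2 h, c2 h]
    exact hτ.2.1 i j hij
  · intro i j hij
    rw [← hs.lt_iff_lt]
    show uR h τ (sortR h τ ((sortR h τ)⁻¹ _)) < uR h τ (sortR h τ ((sortR h τ)⁻¹ _))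
    rw [Perm.coe_inv, Equiv.apply_symm_apply, Equiv.apply_symm_apply]
    show τ _ < τ _
    rw [c3 h, c3 h]
    exact hτ.2.2 i j hij

lemma sortR_mul (h : k₁ + (k₂ + t) = k₁ + k₂ + t) {σ : Perm (Fin (k₁ + (k₂ + t)))}
    (hσ : IsShuffle k₁ (k₂ + t) σ) (ρ : Perm (Fin (k₂ + t))) :
    sortR h (conjC h (σ * extR k₁ ρ)) = ρ⁻¹ := by
  refine (eq_sort_of_monotone (uR_inj h (conjC h (σ * extR k₁ ρ))) ?_).symm
  have he : (uR h (conjC h (σ * extR k₁ ρ)) ∘ ⇑(ρ⁻¹))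
      = fun i => Fin.cast h (σ (Fin.natAdd k₁ i)) := by
    funext i
    simp only [Function.comp_apply, uR, conjC_apply, Perm.mul_apply]
    rw [cast_cast_self]
    simp
  rw [he]
  exact (show StrictMono fun i => Fin.cast h (σ (Fin.natAdd k₁ i)) from
    fun i j hij => (cast_lt_cast h).mpr (hσ.2 i j hij)).monotone

theorem wedge_wedge_right {V E₁ E₂ E₃ F W : Type*} [AddCommGroup F] [AddCommGroup W]
    (μ : E₁ → F → W) (hadd : ∀ x y y', μ x (y + y') = μ x y + μ x y')
    (μ'' : E₂ → E₃ → F) (h : k₁ + (k₂ + t) = k₁ + k₂ + t)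
    (A₁ : (Fin k₁ → V) → E₁) (A₂ : (Fin k₂ → V) → E₂) (B : (Fin t → V) → E₃) :
    reindex h (wedge μ A₁ (wedge μ'' A₂ B)) = T (fun x y z => μ x (μ'' y z)) A₁ A₂ B := by
  funext v
  have h2 : ∀ (c : E₁) (g : Perm (Fin (k₂ + t)) → F),
      μ c (∑ ρ : Perm (Fin (k₂ + t)), g ρ) = ∑ ρ : Perm (Fin (k₂ + t)), μ c (g ρ) :=
    fun c g => map_sum (AddMonoidHom.mk' (fun y => μ c y) (fun a b => hadd c a b)) g univ
  have h3 : ∀ (c : E₁) (z : ℤ) (x : F), μ c (z • x) = z • μ c x :=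
    fun c z x => map_zsmul (AddMonoidHom.mk' (fun y => μ c y) (fun a b => hadd c a b)) z x
  have h4 : ∀ c : E₁, μ c 0 = 0 :=
    fun c => map_zero (AddMonoidHom.mk' (fun y => μ c y) (fun a b => hadd c a b))
  have key : ∀ σ : Perm (Fin (k₁ + (k₂ + t))), (if IsShuffle k₁ (k₂ + t) σ then
        (Equiv.Perm.sign σ : ℤ) • μ (A₁ fun i => v (Fin.cast h (σ (Fin.castAdd (k₂ + t) i))))
          (wedge μ'' A₂ B fun i => v (Fin.cast h (σ (Fin.natAdd k₁ i)))) else 0)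
      = ∑ ρ : Perm (Fin (k₂ + t)),
          (if IsShuffle k₁ (k₂ + t) σ ∧ IsShuffle k₂ t ρ then
            ((Equiv.Perm.sign σ * Equiv.Perm.sign ρ : ℤˣ) : ℤ) •
              μ (A₁ fun i => v (Fin.cast h (σ (Fin.castAdd (k₂ + t) i))))
                (μ'' (A₂ fun i => v (Fin.cast h (σ (Fin.natAdd k₁ (ρ (Fin.castAdd t i))))))
                     (B fun i => v (Fin.cast h (σ (Fin.natAdd k₁ (ρ (Fin.natAdd k₂ i)))))))
            else 0) := by
    intro σ
    by_cases hσ : IsShuffle k₁ (k₂ + t) σ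
    · rw [if_pos hσ]
      show (Equiv.Perm.sign σ : ℤ) •
          μ (A₁ fun i => v (Fin.cast h (σ (Fin.castAdd (k₂ + t) i))))
            (∑ ρ : Perm (Fin (k₂ + t)), if IsShuffle k₂ t ρ then (Equiv.Perm.sign ρ : ℤ) •
              μ'' (A₂ fun i => v (Fin.cast h (σ (Fin.natAdd k₁ (ρ (Fin.castAdd t i))))))
                  (B fun i => v (Fin.cast h (σ (Fin.natAdd k₁ (ρ (Fin.natAdd k₂ i)))))) else 0)
          = _
      rw [h2, Finset.smul_sum]
      refine Finset.sum_congr rfl fun ρ _ => ?_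
      by_cases hρ : IsShuffle k₂ t ρ
      · rw [if_pos hρ, if_pos ⟨hσ, hρ⟩, h3, smul_smul, ← Units.val_mul]
      · rw [if_neg hρ, if_neg (fun hc => hρ hc.2), h4, smul_zero]
    · rw [if_neg hσ]
      exact (Finset.sum_eq_zero fun ρ _ => if_neg (fun hc => hσ hc.1)).symm
  have lhs_eq : reindex h (wedge μ A₁ (wedge μ'' A₂ B)) v
      = ∑ p : Perm (Fin (k₁ + (k₂ + t))) × Perm (Fin (k₂ + t)),
          (if IsShuffle k₁ (k₂ + t) p.1 ∧ IsShuffle k₂ t p.2 then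
            ((Equiv.Perm.sign p.1 * Equiv.Perm.sign p.2 : ℤˣ) : ℤ) •
              μ (A₁ fun i => v (Fin.cast h (p.1 (Fin.castAdd (k₂ + t) i))))
                (μ'' (A₂ fun i => v (Fin.cast h (p.1 (Fin.natAdd k₁ (p.2 (Fin.castAdd t i))))))
                     (B fun i => v (Fin.cast h (p.1 (Fin.natAdd k₁ (p.2 (Fin.natAdd k₂ i)))))))
            else 0) := by
    rw [Fintype.sum_prod_type]
    exact Finset.sum_congr rfl fun σ _ => key σ
  rw [lhs_eq]
  show _ = ∑ τ : Perm (Fin (k₁ + k₂ + t)),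
    if Sh3 k₁ k₂ t τ then
      (Equiv.Perm.sign τ : ℤ) •
        μ (A₁ fun i => v (τ (Fin.castAdd t (Fin.castAdd k₂ i))))
          (μ'' (A₂ fun i => v (τ (Fin.castAdd t (Fin.natAdd k₁ i))))
               (B fun i => v (τ (Fin.natAdd (k₁ + k₂) i))))
    else 0
  rw [← Finset.sum_filter, ← Finset.sum_filter]
  refine Finset.sum_nbij' (fun p => conjC h (p.1 * extR k₁ p.2))
    (fun τ => (conjC h.symm τ * extR k₁ (sortR h τ), (sortR h τ)⁻¹)) ?_ ?_ ?_ ?_ ?_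
  · intro p hp
    simp only [Finset.mem_filter, Finset.mem_univ, true_and] at hp ⊢
    exact phiR_mem h hp.1 hp.2
  · intro τ hτ
    simp only [Finset.mem_filter, Finset.mem_univ, true_and] at hτ ⊢
    exact ⟨psiR_mem₁ h hτ, psiR_mem₂ h hτ⟩
  · intro p hp
    simp only [Finset.mem_filter, Finset.mem_univ, true_and] at hp
    have hs : sortR h (conjC h (p.1 * extR k₁ p.2)) = p.2⁻¹ := sortR_mul h hp.1 p.2
    refine Prod.ext ?_ ?_
    · show conjC h.symm (conjC h (p.1 * extR k₁ p.2)) * extR k₁ (sortR h (conjC h (p.1 * extR k₁ p.2))) = p.1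
      rw [hs, conjC_symm_conjC, mul_assoc, extR_mul_inv_cancel, mul_one]
    · show (sortR h (conjC h (p.1 * extR k₁ p.2)))⁻¹ = p.2
      rw [hs, inv_inv]
  · intro τ hτ
    show conjC h (conjC h.symm τ * extR k₁ (sortR h τ) * extR k₁ (sortR h τ)⁻¹) = τ
    rw [mul_assoc, extR_mul_inv_cancel, mul_one, conjC_conjC_symm]
  · intro p hp
    simp only [sign_conjC, Equiv.Perm.sign_mul, sign_extR, conjC_apply, Perm.mul_apply]
    simp only [show ∀ x : Fin k₁, Fin.cast h.symm (Fin.castAdd t (Fin.castAdd k₂ x))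
        = Fin.castAdd (k₂ + t) x from fun x => Fin.ext (by simp)]
    simp only [show ∀ x : Fin k₂, Fin.cast h.symm (Fin.castAdd t (Fin.natAdd k₁ x))
        = Fin.natAdd k₁ (Fin.castAdd t x) from fun x => Fin.ext (by simp)]
    simp only [show ∀ x : Fin t, Fin.cast h.symm (Fin.natAdd (k₁ + k₂) x)
        = Fin.natAdd k₁ (Fin.natAdd k₂ x) from fun x => Fin.ext (by simp [add_assoc])]
    simp only [extR_castAdd, extR_natAdd]



/-! ### Swapping the first two blocks -/

lemma extL_inv (a : Perm (Fin m)) : (extL n a)⁻¹ = extL n a⁻¹ := by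
  rw [← mul_one (extL n a)⁻¹, ← extL_mul_inv_cancel a, ← mul_assoc, inv_mul_cancel, one_mul]

lemma rotP_inv_apply_low {k₁ k₂ : ℕ} (y : Fin (k₁ + k₂)) (hy : y.1 < k₂) :
    (rotP k₁ k₂)⁻¹ y = Fin.natAdd k₁ ⟨y.1, hy⟩ := by
  rw [Perm.inv_eq_iff_eq, rotP_natAdd]

lemma rotP_inv_apply_high {k₁ k₂ : ℕ} (y : Fin (k₁ + k₂)) (hy : k₂ ≤ y.1) :
    (rotP k₁ k₂)⁻¹ y = Fin.castAdd k₂ ⟨y.1 - k₂, by omega⟩ := by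
  rw [Perm.inv_eq_iff_eq, rotP_castAdd]
  exact Fin.ext (by simp; omega)

lemma swap_app₁ (hsw : k₂ + k₁ + t = k₁ + k₂ + t) (τ' : Perm (Fin (k₂ + k₁ + t)))
    (i : Fin k₁) :
    (conjC hsw τ' * extL t (rotP k₁ k₂)) (Fin.castAdd t (Fin.castAdd k₂ i))
      = Fin.cast hsw (τ' (Fin.castAdd t (Fin.natAdd k₂ i))) := by
  rw [Perm.mul_apply, extL_castAdd, rotP_castAdd, conjC_apply]
  congr 2

lemma swap_app₂ (hsw : k₂ + k₁ + t = k₁ + k₂ + t) (τ' : Perm (Fin (k₂ + k₁ + t)))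
    (i : Fin k₂) :
    (conjC hsw τ' * extL t (rotP k₁ k₂)) (Fin.castAdd t (Fin.natAdd k₁ i))
      = Fin.cast hsw (τ' (Fin.castAdd t (Fin.castAdd k₁ i))) := by
  rw [Perm.mul_apply, extL_castAdd, rotP_natAdd, conjC_apply]
  congr 2

lemma swap_app₃ (hsw : k₂ + k₁ + t = k₁ + k₂ + t) (τ' : Perm (Fin (k₂ + k₁ + t)))
    (i : Fin t) :
    (conjC hsw τ' * extL t (rotP k₁ k₂)) (Fin.natAdd (k₁ + k₂) i)
      = Fin.cast hsw (τ' (Fin.natAdd (k₂ + k₁) i)) := by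
  rw [Perm.mul_apply, extL_natAdd, conjC_apply]
  congr 2
  exact Fin.ext (by simp [add_comm, add_assoc])

lemma phiS_mem (hsw : k₂ + k₁ + t = k₁ + k₂ + t) {τ' : Perm (Fin (k₂ + k₁ + t))}
    (hτ' : Sh3 k₂ k₁ t τ') : Sh3 k₁ k₂ t (conjC hsw τ' * extL t (rotP k₁ k₂)) := by
  refine ⟨fun i j hij => ?_, fun i j hij => ?_, fun i j hij => ?_⟩
  · rw [swap_app₁, swap_app₁, cast_lt_cast]
    exact hτ'.2.1 i j hij
  · rw [swap_app₂, swap_app₂, cast_lt_cast]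
    exact hτ'.1 i j hij
  · rw [swap_app₃, swap_app₃, cast_lt_cast]
    exact hτ'.2.2 i j hij

lemma psiS_main (hsw : k₂ + k₁ + t = k₁ + k₂ + t) (τ : Perm (Fin (k₁ + k₂ + t))) :
    conjC hsw (conjC hsw.symm (τ * (extL t (rotP k₁ k₂))⁻¹)) * extL t (rotP k₁ k₂) = τ := by
  rw [conjC_conjC_symm, mul_assoc, inv_mul_cancel, mul_one]

lemma psiS_mem (hsw : k₂ + k₁ + t = k₁ + k₂ + t) {τ : Perm (Fin (k₁ + k₂ + t))}
    (hτ : Sh3 k₁ k₂ t τ) :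
    Sh3 k₂ k₁ t (conjC hsw.symm (τ * (extL t (rotP k₁ k₂))⁻¹)) := by
  set τ' := conjC hsw.symm (τ * (extL t (rotP k₁ k₂))⁻¹) with hτ'def
  have hΦ : conjC hsw τ' * extL t (rotP k₁ k₂) = τ := psiS_main hsw τ
  refine ⟨fun i j hij => ?_, fun i j hij => ?_, fun i j hij => ?_⟩
  · rw [← cast_lt_cast hsw, ← swap_app₂ hsw τ' i, ← swap_app₂ hsw τ' j, hΦ]
    exact hτ.2.1 i j hij
  · rw [← cast_lt_cast hsw, ← swap_app₁ hsw τ' i, ← swap_app₁ hsw τ' j, hΦ]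
    exact hτ.1 i j hij
  · rw [← cast_lt_cast hsw, ← swap_app₃ hsw τ' i, ← swap_app₃ hsw τ' j, hΦ]
    exact hτ.2.2 i j hij

lemma T_swap {V E₁ E₂ E₃ W : Type*} [AddCommGroup W] (ν : E₂ → E₁ → E₃ → W)
    (hsw : k₂ + k₁ + t = k₁ + k₂ + t)
    (A₁ : (Fin k₁ → V) → E₁) (A₂ : (Fin k₂ → V) → E₂) (B : (Fin t → V) → E₃) :
    reindex hsw (T ν A₂ A₁ B)
      = ((-1 : ℤ) ^ (k₁ * k₂)) • T (fun x y z => ν y x z) A₁ A₂ B := by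
  have hsq : ((-1 : ℤ) ^ (k₁ * k₂)) * ((-1 : ℤ) ^ (k₁ * k₂)) = 1 := by
    rw [← pow_add]
    exact Even.neg_one_pow ⟨k₁ * k₂, rfl⟩
  funext v
  show (∑ τ' : Perm (Fin (k₂ + k₁ + t)), if Sh3 k₂ k₁ t τ' then
      (Equiv.Perm.sign τ' : ℤ) •
        ν (A₂ fun i => v (Fin.cast hsw (τ' (Fin.castAdd t (Fin.castAdd k₁ i)))))
          (A₁ fun i => v (Fin.cast hsw (τ' (Fin.castAdd t (Fin.natAdd k₂ i)))))
          (B fun i => v (Fin.cast hsw (τ' (Fin.natAdd (k₂ + k₁) i)))) else 0)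
    = ((-1 : ℤ) ^ (k₁ * k₂)) • ∑ τ : Perm (Fin (k₁ + k₂ + t)), if Sh3 k₁ k₂ t τ then
      (Equiv.Perm.sign τ : ℤ) •
        ν (A₂ fun i => v (τ (Fin.castAdd t (Fin.natAdd k₁ i))))
          (A₁ fun i => v (τ (Fin.castAdd t (Fin.castAdd k₂ i))))
          (B fun i => v (τ (Fin.natAdd (k₁ + k₂) i))) else 0
  rw [Finset.smul_sum]
  have hite : ∀ τ : Perm (Fin (k₁ + k₂ + t)),
      ((-1 : ℤ) ^ (k₁ * k₂)) • (if Sh3 k₁ k₂ t τ then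
        (Equiv.Perm.sign τ : ℤ) •
          ν (A₂ fun i => v (τ (Fin.castAdd t (Fin.natAdd k₁ i))))
            (A₁ fun i => v (τ (Fin.castAdd t (Fin.castAdd k₂ i))))
            (B fun i => v (τ (Fin.natAdd (k₁ + k₂) i))) else 0)
      = if Sh3 k₁ k₂ t τ then ((-1 : ℤ) ^ (k₁ * k₂)) • (Equiv.Perm.sign τ : ℤ) •
          ν (A₂ fun i => v (τ (Fin.castAdd t (Fin.natAdd k₁ i))))
            (A₁ fun i => v (τ (Fin.castAdd t (Fin.castAdd k₂ i))))
            (B fun i => v (τ (Fin.natAdd (k₁ + k₂) i))) else 0 := by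
    intro τ
    split <;> simp
  rw [Finset.sum_congr rfl fun τ _ => hite τ]
  rw [← Finset.sum_filter, ← Finset.sum_filter]
  refine Finset.sum_nbij' (fun τ' => conjC hsw τ' * extL t (rotP k₁ k₂))
    (fun τ => conjC hsw.symm (τ * (extL t (rotP k₁ k₂))⁻¹)) ?_ ?_ ?_ ?_ ?_
  · intro τ' hτ'
    simp only [Finset.mem_filter, Finset.mem_univ, true_and] at hτ' ⊢
    exact phiS_mem hsw hτ'
  · intro τ hτ
    simp only [Finset.mem_filter, Finset.mem_univ, true_and] at hτ ⊢
    exact psiS_mem hsw hτ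
  · intro τ' _
    show conjC hsw.symm (conjC hsw τ' * extL t (rotP k₁ k₂) * (extL t (rotP k₁ k₂))⁻¹) = τ'
    rw [mul_assoc, mul_inv_cancel, mul_one, conjC_symm_conjC]
  · intro τ _
    exact psiS_main hsw τ
  · intro τ' _
    simp only [swap_app₁, swap_app₂, swap_app₃]
    rw [smul_smul]
    congr 1
    rw [Equiv.Perm.sign_mul, sign_conjC, sign_extL, sign_rotP, Units.val_mul]
    rw [show (((-1 : ℤˣ) ^ (k₁ * k₂) : ℤˣ) : ℤ) = (-1 : ℤ) ^ (k₁ * k₂) from by push_cast; ring]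
    rw [show ((-1 : ℤ) ^ (k₁ * k₂)) * ((Equiv.Perm.sign τ' : ℤ) * ((-1 : ℤ) ^ (k₁ * k₂)))
        = (Equiv.Perm.sign τ' : ℤ) * (((-1 : ℤ) ^ (k₁ * k₂)) * ((-1 : ℤ) ^ (k₁ * k₂)))
      from by ring, hsq, mul_one]

lemma T_sub {V E₁ E₂ E₃ W : Type*} [AddCommGroup W] (ν ν' : E₁ → E₂ → E₃ → W)
    (A₁ : (Fin k₁ → V) → E₁) (A₂ : (Fin k₂ → V) → E₂) (B : (Fin t → V) → E₃) :
    T (fun x y z => ν x y z - ν' x y z) A₁ A₂ B = T ν A₁ A₂ B - T ν' A₁ A₂ B := by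
  funext v
  show _ = T ν A₁ A₂ B v - T ν' A₁ A₂ B v
  rw [T, T, T, ← Finset.sum_sub_distrib]
  refine Finset.sum_congr rfl fun τ _ => ?_
  split
  · rw [smul_sub]
  · rw [sub_zero]

end BWAux

/-- For a differential crossed module `(h, g; α, ▷)`,
`(A₁ ∧^{[,]} A₂) ∧^▷ B = A₁ ∧^▷ (A₂ ∧^▷ B) + (-1)^(k₁ k₂ + 1) A₂ ∧^▷ (A₁ ∧^▷ B)`. -/
theorem bracket_wedge_act {g h V : Type*} [LieRing g] [LieAlgebra ℝ g]
    [LieRing h] [LieAlgebra ℝ h] [AddCommGroup V] [Module ℝ V]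
    (α : h →ₗ[ℝ] g) (α_bracket : ∀ Y Y' : h, α ⁅Y, Y'⁆ = ⁅α Y, α Y'⁆)
    (act : g →ₗ[ℝ] h →ₗ[ℝ] h)
    (act_der : ∀ (X : g) (Y₁ Y₂ : h), act X ⁅Y₁, Y₂⁆ = ⁅act X Y₁, Y₂⁆ + ⁅Y₁, act X Y₂⁆)
    (act_lie : ∀ (X₁ X₂ : g) (Y : h),
      act ⁅X₁, X₂⁆ Y = act X₁ (act X₂ Y) - act X₂ (act X₁ Y))
    (act_equiv : ∀ (X : g) (Y : h), α (act X Y) = ⁅X, α Y⁆)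
    (peiffer : ∀ Y Y' : h, act (α Y) Y' = ⁅Y, Y'⁆)
    {k₁ k₂ t : ℕ} (A₁ : AlternatingMap ℝ V g (Fin k₁))
    (A₂ : AlternatingMap ℝ V g (Fin k₂)) (B : AlternatingMap ℝ V h (Fin t)) :
    wedge (fun X Y => act X Y) (wedge (fun X X' : g => ⁅X, X'⁆) ⇑A₁ ⇑A₂) ⇑B =
      reindex (by omega : k₁ + (k₂ + t) = k₁ + k₂ + t)
        (wedge (fun X Y => act X Y) ⇑A₁ (wedge (fun X Y => act X Y) ⇑A₂ ⇑B))
      + ((-1 : ℝ) ^ (k₁ * k₂ + 1)) •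
        reindex (by omega : k₂ + (k₁ + t) = k₁ + k₂ + t)
          (wedge (fun X Y => act X Y) ⇑A₂ (wedge (fun X Y => act X Y) ⇑A₁ ⇑B)) := by
  have e1 : wedge (fun X Y => act X Y) (wedge (fun X X' : g => ⁅X, X'⁆) ⇑A₁ ⇑A₂) ⇑B
      = BWAux.T (fun (x y : g) (z : h) => act ⁅x, y⁆ z) ⇑A₁ ⇑A₂ ⇑B :=
    BWAux.wedge_wedge_left (fun X Y => act X Y)
      (fun x x' y => by simp [map_add, LinearMap.add_apply]) (fun X X' : g => ⁅X, X'⁆)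
      ⇑A₁ ⇑A₂ ⇑B
  have e2 : reindex (by omega : k₁ + (k₂ + t) = k₁ + k₂ + t)
        (wedge (fun X Y => act X Y) ⇑A₁ (wedge (fun X Y => act X Y) ⇑A₂ ⇑B))
      = BWAux.T (fun (x y : g) (z : h) => act x (act y z)) ⇑A₁ ⇑A₂ ⇑B :=
    BWAux.wedge_wedge_right (fun X Y => act X Y) (fun x y y' => by simp)
      (fun X Y => act X Y) (by omega) ⇑A₁ ⇑A₂ ⇑B
  have e3 : reindex (by omega : k₂ + (k₁ + t) = k₂ + k₁ + t)
        (wedge (fun X Y => act X Y) ⇑A₂ (wedge (fun X Y => act X Y) ⇑A₁ ⇑B))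
      = BWAux.T (fun (x y : g) (z : h) => act x (act y z)) ⇑A₂ ⇑A₁ ⇑B :=
    BWAux.wedge_wedge_right (fun X Y => act X Y) (fun x y y' => by simp)
      (fun X Y => act X Y) (by omega) ⇑A₂ ⇑A₁ ⇑B
  have e4 : reindex (by omega : k₂ + k₁ + t = k₁ + k₂ + t)
        (BWAux.T (fun (x y : g) (z : h) => act x (act y z)) ⇑A₂ ⇑A₁ ⇑B)
      = ((-1 : ℤ) ^ (k₁ * k₂)) •
          BWAux.T (fun (x y : g) (z : h) => act y (act x z)) ⇑A₁ ⇑A₂ ⇑B :=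
    BWAux.T_swap _ (by omega) ⇑A₁ ⇑A₂ ⇑B
  have e5 : reindex (by omega : k₂ + (k₁ + t) = k₁ + k₂ + t)
        (wedge (fun X Y => act X Y) ⇑A₂ (wedge (fun X Y => act X Y) ⇑A₁ ⇑B))
      = ((-1 : ℤ) ^ (k₁ * k₂)) •
          BWAux.T (fun (x y : g) (z : h) => act y (act x z)) ⇑A₁ ⇑A₂ ⇑B := by
    rw [← e4, ← e3]
    rfl
  rw [e1, e2, e5]
  have hν : (fun (x y : g) (z : h) => act ⁅x, y⁆ z)
      = fun (x y : g) (z : h) => act x (act y z) - act y (act x z) := by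
    funext x y z
    exact act_lie x y z
  rw [hν, BWAux.T_sub]
  have scl : ((-1 : ℝ) ^ (k₁ * k₂ + 1)) • (((-1 : ℤ) ^ (k₁ * k₂)) •
        BWAux.T (fun (x y : g) (z : h) => act y (act x z)) ⇑A₁ ⇑A₂ ⇑B)
      = - BWAux.T (fun (x y : g) (z : h) => act y (act x z)) ⇑A₁ ⇑A₂ ⇑B := by
    funext v
    simp only [Pi.smul_apply, Pi.neg_apply]
    rw [← Int.cast_smul_eq_zsmul ℝ, smul_smul]
    rw [show ((-1 : ℝ) ^ (k₁ * k₂ + 1) * (((-1 : ℤ) ^ (k₁ * k₂) : ℤ) : ℝ)) = -1 from by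
      push_cast
      rw [← pow_add]
      exact Odd.neg_one_pow ⟨k₁ * k₂, by ring⟩]
    rw [neg_one_smul]
  rw [scl]
  abel
end

section
/- Let g, h, l be real vector spaces, ▷ : g × h → h and ▷ : g × l → l bilinear actions, and {,} : h × h → l a bilinear map satisfying the g-equivariance X ▷ {Y₁, Y₂} = {X ▷ Y₁, Y₂} + {Y₁, X ▷ Y₂} for all X ∈ g, Y₁, Y₂ ∈ h. Then for a real vector space V, any alternating k-linear map A : V^k → g, alternating t₁-linear map B₁ : V^{t₁} → h, and alternating t₂-linear map B₂ : V^{t₂} → h, one has A ∧^▷ (B₁ ∧^{{,}} B₂) = (A ∧^▷ B₁) ∧^{{,}} B₂ + (−1)^{k t₁} B₁ ∧^{{,}} (A ∧^▷ B₂) as alternating (k+t₁+t₂)-linear maps V^{k+t₁+t₂} → l. -/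
open Equiv Finset

/-! ### Block permutations -/

def blockSum {k l : ℕ} (p : Equiv.Perm (Fin k)) (q : Equiv.Perm (Fin l)) :
    Equiv.Perm (Fin (k + l)) :=
  finSumFinEquiv.permCongr (Equiv.Perm.sumCongr p q)

@[simp] lemma blockSum_castAdd {k l : ℕ} (p : Equiv.Perm (Fin k)) (q : Equiv.Perm (Fin l))
    (i : Fin k) : blockSum p q (Fin.castAdd l i) = Fin.castAdd l (p i) := by
  simp [blockSum, Equiv.permCongr_apply]

@[simp] lemma blockSum_natAdd {k l : ℕ} (p : Equiv.Perm (Fin k)) (q : Equiv.Perm (Fin l))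
    (j : Fin l) : blockSum p q (Fin.natAdd k j) = Fin.natAdd k (q j) := by
  simp [blockSum, Equiv.permCongr_apply]

lemma blockSum_mul {k l : ℕ} (p p' : Equiv.Perm (Fin k)) (q q' : Equiv.Perm (Fin l)) :
    blockSum p q * blockSum p' q' = blockSum (p * p') (q * q') := by
  apply Equiv.ext
  intro x
  induction x using Fin.addCases with
  | left i => simp [Equiv.Perm.mul_apply]
  | right j => simp [Equiv.Perm.mul_apply]

@[simp] lemma blockSum_one {k l : ℕ} :
    blockSum (1 : Equiv.Perm (Fin k)) (1 : Equiv.Perm (Fin l)) = 1 := by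
  apply Equiv.ext
  intro x
  induction x using Fin.addCases with
  | left i => simp
  | right j => simp

lemma sign_blockSum {k l : ℕ} (p : Equiv.Perm (Fin k)) (q : Equiv.Perm (Fin l)) :
    Equiv.Perm.sign (blockSum p q) = Equiv.Perm.sign p * Equiv.Perm.sign q := by
  rw [blockSum, Equiv.Perm.sign_permCongr, Equiv.Perm.sign_sumCongr]

/-! ### strict mono uniqueness -/

lemma strictMono_eq_of_image_eq {n m : ℕ} {f g : Fin n → Fin m}
    (hf : StrictMono f) (hg : StrictMono g)
    (h : Finset.image f Finset.univ = Finset.image g Finset.univ) : f = g := by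
  have hfc : (Finset.image f Finset.univ).card = n := by
    rw [Finset.card_image_of_injective _ hf.injective, Finset.card_univ, Fintype.card_fin]
  have h1 : f = (Finset.image f Finset.univ).orderEmbOfFin hfc :=
    Finset.orderEmbOfFin_unique hfc (fun x => Finset.mem_image_of_mem f (Finset.mem_univ x)) hf
  have h2 : g = (Finset.image f Finset.univ).orderEmbOfFin hfc :=
    Finset.orderEmbOfFin_unique hfc
      (fun x => h ▸ Finset.mem_image_of_mem g (Finset.mem_univ x)) hg
  rw [h1, h2]

/-! ### swapAdd and its sign -/

def swapAdd (a b : ℕ) : Equiv.Perm (Fin (a + b)) :=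
  (finAddFlip : Fin (a + b) ≃ Fin (b + a)).trans (finCongr (Nat.add_comm b a))

lemma swapAdd_val (a b : ℕ) (x : Fin (a + b)) :
    ((swapAdd a b x : Fin (a + b)) : ℕ) = if (x : ℕ) < a then b + x else (x : ℕ) - a := by
  induction x using Fin.addCases with
  | left i =>
      have : (Fin.castAdd b i : ℕ) = (i : ℕ) := rfl
      simp only [swapAdd, Equiv.trans_apply, finAddFlip_apply_castAdd, finCongr_apply,
        Fin.coe_cast, Fin.coe_natAdd, this]
      simp only [if_pos i.isLt]
  | right j =>
      simp [swapAdd]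

open Fin.NatCast in
lemma finRotate_pow_eq (n b : ℕ) (x : Fin (n + 1)) :
    ((finRotate (n + 1)) ^ b) x = x + (b : Fin (n + 1)) := by
  induction b with
  | zero => simp
  | succ b ih =>
      rw [pow_succ', Equiv.Perm.mul_apply, ih, finRotate_succ_apply]
      push_cast
      rw [add_assoc]

lemma finRotate_pow_val {n : ℕ} (hn : n ≠ 0) (b : ℕ) (x : Fin n) :
    (((finRotate n) ^ b) x : ℕ) = ((x : ℕ) + b) % n := by
  obtain ⟨m, rfl⟩ := Nat.exists_eq_succ_of_ne_zero hn
  rw [finRotate_pow_eq, Fin.val_add, Fin.val_natCast]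
  rw [add_comm (x : ℕ) (b % (m + 1)), Nat.mod_add_mod, add_comm]

lemma sign_finRotate' {n : ℕ} (hn : n ≠ 0) :
    Equiv.Perm.sign (finRotate n) = (-1) ^ (n - 1) := by
  obtain ⟨m, rfl⟩ := Nat.exists_eq_succ_of_ne_zero hn
  simp [sign_finRotate]

lemma sign_swapAdd (a b : ℕ) : Equiv.Perm.sign (swapAdd a b) = (-1) ^ (a * b) := by
  cases b with
  | zero =>
      have : swapAdd a 0 = 1 := by
        apply Equiv.ext
        intro x
        apply Fin.ext
        rw [swapAdd_val]
        have := x.isLt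
        simp only [Nat.add_zero] at this
        simp [this]
      simp [this]
  | succ b' =>
      have hrot : swapAdd a (b' + 1) = (finRotate (a + (b' + 1))) ^ (b' + 1) := by
        apply Equiv.ext
        intro x
        apply Fin.ext
        rw [swapAdd_val, finRotate_pow_val (by omega)]
        have hx := x.isLt
        rcases lt_or_ge (x : ℕ) a with h | h
        · rw [if_pos h, Nat.mod_eq_of_lt (by omega)]
          omega
        · rw [if_neg (not_lt.2 h), Nat.mod_eq_sub_mod (by omega), Nat.mod_eq_of_lt (by omega)]
          omega
      rw [hrot, map_pow, sign_finRotate' (by omega), ← pow_mul]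
      have h1 : a + (b' + 1) - 1 = a + b' := by omega
      have h2 : (a + b') * (b' + 1) = a * (b' + 1) + b' * (b' + 1) := by ring
      rw [h1, h2, pow_add, (Nat.even_mul_succ_self b').neg_one_pow, mul_one]

section FullSum

variable {V E F W : Type*} [AddCommGroup E] [AddCommGroup F] [AddCommGroup W]

lemma sq_sign_cast {n : ℕ} (p : Equiv.Perm (Fin n)) :
    ((Equiv.Perm.sign p : ℤ)) * (Equiv.Perm.sign p : ℤ) = 1 := by
  rw [← Units.val_mul, Int.units_mul_self]; rfl

lemma castAdd_inj' {k l : ℕ} : Function.Injective (Fin.castAdd l : Fin k → Fin (k + l)) :=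
  fun i j hij => Fin.ext (by simpa using congrArg Fin.val hij)

lemma natAdd_inj' {k l : ℕ} : Function.Injective (Fin.natAdd k : Fin l → Fin (k + l)) :=
  fun i j hij => Fin.ext (by have := congrArg Fin.val hij; simpa using this)

theorem wedge_fullsum {k l : ℕ} (μ : E → F → W)
    (hμ₁ : ∀ (c : ℤ) (x : E) (y : F), μ (c • x) y = c • μ x y)
    (hμ₂ : ∀ (c : ℤ) (x : E) (y : F), μ x (c • y) = c • μ x y)
    (A : (Fin k → V) → E) (B : (Fin l → V) → F)
    (hA : ∀ (w : Fin k → V) (p : Equiv.Perm (Fin k)),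
      A (fun i => w (p i)) = (Equiv.Perm.sign p : ℤ) • A w)
    (hB : ∀ (w : Fin l → V) (p : Equiv.Perm (Fin l)),
      B (fun i => w (p i)) = (Equiv.Perm.sign p : ℤ) • B w)
    (v : Fin (k + l) → V) :
    (k.factorial * l.factorial) • wedge μ A B v =
      ∑ π : Equiv.Perm (Fin (k + l)), (Equiv.Perm.sign π : ℤ) •
        μ (A fun i => v (π (Fin.castAdd l i))) (B fun i => v (π (Fin.natAdd k i))) := by
  classical
  set f : Equiv.Perm (Fin (k + l)) → W := fun π => (Equiv.Perm.sign π : ℤ) •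
      μ (A fun i => v (π (Fin.castAdd l i))) (B fun i => v (π (Fin.natAdd k i))) with hf
  have key : ∀ (p : Equiv.Perm (Fin k)) (q : Equiv.Perm (Fin l))
      (σ : Equiv.Perm (Fin (k + l))), f (σ * blockSum p q) = f σ := by
    intro p q σ
    have hsgn : ((Equiv.Perm.sign (σ * blockSum p q) : ℤ)) =
        (Equiv.Perm.sign σ : ℤ) * ((Equiv.Perm.sign p : ℤ) * (Equiv.Perm.sign q : ℤ)) := by
      rw [map_mul, sign_blockSum]; push_cast; ring
    have hA' : (A fun i => v ((σ * blockSum p q) (Fin.castAdd l i)))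
        = (Equiv.Perm.sign p : ℤ) • (A fun i => v (σ (Fin.castAdd l i))) := by
      have h0 : (fun i => v ((σ * blockSum p q) (Fin.castAdd l i)))
          = fun i => (fun i' => v (σ (Fin.castAdd l i'))) (p i) := by
        funext i; simp [Equiv.Perm.mul_apply]
      rw [h0]; exact hA (fun i' => v (σ (Fin.castAdd l i'))) p
    have hB' : (B fun j => v ((σ * blockSum p q) (Fin.natAdd k j)))
        = (Equiv.Perm.sign q : ℤ) • (B fun j => v (σ (Fin.natAdd k j))) := by
      have h0 : (fun j => v ((σ * blockSum p q) (Fin.natAdd k j)))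
          = fun j => (fun j' => v (σ (Fin.natAdd k j'))) (q j) := by
        funext j; simp [Equiv.Perm.mul_apply]
      rw [h0]; exact hB (fun j' => v (σ (Fin.natAdd k j'))) q
    simp only [hf]
    rw [hA', hB', hμ₁, hμ₂, smul_smul, smul_smul, hsgn]
    congr 1
    have hp := sq_sign_cast p
    have hq := sq_sign_cast q
    linear_combination ((Equiv.Perm.sign σ : ℤ) * (Equiv.Perm.sign q : ℤ) *
      (Equiv.Perm.sign q : ℤ)) * hp + (Equiv.Perm.sign σ : ℤ) * hq
  have step2 : ∑ x ∈ Finset.univ.filter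
        (fun x : Equiv.Perm (Fin k) × Equiv.Perm (Fin l) × Equiv.Perm (Fin (k + l)) =>
          IsShuffle k l x.2.2),
        f (x.2.2 * blockSum x.1 x.2.1)
      = ∑ π : Equiv.Perm (Fin (k + l)), f π := by
    apply Finset.sum_bij (fun x _ => x.2.2 * blockSum x.1 x.2.1)
    · intro a _; exact Finset.mem_univ _
    · rintro ⟨p, q, σ⟩ ha ⟨p', q', σ'⟩ hb hab
      simp only [Finset.mem_filter, Finset.mem_univ, true_and] at ha hb
      have h1 : ∀ i : Fin k, σ (Fin.castAdd l (p i)) = σ' (Fin.castAdd l (p' i)) := by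
        intro i
        have h2 := congrArg (fun (π : Equiv.Perm (Fin (k + l))) => π (Fin.castAdd l i)) hab
        simpa [Equiv.Perm.mul_apply] using h2
      have h2 : ∀ j : Fin l, σ (Fin.natAdd k (q j)) = σ' (Fin.natAdd k (q' j)) := by
        intro j
        have h2 := congrArg (fun (π : Equiv.Perm (Fin (k + l))) => π (Fin.natAdd k j)) hab
        simpa [Equiv.Perm.mul_apply] using h2
      have hf1 : StrictMono (fun i => σ (Fin.castAdd l i)) := fun i j hij => ha.1 i j hij
      have hg1 : StrictMono (fun i => σ' (Fin.castAdd l i)) := fun i j hij => hb.1 i j hij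
      have hf2 : StrictMono (fun j => σ (Fin.natAdd k j)) := fun i j hij => ha.2 i j hij
      have hg2 : StrictMono (fun j => σ' (Fin.natAdd k j)) := fun i j hij => hb.2 i j hij
      have himg1 : Finset.image (fun i => σ (Fin.castAdd l i)) Finset.univ
          = Finset.image (fun i => σ' (Fin.castAdd l i)) Finset.univ := by
        ext y
        simp only [Finset.mem_image, Finset.mem_univ, true_and]
        constructor
        · rintro ⟨i, rfl⟩; exact ⟨p' (p⁻¹ i), by rw [← h1 (p⁻¹ i)]; simp⟩
        · rintro ⟨i, rfl⟩; exact ⟨p (p'⁻¹ i), by rw [h1 (p'⁻¹ i)]; simp⟩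
      have himg2 : Finset.image (fun j => σ (Fin.natAdd k j)) Finset.univ
          = Finset.image (fun j => σ' (Fin.natAdd k j)) Finset.univ := by
        ext y
        simp only [Finset.mem_image, Finset.mem_univ, true_and]
        constructor
        · rintro ⟨j, rfl⟩; exact ⟨q' (q⁻¹ j), by rw [← h2 (q⁻¹ j)]; simp⟩
        · rintro ⟨j, rfl⟩; exact ⟨q (q'⁻¹ j), by rw [h2 (q'⁻¹ j)]; simp⟩
      have heq1 := strictMono_eq_of_image_eq hf1 hg1 himg1
      have heq2 := strictMono_eq_of_image_eq hf2 hg2 himg2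
      have hpp' : p = p' := by
        apply Equiv.ext; intro i
        have h' : σ' (Fin.castAdd l (p i)) = σ' (Fin.castAdd l (p' i)) := by
          rw [← congrFun heq1 (p i)]; exact h1 i
        exact castAdd_inj' (σ'.injective h')
      have hqq' : q = q' := by
        apply Equiv.ext; intro j
        have h' : σ' (Fin.natAdd k (q j)) = σ' (Fin.natAdd k (q' j)) := by
          rw [← congrFun heq2 (q j)]; exact h2 j
        exact natAdd_inj' (σ'.injective h')
      have hσσ' : σ = σ' := by
        apply Equiv.ext; intro x
        induction x using Fin.addCases with
        | left i => exact congrFun heq1 i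
        | right j => exact congrFun heq2 j
      rw [hpp', hqq', hσσ']
    · intro π _
      set s₁ := Tuple.sort (fun i => π (Fin.castAdd l i)) with hs₁
      set s₂ := Tuple.sort (fun j => π (Fin.natAdd k j)) with hs₂
      refine ⟨⟨s₁⁻¹, s₂⁻¹, π * blockSum s₁ s₂⟩, ?_, ?_⟩
      · simp only [Finset.mem_filter, Finset.mem_univ, true_and]
        constructor
        · intro i j hij
          have hmono : Monotone ((fun i => π (Fin.castAdd l i)) ∘ s₁) := Tuple.monotone_sort _
          have hinj : Function.Injective ((fun i => π (Fin.castAdd l i)) ∘ s₁) :=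
            (π.injective.comp castAdd_inj').comp s₁.injective
          have hsm := hmono.strictMono_of_injective hinj
          have := hsm hij
          simpa [Equiv.Perm.mul_apply, Function.comp] using this
        · intro i j hij
          have hmono : Monotone ((fun j => π (Fin.natAdd k j)) ∘ s₂) := Tuple.monotone_sort _
          have hinj : Function.Injective ((fun j => π (Fin.natAdd k j)) ∘ s₂) :=
            (π.injective.comp natAdd_inj').comp s₂.injective
          have hsm := hmono.strictMono_of_injective hinj
          have := hsm hij
          simpa [Equiv.Perm.mul_apply, Function.comp] using this
      · rw [mul_assoc, blockSum_mul]; simp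
    · intro a _; rfl
  rw [← step2]
  rw [Finset.sum_congr rfl (fun x _ => key x.1 x.2.1 x.2.2)]
  rw [Finset.sum_filter]
  simp only [Fintype.sum_prod_type]
  have hw : (∑ σ : Equiv.Perm (Fin (k + l)),
      (if IsShuffle k l σ then f σ else 0)) = wedge μ A B v := by
    simp only [hf, wedge]
  simp only [hw, Finset.sum_const, Finset.card_univ, Fintype.card_perm, Fintype.card_fin,
    smul_smul]

end FullSum

section CompPerm

variable {V E F W : Type*} [AddCommGroup E] [AddCommGroup F] [AddCommGroup W]

lemma nsmul_cancel {W : Type*} [AddCommGroup W] [Module ℝ W] {n : ℕ} (hn : n ≠ 0)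
    {x y : W} (h : n • x = n • y) : x = y := by
  have h' : (n : ℝ) • x = (n : ℝ) • y := by
    rw [Nat.cast_smul_eq_nsmul, Nat.cast_smul_eq_nsmul]; exact h
  have hn' : (n : ℝ) ≠ 0 := by exact_mod_cast hn
  have := congrArg (fun z => (n : ℝ)⁻¹ • z) h'
  simpa [smul_smul, inv_mul_cancel₀ hn'] using this

lemma fullsum_comp_perm {k l : ℕ} (μ : E → F → W)
    (A : (Fin k → V) → E) (B : (Fin l → V) → F)
    (v : Fin (k + l) → V) (τ : Equiv.Perm (Fin (k + l))) :
    (∑ π : Equiv.Perm (Fin (k + l)), (Equiv.Perm.sign π : ℤ) •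
        μ (A fun i => v (τ (π (Fin.castAdd l i)))) (B fun i => v (τ (π (Fin.natAdd k i)))))
      = (Equiv.Perm.sign τ : ℤ) • ∑ π : Equiv.Perm (Fin (k + l)), (Equiv.Perm.sign π : ℤ) •
        μ (A fun i => v (π (Fin.castAdd l i))) (B fun i => v (π (Fin.natAdd k i))) := by
  rw [Finset.smul_sum]
  apply Fintype.sum_equiv (Equiv.mulLeft τ)
  intro π
  have hτπ : ∀ x, (Equiv.mulLeft τ π) x = τ (π x) := fun x => rfl
  simp only [hτπ]
  rw [smul_smul]
  congr 1
  have h1 : Equiv.mulLeft τ π = τ * π := rfl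
  rw [h1, map_mul]
  push_cast
  have hτ := sq_sign_cast τ
  linear_combination (-(Equiv.Perm.sign π : ℤ)) * hτ

lemma wedge_comp_perm [Module ℝ W] {k l : ℕ} (μ : E → F → W)
    (hμ₁ : ∀ (c : ℤ) (x : E) (y : F), μ (c • x) y = c • μ x y)
    (hμ₂ : ∀ (c : ℤ) (x : E) (y : F), μ x (c • y) = c • μ x y)
    (A : (Fin k → V) → E) (B : (Fin l → V) → F)
    (hA : ∀ (w : Fin k → V) (p : Equiv.Perm (Fin k)),
      A (fun i => w (p i)) = (Equiv.Perm.sign p : ℤ) • A w)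
    (hB : ∀ (w : Fin l → V) (p : Equiv.Perm (Fin l)),
      B (fun i => w (p i)) = (Equiv.Perm.sign p : ℤ) • B w)
    (v : Fin (k + l) → V) (τ : Equiv.Perm (Fin (k + l))) :
    wedge μ A B (fun i => v (τ i)) = (Equiv.Perm.sign τ : ℤ) • wedge μ A B v := by
  apply nsmul_cancel
    (Nat.mul_ne_zero (Nat.factorial_ne_zero k) (Nat.factorial_ne_zero l))
  rw [wedge_fullsum μ hμ₁ hμ₂ A B hA hB (fun i => v (τ i))]
  rw [smul_comm, wedge_fullsum μ hμ₁ hμ₂ A B hA hB v]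
  exact fullsum_comp_perm μ A B v τ

end CompPerm

section Iterated

variable {V E F G Y W : Type*} [AddCommGroup E] [Module ℝ E] [AddCommGroup F] [Module ℝ F]
  [AddCommGroup G] [Module ℝ G] [AddCommGroup Y] [Module ℝ Y]
  [AddCommGroup W] [Module ℝ W]

theorem wedge_wedge_fullsum_left
    (μ : E →ₗ[ℝ] Y →ₗ[ℝ] W) (ν : F →ₗ[ℝ] G →ₗ[ℝ] Y)
    {k l m : ℕ} (A : (Fin k → V) → E) (B : (Fin l → V) → F) (C : (Fin m → V) → G)
    (hA : ∀ (w : Fin k → V) (p : Equiv.Perm (Fin k)),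
      A (fun i => w (p i)) = (Equiv.Perm.sign p : ℤ) • A w)
    (hB : ∀ (w : Fin l → V) (p : Equiv.Perm (Fin l)),
      B (fun i => w (p i)) = (Equiv.Perm.sign p : ℤ) • B w)
    (hC : ∀ (w : Fin m → V) (p : Equiv.Perm (Fin m)),
      C (fun i => w (p i)) = (Equiv.Perm.sign p : ℤ) • C w)
    (v : Fin (k + (l + m)) → V) :
    (k.factorial * (l.factorial * m.factorial)) •
        wedge (fun x y => μ x y) A (wedge (fun x y => ν x y) B C) v
      = ∑ π : Equiv.Perm (Fin (k + (l + m))), (Equiv.Perm.sign π : ℤ) •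
          μ (A fun i => v (π (Fin.castAdd (l + m) i)))
            (ν (B fun j => v (π (Fin.natAdd k (Fin.castAdd m j))))
               (C fun j => v (π (Fin.natAdd k (Fin.natAdd l j))))) := by
  have hμ₁ : ∀ (c : ℤ) (x : E) (y : Y), μ (c • x) y = c • μ x y := by intros; simp
  have hμ₂ : ∀ (c : ℤ) (x : E) (y : Y), μ x (c • y) = c • μ x y := by intros; simp
  have hν₁ : ∀ (c : ℤ) (x : F) (y : G), ν (c • x) y = c • ν x y := by intros; simp
  have hν₂ : ∀ (c : ℤ) (x : F) (y : G), ν x (c • y) = c • ν x y := by intros; simp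
  have hBC : ∀ (w : Fin (l + m) → V) (p : Equiv.Perm (Fin (l + m))),
      wedge (fun x y => ν x y) B C (fun i => w (p i))
        = (Equiv.Perm.sign p : ℤ) • wedge (fun x y => ν x y) B C w :=
    fun w p => wedge_comp_perm _ hν₁ hν₂ B C hB hC w p
  have h1 := wedge_fullsum (fun x y => μ x y) hμ₁ hμ₂ A
    (wedge (fun x y => ν x y) B C) hA hBC v
  have h3 : ∀ π : Equiv.Perm (Fin (k + (l + m))),
      (l.factorial * m.factorial) • ((Equiv.Perm.sign π : ℤ) •
          μ (A fun i => v (π (Fin.castAdd (l + m) i)))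
            (wedge (fun x y => ν x y) B C fun j => v (π (Fin.natAdd k j))))
        = ∑ ρ : Equiv.Perm (Fin (l + m)), (Equiv.Perm.sign π : ℤ) •
            (Equiv.Perm.sign ρ : ℤ) •
            μ (A fun i => v (π (Fin.castAdd (l + m) i)))
              (ν (B fun j => v (π (Fin.natAdd k (ρ (Fin.castAdd m j)))))
                 (C fun j => v (π (Fin.natAdd k (ρ (Fin.natAdd l j)))))) := by
    intro π
    rw [smul_comm, ← map_nsmul (μ (A fun i => v (π (Fin.castAdd (l + m) i))))]
    rw [wedge_fullsum (fun x y => ν x y) hν₁ hν₂ B C hB hC (fun j => v (π (Fin.natAdd k j)))]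
    rw [map_sum, Finset.smul_sum]
    apply Finset.sum_congr rfl
    intro ρ _
    rw [map_zsmul]
  have hswap : ∀ ρ : Equiv.Perm (Fin (l + m)),
      (∑ π : Equiv.Perm (Fin (k + (l + m))), (Equiv.Perm.sign π : ℤ) •
          (Equiv.Perm.sign ρ : ℤ) •
          μ (A fun i => v (π (Fin.castAdd (l + m) i)))
            (ν (B fun j => v (π (Fin.natAdd k (ρ (Fin.castAdd m j)))))
               (C fun j => v (π (Fin.natAdd k (ρ (Fin.natAdd l j)))))))
        = ∑ π : Equiv.Perm (Fin (k + (l + m))), (Equiv.Perm.sign π : ℤ) •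
            μ (A fun i => v (π (Fin.castAdd (l + m) i)))
              (ν (B fun j => v (π (Fin.natAdd k (Fin.castAdd m j))))
                 (C fun j => v (π (Fin.natAdd k (Fin.natAdd l j))))) := by
    intro ρ
    apply Fintype.sum_equiv (Equiv.mulRight (blockSum (1 : Equiv.Perm (Fin k)) ρ))
    intro π
    have happ : ∀ x, (Equiv.mulRight (blockSum (1 : Equiv.Perm (Fin k)) ρ) π) x
        = π (blockSum (1 : Equiv.Perm (Fin k)) ρ x) := fun x => rfl
    simp only [happ, blockSum_castAdd, blockSum_natAdd, Equiv.Perm.one_apply]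
    rw [smul_smul]
    congr 1
    have h1 : Equiv.mulRight (blockSum (1 : Equiv.Perm (Fin k)) ρ) π
        = π * blockSum (1 : Equiv.Perm (Fin k)) ρ := rfl
    rw [h1, map_mul, sign_blockSum]
    simp
  have main : ((l + m).factorial * (k.factorial * (l.factorial * m.factorial))) •
        wedge (fun x y => μ x y) A (wedge (fun x y => ν x y) B C) v
      = (l + m).factorial • ∑ π : Equiv.Perm (Fin (k + (l + m))), (Equiv.Perm.sign π : ℤ) •
          μ (A fun i => v (π (Fin.castAdd (l + m) i)))
            (ν (B fun j => v (π (Fin.natAdd k (Fin.castAdd m j))))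
               (C fun j => v (π (Fin.natAdd k (Fin.natAdd l j))))) := by
    calc ((l + m).factorial * (k.factorial * (l.factorial * m.factorial))) •
          wedge (fun x y => μ x y) A (wedge (fun x y => ν x y) B C) v
        = (l.factorial * m.factorial) • ((k.factorial * (l + m).factorial) •
            wedge (fun x y => μ x y) A (wedge (fun x y => ν x y) B C) v) := by
          rw [smul_smul]; congr 1; ring
      _ = (l.factorial * m.factorial) • ∑ π : Equiv.Perm (Fin (k + (l + m))),
            (Equiv.Perm.sign π : ℤ) •
            μ (A fun i => v (π (Fin.castAdd (l + m) i)))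
              (wedge (fun x y => ν x y) B C fun j => v (π (Fin.natAdd k j))) := by rw [h1]
      _ = ∑ π : Equiv.Perm (Fin (k + (l + m))), (l.factorial * m.factorial) •
            ((Equiv.Perm.sign π : ℤ) •
            μ (A fun i => v (π (Fin.castAdd (l + m) i)))
              (wedge (fun x y => ν x y) B C fun j => v (π (Fin.natAdd k j)))) :=
          Finset.smul_sum
      _ = ∑ π : Equiv.Perm (Fin (k + (l + m))), ∑ ρ : Equiv.Perm (Fin (l + m)),
            (Equiv.Perm.sign π : ℤ) • (Equiv.Perm.sign ρ : ℤ) •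
            μ (A fun i => v (π (Fin.castAdd (l + m) i)))
              (ν (B fun j => v (π (Fin.natAdd k (ρ (Fin.castAdd m j)))))
                 (C fun j => v (π (Fin.natAdd k (ρ (Fin.natAdd l j)))))) :=
          Finset.sum_congr rfl (fun π _ => h3 π)
      _ = ∑ ρ : Equiv.Perm (Fin (l + m)), ∑ π : Equiv.Perm (Fin (k + (l + m))),
            (Equiv.Perm.sign π : ℤ) • (Equiv.Perm.sign ρ : ℤ) •
            μ (A fun i => v (π (Fin.castAdd (l + m) i)))
              (ν (B fun j => v (π (Fin.natAdd k (ρ (Fin.castAdd m j)))))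
                 (C fun j => v (π (Fin.natAdd k (ρ (Fin.natAdd l j)))))) := Finset.sum_comm
      _ = ∑ _ρ : Equiv.Perm (Fin (l + m)), ∑ π : Equiv.Perm (Fin (k + (l + m))),
            (Equiv.Perm.sign π : ℤ) •
            μ (A fun i => v (π (Fin.castAdd (l + m) i)))
              (ν (B fun j => v (π (Fin.natAdd k (Fin.castAdd m j))))
                 (C fun j => v (π (Fin.natAdd k (Fin.natAdd l j))))) :=
          Finset.sum_congr rfl (fun ρ _ => hswap ρ)
      _ = (l + m).factorial • ∑ π : Equiv.Perm (Fin (k + (l + m))),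
            (Equiv.Perm.sign π : ℤ) •
            μ (A fun i => v (π (Fin.castAdd (l + m) i)))
              (ν (B fun j => v (π (Fin.natAdd k (Fin.castAdd m j))))
                 (C fun j => v (π (Fin.natAdd k (Fin.natAdd l j))))) := by
          rw [Finset.sum_const, Finset.card_univ, Fintype.card_perm, Fintype.card_fin]
  rw [mul_smul] at main
  exact nsmul_cancel (Nat.factorial_ne_zero (l + m)) main

end Iterated

section Iterated2

variable {V E F G Y W : Type*} [AddCommGroup E] [Module ℝ E] [AddCommGroup F] [Module ℝ F]
  [AddCommGroup G] [Module ℝ G] [AddCommGroup Y] [Module ℝ Y]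
  [AddCommGroup W] [Module ℝ W]

theorem wedge_wedge_fullsum_right
    (μ : Y →ₗ[ℝ] G →ₗ[ℝ] W) (ν : E →ₗ[ℝ] F →ₗ[ℝ] Y)
    {k l m : ℕ} (A : (Fin k → V) → E) (B : (Fin l → V) → F) (C : (Fin m → V) → G)
    (hA : ∀ (w : Fin k → V) (p : Equiv.Perm (Fin k)),
      A (fun i => w (p i)) = (Equiv.Perm.sign p : ℤ) • A w)
    (hB : ∀ (w : Fin l → V) (p : Equiv.Perm (Fin l)),
      B (fun i => w (p i)) = (Equiv.Perm.sign p : ℤ) • B w)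
    (hC : ∀ (w : Fin m → V) (p : Equiv.Perm (Fin m)),
      C (fun i => w (p i)) = (Equiv.Perm.sign p : ℤ) • C w)
    (v : Fin ((k + l) + m) → V) :
    (k.factorial * l.factorial * m.factorial) •
        wedge (fun x y => μ x y) (wedge (fun x y => ν x y) A B) C v
      = ∑ π : Equiv.Perm (Fin ((k + l) + m)), (Equiv.Perm.sign π : ℤ) •
          μ (ν (A fun i => v (π (Fin.castAdd m (Fin.castAdd l i))))
               (B fun j => v (π (Fin.castAdd m (Fin.natAdd k j)))))
            (C fun j => v (π (Fin.natAdd (k + l) j))) := by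
  have hμ₁ : ∀ (c : ℤ) (x : Y) (y : G), μ (c • x) y = c • μ x y := by intros; simp
  have hμ₂ : ∀ (c : ℤ) (x : Y) (y : G), μ x (c • y) = c • μ x y := by intros; simp
  have hν₁ : ∀ (c : ℤ) (x : E) (y : F), ν (c • x) y = c • ν x y := by intros; simp
  have hν₂ : ∀ (c : ℤ) (x : E) (y : F), ν x (c • y) = c • ν x y := by intros; simp
  have hAB : ∀ (w : Fin (k + l) → V) (p : Equiv.Perm (Fin (k + l))),
      wedge (fun x y => ν x y) A B (fun i => w (p i))
        = (Equiv.Perm.sign p : ℤ) • wedge (fun x y => ν x y) A B w :=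
    fun w p => wedge_comp_perm _ hν₁ hν₂ A B hA hB w p
  have h1 := wedge_fullsum (fun x y => μ x y) hμ₁ hμ₂
    (wedge (fun x y => ν x y) A B) C hAB hC v
  have h3 : ∀ π : Equiv.Perm (Fin ((k + l) + m)),
      (k.factorial * l.factorial) • ((Equiv.Perm.sign π : ℤ) •
          μ (wedge (fun x y => ν x y) A B fun i => v (π (Fin.castAdd m i)))
            (C fun j => v (π (Fin.natAdd (k + l) j))))
        = ∑ ρ : Equiv.Perm (Fin (k + l)), (Equiv.Perm.sign π : ℤ) •
            (Equiv.Perm.sign ρ : ℤ) •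
            μ (ν (A fun i => v (π (Fin.castAdd m (ρ (Fin.castAdd l i)))))
                 (B fun j => v (π (Fin.castAdd m (ρ (Fin.natAdd k j))))))
              (C fun j => v (π (Fin.natAdd (k + l) j))) := by
    intro π
    rw [smul_comm, ← LinearMap.smul_apply, ← map_nsmul μ]
    rw [wedge_fullsum (fun x y => ν x y) hν₁ hν₂ A B hA hB (fun i => v (π (Fin.castAdd m i)))]
    rw [map_sum, LinearMap.sum_apply, Finset.smul_sum]
    apply Finset.sum_congr rfl
    intro ρ _
    rw [map_zsmul μ, LinearMap.smul_apply]
  have hswap : ∀ ρ : Equiv.Perm (Fin (k + l)),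
      (∑ π : Equiv.Perm (Fin ((k + l) + m)), (Equiv.Perm.sign π : ℤ) •
          (Equiv.Perm.sign ρ : ℤ) •
          μ (ν (A fun i => v (π (Fin.castAdd m (ρ (Fin.castAdd l i)))))
               (B fun j => v (π (Fin.castAdd m (ρ (Fin.natAdd k j))))))
            (C fun j => v (π (Fin.natAdd (k + l) j))))
        = ∑ π : Equiv.Perm (Fin ((k + l) + m)), (Equiv.Perm.sign π : ℤ) •
            μ (ν (A fun i => v (π (Fin.castAdd m (Fin.castAdd l i))))
                 (B fun j => v (π (Fin.castAdd m (Fin.natAdd k j)))))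
              (C fun j => v (π (Fin.natAdd (k + l) j))) := by
    intro ρ
    apply Fintype.sum_equiv (Equiv.mulRight (blockSum ρ (1 : Equiv.Perm (Fin m))))
    intro π
    have happ : ∀ x, (Equiv.mulRight (blockSum ρ (1 : Equiv.Perm (Fin m))) π) x
        = π (blockSum ρ (1 : Equiv.Perm (Fin m)) x) := fun x => rfl
    simp only [happ, blockSum_castAdd, blockSum_natAdd, Equiv.Perm.one_apply]
    rw [smul_smul]
    congr 1
    have h1 : Equiv.mulRight (blockSum ρ (1 : Equiv.Perm (Fin m))) π
        = π * blockSum ρ (1 : Equiv.Perm (Fin m)) := rfl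
    rw [h1, map_mul, sign_blockSum]
    simp
  have main : ((k + l).factorial * (k.factorial * l.factorial * m.factorial)) •
        wedge (fun x y => μ x y) (wedge (fun x y => ν x y) A B) C v
      = (k + l).factorial • ∑ π : Equiv.Perm (Fin ((k + l) + m)), (Equiv.Perm.sign π : ℤ) •
          μ (ν (A fun i => v (π (Fin.castAdd m (Fin.castAdd l i))))
               (B fun j => v (π (Fin.castAdd m (Fin.natAdd k j)))))
            (C fun j => v (π (Fin.natAdd (k + l) j))) := by
    calc ((k + l).factorial * (k.factorial * l.factorial * m.factorial)) •
          wedge (fun x y => μ x y) (wedge (fun x y => ν x y) A B) C v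
        = (k.factorial * l.factorial) • (((k + l).factorial * m.factorial) •
            wedge (fun x y => μ x y) (wedge (fun x y => ν x y) A B) C v) := by
          rw [smul_smul]; congr 1; ring
      _ = (k.factorial * l.factorial) • ∑ π : Equiv.Perm (Fin ((k + l) + m)),
            (Equiv.Perm.sign π : ℤ) •
            μ (wedge (fun x y => ν x y) A B fun i => v (π (Fin.castAdd m i)))
              (C fun j => v (π (Fin.natAdd (k + l) j))) := by rw [h1]
      _ = ∑ π : Equiv.Perm (Fin ((k + l) + m)), (k.factorial * l.factorial) •
            ((Equiv.Perm.sign π : ℤ) •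
            μ (wedge (fun x y => ν x y) A B fun i => v (π (Fin.castAdd m i)))
              (C fun j => v (π (Fin.natAdd (k + l) j)))) := Finset.smul_sum
      _ = ∑ π : Equiv.Perm (Fin ((k + l) + m)), ∑ ρ : Equiv.Perm (Fin (k + l)),
            (Equiv.Perm.sign π : ℤ) • (Equiv.Perm.sign ρ : ℤ) •
            μ (ν (A fun i => v (π (Fin.castAdd m (ρ (Fin.castAdd l i)))))
                 (B fun j => v (π (Fin.castAdd m (ρ (Fin.natAdd k j))))))
              (C fun j => v (π (Fin.natAdd (k + l) j))) :=
          Finset.sum_congr rfl (fun π _ => h3 π)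
      _ = ∑ ρ : Equiv.Perm (Fin (k + l)), ∑ π : Equiv.Perm (Fin ((k + l) + m)),
            (Equiv.Perm.sign π : ℤ) • (Equiv.Perm.sign ρ : ℤ) •
            μ (ν (A fun i => v (π (Fin.castAdd m (ρ (Fin.castAdd l i)))))
                 (B fun j => v (π (Fin.castAdd m (ρ (Fin.natAdd k j))))))
              (C fun j => v (π (Fin.natAdd (k + l) j))) := Finset.sum_comm
      _ = ∑ _ρ : Equiv.Perm (Fin (k + l)), ∑ π : Equiv.Perm (Fin ((k + l) + m)),
            (Equiv.Perm.sign π : ℤ) •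
            μ (ν (A fun i => v (π (Fin.castAdd m (Fin.castAdd l i))))
                 (B fun j => v (π (Fin.castAdd m (Fin.natAdd k j)))))
              (C fun j => v (π (Fin.natAdd (k + l) j))) :=
          Finset.sum_congr rfl (fun ρ _ => hswap ρ)
      _ = (k + l).factorial • ∑ π : Equiv.Perm (Fin ((k + l) + m)),
            (Equiv.Perm.sign π : ℤ) •
            μ (ν (A fun i => v (π (Fin.castAdd m (Fin.castAdd l i))))
                 (B fun j => v (π (Fin.castAdd m (Fin.natAdd k j)))))
              (C fun j => v (π (Fin.natAdd (k + l) j))) := by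
          rw [Finset.sum_const, Finset.card_univ, Fintype.card_perm, Fintype.card_fin]
  rw [mul_smul] at main
  exact nsmul_cancel (Nat.factorial_ne_zero (k + l)) main

end Iterated2

section Assembly

variable {k t₁ t₂ : ℕ}

lemma lcast1 (i : Fin k) :
    Fin.cast (Nat.add_assoc k t₁ t₂) (Fin.castAdd t₂ (Fin.castAdd t₁ i))
      = Fin.castAdd (t₁ + t₂) i := by
  apply Fin.ext; simp

lemma lcast2 (j : Fin t₁) :
    Fin.cast (Nat.add_assoc k t₁ t₂) (Fin.castAdd t₂ (Fin.natAdd k j))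
      = Fin.natAdd k (Fin.castAdd t₂ j) := by
  apply Fin.ext; simp

lemma lcast3 (j : Fin t₂) :
    Fin.cast (Nat.add_assoc k t₁ t₂) (Fin.natAdd (k + t₁) j)
      = Fin.natAdd k (Fin.natAdd t₁ j) := by
  apply Fin.ext; simp [Nat.add_assoc]

def eSwap (k t₁ t₂ : ℕ) : Equiv.Perm (Fin (t₁ + (k + t₂))) :=
  (finCongr (by omega : (t₁ + k) + t₂ = t₁ + (k + t₂))).permCongr
    (blockSum (swapAdd t₁ k) (1 : Equiv.Perm (Fin t₂)))

lemma sign_eSwap : Equiv.Perm.sign (eSwap k t₁ t₂) = (-1) ^ (t₁ * k) := by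
  rw [eSwap, Equiv.Perm.sign_permCongr, sign_blockSum, sign_swapAdd]; simp

lemma eSwap_val1 (j : Fin t₁) :
    ((eSwap k t₁ t₂ (Fin.castAdd (k + t₂) j)) : ℕ) = k + (j : ℕ) := by
  have h4 : (finCongr (by omega : (t₁ + k) + t₂ = t₁ + (k + t₂))).symm
      (Fin.castAdd (k + t₂) j) = Fin.castAdd t₂ (Fin.castAdd k j) := by
    apply Fin.ext; simp
  rw [eSwap, Equiv.permCongr_apply, h4, blockSum_castAdd]
  have h5 : ((Fin.castAdd k j : Fin (t₁ + k)) : ℕ) < t₁ := by simpa using j.isLt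
  simp [swapAdd_val, h5]

lemma eSwap_val2 (i : Fin k) :
    ((eSwap k t₁ t₂ (Fin.natAdd t₁ (Fin.castAdd t₂ i))) : ℕ) = (i : ℕ) := by
  have h4 : (finCongr (by omega : (t₁ + k) + t₂ = t₁ + (k + t₂))).symm
      (Fin.natAdd t₁ (Fin.castAdd t₂ i)) = Fin.castAdd t₂ (Fin.natAdd t₁ i) := by
    apply Fin.ext; simp
  rw [eSwap, Equiv.permCongr_apply, h4, blockSum_castAdd]
  have h5 : ¬ ((Fin.natAdd t₁ i : Fin (t₁ + k)) : ℕ) < t₁ := by simp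
  simp [swapAdd_val, h5]

lemma eSwap_val3 (i : Fin t₂) :
    ((eSwap k t₁ t₂ (Fin.natAdd t₁ (Fin.natAdd k i))) : ℕ) = t₁ + k + (i : ℕ) := by
  have h4 : (finCongr (by omega : (t₁ + k) + t₂ = t₁ + (k + t₂))).symm
      (Fin.natAdd t₁ (Fin.natAdd k i)) = Fin.natAdd (t₁ + k) i := by
    apply Fin.ext; simp [Nat.add_assoc]
  rw [eSwap, Equiv.permCongr_apply, h4, blockSum_natAdd]
  simp

end Assembly

/-- For bilinear actions `▷` of `g` on `h` and on `l`, and a `g`-equivariant bilinear map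
`{,} : h × h → l`,
`A ∧^▷ (B₁ ∧^{{,}} B₂) = (A ∧^▷ B₁) ∧^{{,}} B₂ + (-1)^(k t₁) B₁ ∧^{{,}} (A ∧^▷ B₂)`. -/
theorem act_wedge_peiffer_leibniz {g h l V : Type*} [AddCommGroup g] [Module ℝ g]
    [AddCommGroup h] [Module ℝ h] [AddCommGroup l] [Module ℝ l]
    [AddCommGroup V] [Module ℝ V]
    (actH : g →ₗ[ℝ] h →ₗ[ℝ] h) (actL : g →ₗ[ℝ] l →ₗ[ℝ] l)
    (P : h →ₗ[ℝ] h →ₗ[ℝ] l)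
    (P_equiv : ∀ (X : g) (Y₁ Y₂ : h),
      actL X (P Y₁ Y₂) = P (actH X Y₁) Y₂ + P Y₁ (actH X Y₂))
    {k t₁ t₂ : ℕ} (A : AlternatingMap ℝ V g (Fin k))
    (B₁ : AlternatingMap ℝ V h (Fin t₁)) (B₂ : AlternatingMap ℝ V h (Fin t₂)) :
    wedge (fun X Z => actL X Z) ⇑A (wedge (fun Y Y' => P Y Y') ⇑B₁ ⇑B₂) =
      reindex (Nat.add_assoc k t₁ t₂)
        (wedge (fun Y Y' => P Y Y') (wedge (fun X Y => actH X Y) ⇑A ⇑B₁) ⇑B₂)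
      + ((-1 : ℝ) ^ (k * t₁)) •
        reindex (by omega : t₁ + (k + t₂) = k + (t₁ + t₂))
          (wedge (fun Y Y' => P Y Y') ⇑B₁ (wedge (fun X Y => actH X Y) ⇑A ⇑B₂)) := by
  have hA : ∀ (w : Fin k → V) (p : Equiv.Perm (Fin k)),
      (⇑A) (fun i => w (p i)) = (Equiv.Perm.sign p : ℤ) • A w := by
    intro w p
    have hh := A.map_perm w p
    simpa [Units.smul_def, Function.comp_def] using hh
  have hB₁ : ∀ (w : Fin t₁ → V) (p : Equiv.Perm (Fin t₁)),
      (⇑B₁) (fun i => w (p i)) = (Equiv.Perm.sign p : ℤ) • B₁ w := by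
    intro w p
    have hh := B₁.map_perm w p
    simpa [Units.smul_def, Function.comp_def] using hh
  have hB₂ : ∀ (w : Fin t₂ → V) (p : Equiv.Perm (Fin t₂)),
      (⇑B₂) (fun i => w (p i)) = (Equiv.Perm.sign p : ℤ) • B₂ w := by
    intro w p
    have hh := B₂.map_perm w p
    simpa [Units.smul_def, Function.comp_def] using hh
  have h₂ : t₁ + (k + t₂) = k + (t₁ + t₂) := by omega
  funext v
  rw [Pi.add_apply, Pi.smul_apply]
  apply nsmul_cancel (n := k.factorial * (t₁.factorial * t₂.factorial))
    (Nat.mul_ne_zero (Nat.factorial_ne_zero k)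
      (Nat.mul_ne_zero (Nat.factorial_ne_zero t₁) (Nat.factorial_ne_zero t₂)))
  rw [smul_add]
  rw [wedge_wedge_fullsum_left actL P ⇑A ⇑B₁ ⇑B₂ hA hB₁ hB₂ v]
  have hsplit : (∑ π : Equiv.Perm (Fin (k + (t₁ + t₂))), (Equiv.Perm.sign π : ℤ) •
        actL (A fun i => v (π (Fin.castAdd (t₁ + t₂) i)))
          (P (B₁ fun j => v (π (Fin.natAdd k (Fin.castAdd t₂ j))))
             (B₂ fun j => v (π (Fin.natAdd k (Fin.natAdd t₁ j))))))
      = (∑ π : Equiv.Perm (Fin (k + (t₁ + t₂))), (Equiv.Perm.sign π : ℤ) •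
          P (actH (A fun i => v (π (Fin.castAdd (t₁ + t₂) i)))
               (B₁ fun j => v (π (Fin.natAdd k (Fin.castAdd t₂ j)))))
            (B₂ fun j => v (π (Fin.natAdd k (Fin.natAdd t₁ j)))))
        + ∑ π : Equiv.Perm (Fin (k + (t₁ + t₂))), (Equiv.Perm.sign π : ℤ) •
            P (B₁ fun j => v (π (Fin.natAdd k (Fin.castAdd t₂ j))))
              (actH (A fun i => v (π (Fin.castAdd (t₁ + t₂) i)))
                 (B₂ fun j => v (π (Fin.natAdd k (Fin.natAdd t₁ j))))) := by
    rw [← Finset.sum_add_distrib]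
    apply Finset.sum_congr rfl
    intro π _
    rw [P_equiv, smul_add]
  rw [hsplit]
  congr 1
  · -- first arm
    have hc : k.factorial * (t₁.factorial * t₂.factorial)
        = k.factorial * t₁.factorial * t₂.factorial := by ring
    show _ = (k.factorial * (t₁.factorial * t₂.factorial)) •
      wedge (fun Y Y' => P Y Y') (wedge (fun X Y => actH X Y) ⇑A ⇑B₁) ⇑B₂
        (fun i => v (Fin.cast (Nat.add_assoc k t₁ t₂) i))
    rw [hc, wedge_wedge_fullsum_right P actH ⇑A ⇑B₁ ⇑B₂ hA hB₁ hB₂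
      (fun i => v (Fin.cast (Nat.add_assoc k t₁ t₂) i))]
    apply Fintype.sum_equiv (Equiv.permCongr (finCongr (Nat.add_assoc k t₁ t₂).symm))
    intro π
    have harg1 : ∀ i : Fin k,
        Fin.cast (Nat.add_assoc k t₁ t₂)
          ((Equiv.permCongr (finCongr (Nat.add_assoc k t₁ t₂).symm) π)
            (Fin.castAdd t₂ (Fin.castAdd t₁ i)))
        = π (Fin.castAdd (t₁ + t₂) i) := by
      intro i
      rw [Equiv.permCongr_apply]
      have h5 : (finCongr (Nat.add_assoc k t₁ t₂).symm).symm (Fin.castAdd t₂ (Fin.castAdd t₁ i))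
          = Fin.castAdd (t₁ + t₂) i := by apply Fin.ext; simp
      rw [h5]
      apply Fin.ext; simp
    have harg2 : ∀ j : Fin t₁,
        Fin.cast (Nat.add_assoc k t₁ t₂)
          ((Equiv.permCongr (finCongr (Nat.add_assoc k t₁ t₂).symm) π)
            (Fin.castAdd t₂ (Fin.natAdd k j)))
        = π (Fin.natAdd k (Fin.castAdd t₂ j)) := by
      intro j
      rw [Equiv.permCongr_apply]
      have h5 : (finCongr (Nat.add_assoc k t₁ t₂).symm).symm (Fin.castAdd t₂ (Fin.natAdd k j))
          = Fin.natAdd k (Fin.castAdd t₂ j) := by apply Fin.ext; simp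
      rw [h5]
      apply Fin.ext; simp
    have harg3 : ∀ j : Fin t₂,
        Fin.cast (Nat.add_assoc k t₁ t₂)
          ((Equiv.permCongr (finCongr (Nat.add_assoc k t₁ t₂).symm) π)
            (Fin.natAdd (k + t₁) j))
        = π (Fin.natAdd k (Fin.natAdd t₁ j)) := by
      intro j
      rw [Equiv.permCongr_apply]
      have h5 : (finCongr (Nat.add_assoc k t₁ t₂).symm).symm (Fin.natAdd (k + t₁) j)
          = Fin.natAdd k (Fin.natAdd t₁ j) := by apply Fin.ext; simp [Nat.add_assoc]
      rw [h5]
      apply Fin.ext; simp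
    simp only [Equiv.Perm.sign_permCongr, harg1, harg2, harg3]
  · -- second arm
    have hc2 : k.factorial * (t₁.factorial * t₂.factorial)
        = t₁.factorial * (k.factorial * t₂.factorial) := by ring
    show _ = (k.factorial * (t₁.factorial * t₂.factorial)) • ((-1 : ℝ) ^ (k * t₁) •
      wedge (fun Y Y' => P Y Y') ⇑B₁ (wedge (fun X Y => actH X Y) ⇑A ⇑B₂)
        (fun i => v (Fin.cast h₂ i)))
    rw [smul_comm, hc2, wedge_wedge_fullsum_left P actH ⇑B₁ ⇑A ⇑B₂ hB₁ hA hB₂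
      (fun i => v (Fin.cast h₂ i))]
    -- now RHS = (-1)^(k t₁) • ∑_{π'} S π'
    have hΨarg : ∀ (π : Equiv.Perm (Fin (k + (t₁ + t₂)))) (x : Fin (t₁ + (k + t₂))),
        Fin.cast h₂
          ((((Equiv.permCongr (finCongr h₂.symm)).trans
              (Equiv.mulRight (eSwap k t₁ t₂))) π) x)
          = π (Fin.cast h₂ (eSwap k t₁ t₂ x)) := by
      intro π x
      apply Fin.ext
      simp [Equiv.permCongr_apply]
    have hx1 : ∀ j : Fin t₁, Fin.cast h₂ (eSwap k t₁ t₂ (Fin.castAdd (k + t₂) j))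
        = Fin.natAdd k (Fin.castAdd t₂ j) := by
      intro j; apply Fin.ext; simp [eSwap_val1]
    have hx2 : ∀ i : Fin k, Fin.cast h₂ (eSwap k t₁ t₂ (Fin.natAdd t₁ (Fin.castAdd t₂ i)))
        = Fin.castAdd (t₁ + t₂) i := by
      intro i; apply Fin.ext; simp [eSwap_val2]
    have hx3 : ∀ i : Fin t₂, Fin.cast h₂ (eSwap k t₁ t₂ (Fin.natAdd t₁ (Fin.natAdd k i)))
        = Fin.natAdd k (Fin.natAdd t₁ i) := by
      intro i; apply Fin.ext; simp [eSwap_val3]; omega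
    have hsum : (∑ π' : Equiv.Perm (Fin (t₁ + (k + t₂))), (Equiv.Perm.sign π' : ℤ) •
          P (B₁ fun i => v (Fin.cast h₂ (π' (Fin.castAdd (k + t₂) i))))
            (actH (A fun i => v (Fin.cast h₂ (π' (Fin.natAdd t₁ (Fin.castAdd t₂ i)))))
               (B₂ fun i => v (Fin.cast h₂ (π' (Fin.natAdd t₁ (Fin.natAdd k i)))))))
        = ((-1 : ℤ) ^ (t₁ * k)) •
            ∑ π : Equiv.Perm (Fin (k + (t₁ + t₂))), (Equiv.Perm.sign π : ℤ) •
              P (B₁ fun j => v (π (Fin.natAdd k (Fin.castAdd t₂ j))))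
                (actH (A fun i => v (π (Fin.castAdd (t₁ + t₂) i)))
                   (B₂ fun j => v (π (Fin.natAdd k (Fin.natAdd t₁ j))))) := by
      rw [Finset.smul_sum]
      refine (Fintype.sum_equiv
        ((Equiv.permCongr (finCongr h₂.symm)).trans (Equiv.mulRight (eSwap k t₁ t₂)))
        _ _ ?_).symm
      intro π
      simp only [hΨarg, hx1, hx2, hx3]
      rw [smul_smul]
      congr 1
      have hmul : (((Equiv.permCongr (finCongr h₂.symm)).trans
            (Equiv.mulRight (eSwap k t₁ t₂))) π)
          = (Equiv.permCongr (finCongr h₂.symm) π) * (eSwap k t₁ t₂) := rfl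
      rw [hmul, map_mul, Equiv.Perm.sign_permCongr, sign_eSwap]
      push_cast
      ring
    rw [hsum, ← Int.cast_smul_eq_zsmul ℝ, smul_smul]
    have hone : ((-1 : ℝ) ^ (k * t₁) * ((((-1 : ℤ) ^ (t₁ * k) : ℤ) : ℝ))) = 1 := by
      push_cast
      rw [← pow_add]
      exact Even.neg_one_pow ⟨k * t₁, by ring⟩
    rw [hone, one_smul]
end

section
/- Let g and h be real vector spaces, ▷ : g × h → h a bilinear action, and ⟨,⟩_h a symmetric bilinear form on h satisfying ⟨Y, X ▷ Y'⟩_h = − ⟨X ▷ Y, Y'⟩_h for all X ∈ g and Y, Y' ∈ h. Then for a real vector space V and alternating multilinear maps A : V^k → g, B₁ : V^{t₁} → h, B₂ : V^{t₂} → h, one has ⟨B₁, A ∧^▷ B₂⟩ = (−1)^{t₂(k+t₁) + k t₁ + 1} ⟨B₂, A ∧^▷ B₁⟩ = (−1)^{k t₁ + 1} ⟨A ∧^▷ B₁, B₂⟩ as alternating (k+t₁+t₂)-linear maps V^{k+t₁+t₂} → ℝ. -/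
open Equiv Fin Function

/-- block swap as a permutation of `Fin (m+n)` -/
def fswap (m n : ℕ) : Equiv.Perm (Fin (m + n)) :=
  finAddFlip.trans (finCongr (Nat.add_comm n m))

lemma fswap_val (m n : ℕ) (x : Fin (m + n)) :
    ((fswap m n x : Fin (m+n)) : ℕ) = if (x : ℕ) < m then (x : ℕ) + n else (x : ℕ) - m := by
  rcases x with ⟨x, hx⟩
  by_cases h : x < m
  · simp only [fswap, Equiv.trans_apply, finAddFlip_apply_mk_left h, finCongr_apply, Fin.coe_cast]
    rw [if_pos h]; omega
  · simp only [fswap, Equiv.trans_apply, finAddFlip_apply_mk_right (Nat.le_of_not_lt h),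
      finCongr_apply, Fin.coe_cast]
    rw [if_neg h]

lemma pow_finRotate_val (N : ℕ) (j : ℕ) (x : Fin (N + 1)) :
    (((finRotate (N + 1)) ^ j) x : ℕ) = ((x : ℕ) + j) % (N + 1) := by
  induction j generalizing x with
  | zero => simp [Nat.mod_eq_of_lt x.isLt]
  | succ j ih =>
    rw [pow_succ', Equiv.Perm.mul_apply, finRotate_succ_apply, Fin.val_add, ih x,
      Fin.val_one', Nat.mod_add_mod, ← Nat.add_assoc, Nat.add_mod ((x:ℕ)+j) 1, Nat.mod_add_mod]

lemma fswap_eq_pow (m n : ℕ) (N : ℕ) (hN : m + n = N + 1) :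
    fswap m n = (finCongr hN.symm).permCongr ((finRotate (N + 1)) ^ n) := by
  ext x
  rw [fswap_val, Equiv.permCongr_apply]
  simp only [finCongr_apply, finCongr_symm, Fin.coe_cast]
  rw [pow_finRotate_val]
  simp only [Fin.coe_cast]
  by_cases h : (x : ℕ) < m
  · rw [if_pos h, Nat.mod_eq_of_lt (by omega)]
  · rw [if_neg h]
    have hx := x.isLt
    have : (x : ℕ) + n = ((x:ℕ) - m) + 1 * (N + 1) := by omega
    rw [this, Nat.add_mul_mod_self_right, Nat.mod_eq_of_lt (by omega)]

lemma sign_fswap (m n : ℕ) : Equiv.Perm.sign (fswap m n) = (-1 : ℤˣ) ^ (m * n) := by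
  by_cases hn0 : n = 0
  · subst hn0
    have : fswap m 0 = 1 := by
      ext x; rw [fswap_val]; have hx := x.isLt; simp only [Equiv.Perm.coe_one, id_eq]
      split_ifs <;> omega
    rw [this]; simp
  · obtain ⟨N, hN⟩ : ∃ N, m + n = N + 1 := ⟨m + n - 1, by omega⟩
    rw [fswap_eq_pow m n N hN, Equiv.Perm.sign_permCongr, map_pow, sign_finRotate, ← pow_mul]
    have hN' : N = m + (n - 1) := by omega
    have h2 : N * n = m * n + (n-1) * n := by rw [hN', Nat.add_mul]
    rw [Nat.add_sub_cancel, h2, pow_add]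
    have he : Even ((n-1) * n) := by
      have := Nat.even_mul_succ_self (n-1)
      have h3 : n - 1 + 1 = n := by omega
      rwa [h3] at this
    rw [Even.neg_one_pow he, mul_one]

/- ---- machinery ---- -/

lemma castAdd_lt {m n : ℕ} {i j : Fin m} (h : i < j) : castAdd n i < castAdd n j := by
  simp only [Fin.lt_def, Fin.coe_castAdd]
  exact h

lemma natAdd_lt {m n : ℕ} {i j : Fin n} (h : i < j) : natAdd m i < natAdd m j := by
  simp only [Fin.lt_def, Fin.coe_natAdd]
  exact Nat.add_lt_add_left h m

lemma natAdd_inj {m n : ℕ} : Function.Injective (natAdd m : Fin n → Fin (m + n)) := by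
  intro x y hxy
  rw [Fin.ext_iff] at hxy ⊢
  simpa using hxy

lemma castAdd_inj {m n : ℕ} : Function.Injective (castAdd n : Fin m → Fin (m + n)) := by
  intro x y hxy
  rw [Fin.ext_iff] at hxy ⊢
  simpa using hxy

lemma sort_eq_of_injective {n : ℕ} {α : Type*} [LinearOrder α] {f : Fin n → α}
    (hf : Function.Injective f) (g : Equiv.Perm (Fin n)) (h : Monotone (f ∘ g)) :
    g = Tuple.sort f := by
  rw [Tuple.eq_sort_iff]
  exact ⟨h, fun i j hij heq => absurd (g.injective (hf heq)) (ne_of_lt hij)⟩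

section liftR
variable (a : ℕ) {m : ℕ}

def liftR (σ : Equiv.Perm (Fin m)) : Equiv.Perm (Fin (a + m)) :=
  finSumFinEquiv.permCongr (Equiv.sumCongr (Equiv.refl (Fin a)) σ)

@[simp] lemma liftR_castAdd (σ : Equiv.Perm (Fin m)) (i : Fin a) :
    liftR a σ (castAdd m i) = castAdd m i := by
  simp [liftR, Equiv.permCongr_apply]

@[simp] lemma liftR_natAdd (σ : Equiv.Perm (Fin m)) (x : Fin m) :
    liftR a σ (natAdd a x) = natAdd a (σ x) := by
  simp [liftR, Equiv.permCongr_apply]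

lemma liftR_mul (σ σ' : Equiv.Perm (Fin m)) :
    liftR a (σ * σ') = liftR a σ * liftR a σ' := by
  ext x
  obtain ⟨y, rfl⟩ := finSumFinEquiv.surjective x
  cases y with
  | inl i =>
    rw [finSumFinEquiv_apply_left]
    simp [Equiv.Perm.mul_apply]
  | inr z =>
    rw [finSumFinEquiv_apply_right]
    simp [Equiv.Perm.mul_apply]

@[simp] lemma liftR_one : liftR a (1 : Equiv.Perm (Fin m)) = 1 := by
  ext x; simp [liftR, Equiv.permCongr_apply]

lemma mul_liftR_inv_cancel (τ : Equiv.Perm (Fin (a + m))) (σ : Equiv.Perm (Fin m)) :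
    τ * liftR a σ * liftR a σ⁻¹ = τ := by
  rw [mul_assoc, ← liftR_mul, mul_inv_cancel, liftR_one, mul_one]

@[simp] lemma sign_liftR (σ : Equiv.Perm (Fin m)) :
    Equiv.Perm.sign (liftR a σ) = Equiv.Perm.sign σ := by
  simp [liftR, Equiv.Perm.sign_permCongr, Equiv.Perm.sign_sumCongr]

end liftR

def TS3R (a b c : ℕ) (ρ : Equiv.Perm (Fin (a + (b + c)))) : Prop :=
  StrictMono (fun i : Fin a => ρ (castAdd (b + c) i)) ∧
  StrictMono (fun i : Fin b => ρ (natAdd a (castAdd c i))) ∧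
  StrictMono (fun i : Fin c => ρ (natAdd a (natAdd b i)))

instance (a b c : ℕ) (ρ : Equiv.Perm (Fin (a + (b + c)))) : Decidable (TS3R a b c ρ) := by
  unfold TS3R StrictMono; infer_instance

def sortR (a b c : ℕ) (ρ : Equiv.Perm (Fin (a + (b + c)))) : Equiv.Perm (Fin (b + c)) :=
  Tuple.sort (fun x : Fin (b + c) => ρ (natAdd a x))

lemma expandR {V F₁ E F₂ W G : Type*} [AddCommGroup W] [AddCommGroup G]
    (μ₁ : F₁ → W → G) (μ₂ : E → F₂ → W)
    (hadd : ∀ x y z, μ₁ x (y + z) = μ₁ x y + μ₁ x z)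
    (hsmul : ∀ x (n : ℤ) w, μ₁ x (n • w) = n • μ₁ x w)
    {a b c : ℕ} (B : (Fin a → V) → F₁) (A : (Fin b → V) → E) (C : (Fin c → V) → F₂)
    (v : Fin (a + (b + c)) → V) :
    wedge μ₁ B (wedge μ₂ A C) v =
      ∑ ρ : Equiv.Perm (Fin (a + (b + c))), if TS3R a b c ρ then
        (Equiv.Perm.sign ρ : ℤ) • μ₁ (B fun i => v (ρ (castAdd (b + c) i)))
          (μ₂ (A fun i => v (ρ (natAdd a (castAdd c i))))
              (C fun i => v (ρ (natAdd a (natAdd b i)))))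
      else 0 := by
  classical
  have h0 : ∀ x, μ₁ x (0 : W) = 0 := fun x => by
    have := hsmul x 0 0; simpa using this
  -- step 1 : double sum over pairs
  have step1 : wedge μ₁ B (wedge μ₂ A C) v =
      ∑ p : Equiv.Perm (Fin (a + (b + c))) × Equiv.Perm (Fin (b + c)),
        if IsShuffle a (b + c) p.1 ∧ IsShuffle b c p.2 then
          ((Equiv.Perm.sign p.1 * Equiv.Perm.sign p.2 : ℤˣ) : ℤ) •
            μ₁ (B fun i => v (p.1 (castAdd (b + c) i)))
              (μ₂ (A fun i => v (p.1 (natAdd a (p.2 (castAdd c i)))))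
                  (C fun i => v (p.1 (natAdd a (p.2 (natAdd b i))))))
        else 0 := by
    rw [Fintype.sum_prod_type]
    unfold wedge
    refine Finset.sum_congr rfl fun τ _ => ?_
    by_cases hτ : IsShuffle a (b + c) τ
    · rw [if_pos hτ]
      set x := B fun i => v (τ (castAdd (b + c) i)) with hx
      have expand : μ₁ x (∑ σ : Equiv.Perm (Fin (b + c)),
          if IsShuffle b c σ then
            (Equiv.Perm.sign σ : ℤ) •
              μ₂ (A fun i => (fun j => v (τ (natAdd a j))) (σ (castAdd c i)))
                 (C fun i => (fun j => v (τ (natAdd a j))) (σ (natAdd b i)))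
          else 0) =
          ∑ σ : Equiv.Perm (Fin (b + c)),
            if IsShuffle b c σ then
              (Equiv.Perm.sign σ : ℤ) •
                μ₁ x (μ₂ (A fun i => v (τ (natAdd a (σ (castAdd c i)))))
                         (C fun i => v (τ (natAdd a (σ (natAdd b i))))))
            else 0 := by
        let φ : W →+ G := AddMonoidHom.mk' (μ₁ x) (hadd x)
        have hφ : ∀ w, μ₁ x w = φ w := fun w => rfl
        rw [hφ, map_sum]
        refine Finset.sum_congr rfl fun σ _ => ?_
        rw [apply_ite φ, map_zero, map_zsmul]
        rfl
      rw [expand, Finset.smul_sum]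
      refine Finset.sum_congr rfl fun σ _ => ?_
      rw [apply_ite (fun y => (Equiv.Perm.sign τ : ℤ) • y), smul_zero, smul_smul]
      simp only [hτ, true_and]
      norm_cast
    · rw [if_neg hτ]
      symm
      refine Finset.sum_eq_zero fun σ _ => ?_
      rw [if_neg (by tauto)]
  rw [step1]
  -- step 2 : filter form and bijection
  rw [← Finset.sum_filter, ← Finset.sum_filter]
  refine Finset.sum_nbij' (fun p => p.1 * liftR a p.2)
    (fun ρ => (ρ * liftR a (sortR a b c ρ), (sortR a b c ρ)⁻¹)) ?_ ?_ ?_ ?_ ?_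
  · -- maps into TS3R
    rintro ⟨τ, σ⟩ hp
    simp only [Finset.mem_filter, Finset.mem_univ, true_and] at hp ⊢
    obtain ⟨hτ, hσ⟩ := hp
    refine ⟨?_, ?_, ?_⟩
    · intro i j hij
      simp only [Equiv.Perm.mul_apply, liftR_castAdd]
      exact hτ.1 i j hij
    · intro i j hij
      simp only [Equiv.Perm.mul_apply, liftR_natAdd]
      exact hτ.2 _ _ (hσ.1 i j hij)
    · intro i j hij
      simp only [Equiv.Perm.mul_apply, liftR_natAdd]
      exact hτ.2 _ _ (hσ.2 i j hij)
  · -- back maps into shuffles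
    intro ρ hρ
    simp only [Finset.mem_filter, Finset.mem_univ, true_and] at hρ ⊢
    obtain ⟨h1, h2, h3⟩ := hρ
    have hinj : Function.Injective (fun x : Fin (b + c) => ρ (natAdd a x)) :=
      ρ.injective.comp natAdd_inj
    have hsm : StrictMono ((fun x : Fin (b + c) => ρ (natAdd a x)) ∘ (sortR a b c ρ)) :=
      (Tuple.monotone_sort _).strictMono_of_injective
        (hinj.comp (sortR a b c ρ).injective)
    constructor
    · constructor
      · intro i j hij
        simp only [Equiv.Perm.mul_apply, liftR_castAdd]
        exact h1 hij
      · intro i j hij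
        simp only [Equiv.Perm.mul_apply, liftR_natAdd]
        exact hsm hij
    · have key : ∀ x y : Fin (b + c), ρ (natAdd a x) < ρ (natAdd a y) →
          (sortR a b c ρ)⁻¹ x < (sortR a b c ρ)⁻¹ y := by
        intro x y hxy
        rw [← hsm.lt_iff_lt]
        show ρ (natAdd a ((sortR a b c ρ) ((sortR a b c ρ)⁻¹ x))) <
             ρ (natAdd a ((sortR a b c ρ) ((sortR a b c ρ)⁻¹ y)))
        rwa [Equiv.Perm.coe_inv, Equiv.apply_symm_apply, Equiv.apply_symm_apply]
      exact ⟨fun i j hij => key _ _ (h2 hij), fun i j hij => key _ _ (h3 hij)⟩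
  · -- left inverse
    rintro ⟨τ, σ⟩ hp
    simp only [Finset.mem_filter, Finset.mem_univ, true_and] at hp
    have hsm2 : StrictMono (fun x : Fin (b + c) => τ (natAdd a x)) :=
      fun x y h => hp.1.2 x y h
    have hsort : sortR a b c (τ * liftR a σ) = σ⁻¹ := by
      symm
      apply sort_eq_of_injective
      · intro x y hxy
        simp only [Equiv.Perm.mul_apply, liftR_natAdd] at hxy
        exact σ.injective (natAdd_inj (τ.injective hxy))
      · intro x y hxy
        simp only [Function.comp, Equiv.Perm.mul_apply, liftR_natAdd,
          Equiv.Perm.coe_inv, Equiv.apply_symm_apply]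
        exact hsm2.monotone hxy
    dsimp only
    rw [hsort]
    refine Prod.ext ?_ (inv_inv σ)
    show τ * liftR a σ * liftR a σ⁻¹ = τ
    exact mul_liftR_inv_cancel a τ σ
  · -- right inverse
    intro ρ _
    dsimp only
    exact mul_liftR_inv_cancel a ρ (sortR a b c ρ)
  · -- summands agree
    rintro ⟨τ, σ⟩ hp
    simp only []
    have hsign : ((Equiv.Perm.sign τ * Equiv.Perm.sign σ : ℤˣ) : ℤ) =
        ((Equiv.Perm.sign (τ * liftR a σ) : ℤˣ) : ℤ) := by
      rw [map_mul, sign_liftR]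
    rw [hsign]
    congr 1
    simp only [Equiv.Perm.mul_apply, liftR_castAdd, liftR_natAdd]

section liftL
variable (c : ℕ) {m : ℕ}

def liftL (σ : Equiv.Perm (Fin m)) : Equiv.Perm (Fin (m + c)) :=
  finSumFinEquiv.permCongr (Equiv.sumCongr σ (Equiv.refl (Fin c)))

@[simp] lemma liftL_castAdd (σ : Equiv.Perm (Fin m)) (x : Fin m) :
    liftL c σ (castAdd c x) = castAdd c (σ x) := by
  simp [liftL, Equiv.permCongr_apply]

@[simp] lemma liftL_natAdd (σ : Equiv.Perm (Fin m)) (i : Fin c) :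
    liftL c σ (natAdd m i) = natAdd m i := by
  simp [liftL, Equiv.permCongr_apply]

lemma liftL_mul (σ σ' : Equiv.Perm (Fin m)) :
    liftL c (σ * σ') = liftL c σ * liftL c σ' := by
  ext x
  obtain ⟨y, rfl⟩ := finSumFinEquiv.surjective x
  cases y with
  | inl i =>
    rw [finSumFinEquiv_apply_left]
    simp [Equiv.Perm.mul_apply]
  | inr z =>
    rw [finSumFinEquiv_apply_right]
    simp [Equiv.Perm.mul_apply]

@[simp] lemma liftL_one : liftL c (1 : Equiv.Perm (Fin m)) = 1 := by
  ext x; simp [liftL, Equiv.permCongr_apply]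

lemma mul_liftL_inv_cancel (τ : Equiv.Perm (Fin (m + c))) (σ : Equiv.Perm (Fin m)) :
    τ * liftL c σ * liftL c σ⁻¹ = τ := by
  rw [mul_assoc, ← liftL_mul, mul_inv_cancel, liftL_one, mul_one]

@[simp] lemma sign_liftL (σ : Equiv.Perm (Fin m)) :
    Equiv.Perm.sign (liftL c σ) = Equiv.Perm.sign σ := by
  simp [liftL, Equiv.Perm.sign_permCongr, Equiv.Perm.sign_sumCongr]

end liftL

def TS3L (a b c : ℕ) (ρ : Equiv.Perm (Fin ((a + b) + c))) : Prop :=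
  StrictMono (fun i : Fin a => ρ (castAdd c (castAdd b i))) ∧
  StrictMono (fun i : Fin b => ρ (castAdd c (natAdd a i))) ∧
  StrictMono (fun i : Fin c => ρ (natAdd (a + b) i))

instance (a b c : ℕ) (ρ : Equiv.Perm (Fin ((a + b) + c))) : Decidable (TS3L a b c ρ) := by
  unfold TS3L StrictMono; infer_instance

def sortL (a b c : ℕ) (ρ : Equiv.Perm (Fin ((a + b) + c))) : Equiv.Perm (Fin (a + b)) :=
  Tuple.sort (fun x : Fin (a + b) => ρ (castAdd c x))

lemma expandL {V E F F₂ W G : Type*} [AddCommGroup W] [AddCommGroup G]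
    (μ₁ : W → F₂ → G) (μ₂ : E → F → W)
    (hadd : ∀ x y z, μ₁ (y + z) x = μ₁ y x + μ₁ z x)
    (hsmul : ∀ x (n : ℤ) w, μ₁ (n • w) x = n • μ₁ w x)
    {a b c : ℕ} (A : (Fin a → V) → E) (B : (Fin b → V) → F) (C : (Fin c → V) → F₂)
    (v : Fin ((a + b) + c) → V) :
    wedge μ₁ (wedge μ₂ A B) C v =
      ∑ ρ : Equiv.Perm (Fin ((a + b) + c)), if TS3L a b c ρ then
        (Equiv.Perm.sign ρ : ℤ) •
          μ₁ (μ₂ (A fun i => v (ρ (castAdd c (castAdd b i))))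
                 (B fun i => v (ρ (castAdd c (natAdd a i)))))
             (C fun i => v (ρ (natAdd (a + b) i)))
      else 0 := by
  classical
  have h0 : ∀ x, μ₁ (0 : W) x = 0 := fun x => by
    have := hsmul x 0 0; simpa using this
  have step1 : wedge μ₁ (wedge μ₂ A B) C v =
      ∑ p : Equiv.Perm (Fin ((a + b) + c)) × Equiv.Perm (Fin (a + b)),
        if IsShuffle (a + b) c p.1 ∧ IsShuffle a b p.2 then
          ((Equiv.Perm.sign p.1 * Equiv.Perm.sign p.2 : ℤˣ) : ℤ) •
            μ₁ (μ₂ (A fun i => v (p.1 (castAdd c (p.2 (castAdd b i)))))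
                   (B fun i => v (p.1 (castAdd c (p.2 (natAdd a i))))))
               (C fun i => v (p.1 (natAdd (a + b) i)))
        else 0 := by
    rw [Fintype.sum_prod_type]
    unfold wedge
    refine Finset.sum_congr rfl fun τ _ => ?_
    by_cases hτ : IsShuffle (a + b) c τ
    · rw [if_pos hτ]
      set x := C fun i => v (τ (natAdd (a + b) i)) with hx
      have expand : μ₁ (∑ σ : Equiv.Perm (Fin (a + b)),
          if IsShuffle a b σ then
            (Equiv.Perm.sign σ : ℤ) •
              μ₂ (A fun i => (fun j => v (τ (castAdd c j))) (σ (castAdd b i)))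
                 (B fun i => (fun j => v (τ (castAdd c j))) (σ (natAdd a i)))
          else 0) x =
          ∑ σ : Equiv.Perm (Fin (a + b)),
            if IsShuffle a b σ then
              (Equiv.Perm.sign σ : ℤ) •
                μ₁ (μ₂ (A fun i => v (τ (castAdd c (σ (castAdd b i)))))
                       (B fun i => v (τ (castAdd c (σ (natAdd a i)))))) x
            else 0 := by
        let φ : W →+ G := AddMonoidHom.mk' (fun w => μ₁ w x) (fun y z => hadd x y z)
        have hφ : ∀ w, μ₁ w x = φ w := fun w => rfl
        rw [hφ, map_sum]
        refine Finset.sum_congr rfl fun σ _ => ?_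
        rw [apply_ite φ, map_zero]
        have : ∀ (n : ℤ) (w : W), φ (n • w) = n • φ w := fun n w => hsmul x n w
        rw [this]
        rfl
      rw [expand, Finset.smul_sum]
      refine Finset.sum_congr rfl fun σ _ => ?_
      rw [apply_ite (fun y => (Equiv.Perm.sign τ : ℤ) • y), smul_zero, smul_smul]
      simp only [hτ, true_and]
      norm_cast
    · rw [if_neg hτ]
      symm
      refine Finset.sum_eq_zero fun σ _ => ?_
      rw [if_neg (by tauto)]
  rw [step1]
  rw [← Finset.sum_filter, ← Finset.sum_filter]
  refine Finset.sum_nbij' (fun p => p.1 * liftL c p.2)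
    (fun ρ => (ρ * liftL c (sortL a b c ρ), (sortL a b c ρ)⁻¹)) ?_ ?_ ?_ ?_ ?_
  · rintro ⟨τ, σ⟩ hp
    simp only [Finset.mem_filter, Finset.mem_univ, true_and] at hp ⊢
    obtain ⟨hτ, hσ⟩ := hp
    refine ⟨?_, ?_, ?_⟩
    · intro i j hij
      simp only [Equiv.Perm.mul_apply, liftL_castAdd]
      exact hτ.1 _ _ (hσ.1 i j hij)
    · intro i j hij
      simp only [Equiv.Perm.mul_apply, liftL_castAdd]
      exact hτ.1 _ _ (hσ.2 i j hij)
    · intro i j hij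
      simp only [Equiv.Perm.mul_apply, liftL_natAdd]
      exact hτ.2 i j hij
  · intro ρ hρ
    simp only [Finset.mem_filter, Finset.mem_univ, true_and] at hρ ⊢
    obtain ⟨h1, h2, h3⟩ := hρ
    have hinj : Function.Injective (fun x : Fin (a + b) => ρ (castAdd c x)) :=
      ρ.injective.comp castAdd_inj
    have hsm : StrictMono ((fun x : Fin (a + b) => ρ (castAdd c x)) ∘ (sortL a b c ρ)) :=
      (Tuple.monotone_sort _).strictMono_of_injective
        (hinj.comp (sortL a b c ρ).injective)
    constructor
    · constructor
      · intro i j hij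
        simp only [Equiv.Perm.mul_apply, liftL_castAdd]
        exact hsm hij
      · intro i j hij
        simp only [Equiv.Perm.mul_apply, liftL_natAdd]
        exact h3 hij
    · have key : ∀ x y : Fin (a + b), ρ (castAdd c x) < ρ (castAdd c y) →
          (sortL a b c ρ)⁻¹ x < (sortL a b c ρ)⁻¹ y := by
        intro x y hxy
        rw [← hsm.lt_iff_lt]
        show ρ (castAdd c ((sortL a b c ρ) ((sortL a b c ρ)⁻¹ x))) <
             ρ (castAdd c ((sortL a b c ρ) ((sortL a b c ρ)⁻¹ y)))
        rwa [Equiv.Perm.coe_inv, Equiv.apply_symm_apply, Equiv.apply_symm_apply]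
      exact ⟨fun i j hij => key _ _ (h1 hij), fun i j hij => key _ _ (h2 hij)⟩
  · rintro ⟨τ, σ⟩ hp
    simp only [Finset.mem_filter, Finset.mem_univ, true_and] at hp
    have hsm2 : StrictMono (fun x : Fin (a + b) => τ (castAdd c x)) :=
      fun x y h => hp.1.1 x y h
    have hsort : sortL a b c (τ * liftL c σ) = σ⁻¹ := by
      symm
      apply sort_eq_of_injective
      · intro x y hxy
        simp only [Equiv.Perm.mul_apply, liftL_castAdd] at hxy
        exact σ.injective (castAdd_inj (τ.injective hxy))
      · intro x y hxy
        simp only [Function.comp, Equiv.Perm.mul_apply, liftL_castAdd,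
          Equiv.Perm.coe_inv, Equiv.apply_symm_apply]
        exact hsm2.monotone hxy
    dsimp only
    rw [hsort]
    refine Prod.ext ?_ (inv_inv σ)
    show τ * liftL c σ * liftL c σ⁻¹ = τ
    exact mul_liftL_inv_cancel c τ σ
  · intro ρ _
    dsimp only
    exact mul_liftL_inv_cancel c ρ (sortL a b c ρ)
  · rintro ⟨τ, σ⟩ hp
    simp only []
    have hsign : ((Equiv.Perm.sign τ * Equiv.Perm.sign σ : ℤˣ) : ℤ) =
        ((Equiv.Perm.sign (τ * liftL c σ) : ℤˣ) : ℤ) := by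
      rw [map_mul, sign_liftL]
    rw [hsign]
    congr 1
    simp only [Equiv.Perm.mul_apply, liftL_castAdd, liftL_natAdd]

lemma transport {G : Type*} [AddCommGroup G] {n₂ n₁ : ℕ} (h : n₂ = n₁)
    (π : Equiv.Perm (Fin n₁))
    (P₁ : Equiv.Perm (Fin n₁) → Prop) [DecidablePred P₁]
    (P₂ : Equiv.Perm (Fin n₂) → Prop) [DecidablePred P₂]
    (t₁ : Equiv.Perm (Fin n₁) → G) (t₂ : Equiv.Perm (Fin n₂) → G) (ε : ℤˣ)
    (hP : ∀ ρ', P₂ ρ' ↔ P₁ ((finCongr h).permCongr ρ' * π))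
    (ht : ∀ ρ', P₂ ρ' → t₂ ρ' = (ε : ℤ) • t₁ ((finCongr h).permCongr ρ' * π)) :
    ∑ ρ' : Equiv.Perm (Fin n₂), (if P₂ ρ' then (Equiv.Perm.sign ρ' : ℤ) • t₂ ρ' else 0) =
      ((ε * Equiv.Perm.sign π : ℤˣ) : ℤ) •
        ∑ ρ : Equiv.Perm (Fin n₁), (if P₁ ρ then (Equiv.Perm.sign ρ : ℤ) • t₁ ρ else 0) := by
  rw [Finset.smul_sum]
  apply Fintype.sum_bijective (fun ρ' => (finCongr h).permCongr ρ' * π)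
    ((Equiv.trans (Equiv.permCongr (finCongr h)) (Equiv.mulRight π)).bijective)
  intro ρ'
  by_cases hp : P₂ ρ'
  · rw [if_pos hp, if_pos ((hP ρ').mp hp), ht ρ' hp]
    have hs : Equiv.Perm.sign ((finCongr h).permCongr ρ' * π) =
        Equiv.Perm.sign ρ' * Equiv.Perm.sign π := by
      rw [map_mul, Equiv.Perm.sign_permCongr]
    rw [hs, smul_smul, smul_smul]
    congr 1
    rcases Int.units_eq_one_or (Equiv.Perm.sign ρ') with h1 | h1 <;>
      rcases Int.units_eq_one_or (Equiv.Perm.sign π) with h2 | h2 <;>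
      rcases Int.units_eq_one_or ε with h3 | h3 <;>
      rw [h1, h2, h3] <;> norm_num
  · rw [if_neg hp, if_neg (fun hc => hp ((hP ρ').mpr hc)), smul_zero]

lemma permCongr_finCongr_val {m n : ℕ} (h : m = n) (s : Equiv.Perm (Fin m)) (x : Fin n)
    (hx : (x : ℕ) < m) :
    ((((finCongr h).permCongr s) x : Fin n) : ℕ) = ((s ⟨(x : ℕ), hx⟩ : Fin m) : ℕ) := by
  rw [Equiv.permCongr_apply]
  simp only [finCongr_apply, Fin.coe_cast]
  have : (finCongr h).symm x = ⟨(x : ℕ), hx⟩ := by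
    apply Fin.ext; simp
  rw [this]

lemma liftL_val {m c : ℕ} (s : Equiv.Perm (Fin m)) (x : Fin (m + c)) :
    ((liftL c s x : Fin (m + c)) : ℕ) =
      if hx : (x : ℕ) < m then ((s ⟨(x : ℕ), hx⟩ : Fin m) : ℕ) else (x : ℕ) := by
  by_cases hx : (x : ℕ) < m
  · rw [dif_pos hx]
    have h2 : x = castAdd c ⟨(x : ℕ), hx⟩ := by apply Fin.ext; simp
    conv_lhs => rw [h2, liftL_castAdd]
    simp
  · rw [dif_neg hx]
    have h2 : x = natAdd m ⟨(x : ℕ) - m, by omega⟩ := by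
      apply Fin.ext; simp; omega
    conv_lhs => rw [h2, liftL_natAdd]
    simp
    omega

def piA (a b c : ℕ) : Equiv.Perm (Fin (a + (b + c))) :=
  ((finCongr (by omega : (b + c) + a = a + (b + c))).permCongr (liftL a (fswap b c))) *
    fswap a (b + c)

def piB (a b c : ℕ) : Equiv.Perm (Fin (a + (b + c))) :=
  (finCongr (by omega : (a + b) + c = a + (b + c))).permCongr (liftL c (fswap a b))

lemma piA_val (a b c : ℕ) (x : Fin (a + (b + c))) :
    ((piA a b c x : Fin (a + (b + c))) : ℕ) =
      if (x : ℕ) < a then (x : ℕ) + (b + c)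
      else if (x : ℕ) < a + b then (x : ℕ) - a + c
      else (x : ℕ) - a - b := by
  have hx := x.isLt
  rw [piA, Equiv.Perm.mul_apply]
  have h1 : ((fswap a (b + c) x : Fin (a + (b+c))) : ℕ) < (b + c) + a := by
    rw [fswap_val]; split_ifs <;> omega
  rw [permCongr_finCongr_val _ _ _ h1, liftL_val]
  simp only [fswap_val]
  split_ifs <;> omega

lemma piB_val (a b c : ℕ) (x : Fin (a + (b + c))) :
    ((piB a b c x : Fin (a + (b + c))) : ℕ) =
      if (x : ℕ) < a then (x : ℕ) + b
      else if (x : ℕ) < a + b then (x : ℕ) - a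
      else (x : ℕ) := by
  have hx := x.isLt
  rw [piB]
  have h1 : (x : ℕ) < (a + b) + c := by omega
  rw [permCongr_finCongr_val _ _ _ h1, liftL_val]
  simp only [fswap_val]
  split_ifs <;> omega

lemma sign_piA (a b c : ℕ) :
    Equiv.Perm.sign (piA a b c) = (-1 : ℤˣ) ^ (b * c) * (-1) ^ (a * (b + c)) := by
  rw [piA, map_mul, Equiv.Perm.sign_permCongr, sign_liftL, sign_fswap, sign_fswap]

lemma sign_piB (a b c : ℕ) :
    Equiv.Perm.sign (piB a b c) = (-1 : ℤˣ) ^ (a * b) := by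
  rw [piB, Equiv.Perm.sign_permCongr, sign_liftL, sign_fswap]

lemma strictMono_cast_comp {m n : ℕ} (h : m = n) {γ : Type*} [Preorder γ] {f : γ → Fin m} :
    StrictMono (fun x => Fin.cast h (f x)) ↔ StrictMono f :=
  ⟨fun H a b hab => (Fin.cast_lt_cast h).mp (H hab),
   fun H a b hab => (Fin.cast_lt_cast h).mpr (H hab)⟩


/-- For a symmetric bilinear form `⟨,⟩_h` on `h` satisfying
`⟨Y, X ▷ Y'⟩ = - ⟨X ▷ Y, Y'⟩`, one has
`⟨B₁, A ∧^▷ B₂⟩ = (-1)^(t₂(k+t₁)+k t₁+1) ⟨B₂, A ∧^▷ B₁⟩ = (-1)^(k t₁+1) ⟨A ∧^▷ B₁, B₂⟩`. -/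
theorem inner_wedge_act_signs {g h V : Type*} [AddCommGroup g] [Module ℝ g]
    [AddCommGroup h] [Module ℝ h] [AddCommGroup V] [Module ℝ V]
    (act : g →ₗ[ℝ] h →ₗ[ℝ] h)
    (innh : h →ₗ[ℝ] h →ₗ[ℝ] ℝ)
    (innh_symm : ∀ Y Y' : h, innh Y Y' = innh Y' Y)
    (innh_act : ∀ (X : g) (Y Y' : h), innh Y (act X Y') = - innh (act X Y) Y')
    {k t₁ t₂ : ℕ} (A : AlternatingMap ℝ V g (Fin k))
    (B₁ : AlternatingMap ℝ V h (Fin t₁)) (B₂ : AlternatingMap ℝ V h (Fin t₂)) :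
    wedge (fun Y Y' => innh Y Y') ⇑B₁ (wedge (fun X Y => act X Y) ⇑A ⇑B₂) =
      ((-1 : ℝ) ^ (t₂ * (k + t₁) + k * t₁ + 1)) •
        reindex (by omega : t₂ + (k + t₁) = t₁ + (k + t₂))
          (wedge (fun Y Y' => innh Y Y') ⇑B₂ (wedge (fun X Y => act X Y) ⇑A ⇑B₁)) ∧
    wedge (fun Y Y' => innh Y Y') ⇑B₁ (wedge (fun X Y => act X Y) ⇑A ⇑B₂) =
      ((-1 : ℝ) ^ (k * t₁ + 1)) •
        reindex (by omega : (k + t₁) + t₂ = t₁ + (k + t₂))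
          (wedge (fun Y Y' => innh Y Y') (wedge (fun X Y => act X Y) ⇑A ⇑B₁) ⇑B₂) := by
  have hadd1 : ∀ (x y z : h), (innh x (y + z) : ℝ) = innh x y + innh x z :=
    fun x y z => map_add (innh x) y z
  have hsm1 : ∀ (x : h) (n : ℤ) (w : h), (innh x (n • w) : ℝ) = n • innh x w :=
    fun x n w => map_zsmul (innh x) n w
  have hadd2 : ∀ (x y z : h), (innh (y + z) x : ℝ) = innh y x + innh z x := fun x y z => by
    rw [innh_symm (y + z) x, map_add, innh_symm x y, innh_symm x z]
  have hsm2 : ∀ (x : h) (n : ℤ) (w : h), (innh (n • w) x : ℝ) = n • innh w x := fun x n w => by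
    rw [innh_symm (n • w) x, map_zsmul, innh_symm x w]
  constructor
  · -- claim 1
    funext v
    have h₁pf : t₂ + (k + t₁) = t₁ + (k + t₂) := by omega
    set π := piA t₁ k t₂ with hπdef
    have pcmul : ∀ (ρ' : Equiv.Perm (Fin (t₂ + (k + t₁)))) (x : Fin (t₁ + (k + t₂)))
        (z : Fin (t₂ + (k + t₁))), π x = Fin.cast h₁pf z →
        ((finCongr h₁pf).permCongr ρ' * π) x = Fin.cast h₁pf (ρ' z) := by
      intro ρ' x z hz
      rw [Equiv.Perm.mul_apply, hz, Equiv.permCongr_apply]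
      have : (finCongr h₁pf).symm (Fin.cast h₁pf z) = z := by apply Fin.ext; simp
      rw [this]
      simp
    have b1 : ∀ i : Fin t₁, π (castAdd (k + t₂) i) =
        Fin.cast h₁pf (natAdd t₂ (natAdd k i)) := by
      intro i
      have := i.isLt
      apply Fin.ext
      rw [hπdef, piA_val]
      simp only [Fin.coe_castAdd, Fin.coe_natAdd, Fin.coe_cast]
      split_ifs <;> omega
    have b2 : ∀ x : Fin k, π (natAdd t₁ (castAdd t₂ x)) =
        Fin.cast h₁pf (natAdd t₂ (castAdd t₁ x)) := by
      intro x
      have := x.isLt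
      apply Fin.ext
      rw [hπdef, piA_val]
      simp only [Fin.coe_castAdd, Fin.coe_natAdd, Fin.coe_cast]
      split_ifs <;> omega
    have b3 : ∀ j : Fin t₂, π (natAdd t₁ (natAdd k j)) =
        Fin.cast h₁pf (castAdd (k + t₁) j) := by
      intro j
      have := j.isLt
      apply Fin.ext
      rw [hπdef, piA_val]
      simp only [Fin.coe_castAdd, Fin.coe_natAdd, Fin.coe_cast]
      split_ifs <;> omega
    have hP : ∀ ρ' : Equiv.Perm (Fin (t₂ + (k + t₁))), TS3R t₂ k t₁ ρ' ↔
        TS3R t₁ k t₂ ((finCongr h₁pf).permCongr ρ' * π) := by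
      intro ρ'
      have e1 : (fun i : Fin t₁ => ((finCongr h₁pf).permCongr ρ' * π) (castAdd (k + t₂) i)) =
          fun i => Fin.cast h₁pf (ρ' (natAdd t₂ (natAdd k i))) :=
        funext fun i => pcmul ρ' _ _ (b1 i)
      have e2 : (fun i : Fin k => ((finCongr h₁pf).permCongr ρ' * π) (natAdd t₁ (castAdd t₂ i))) =
          fun i => Fin.cast h₁pf (ρ' (natAdd t₂ (castAdd t₁ i))) :=
        funext fun i => pcmul ρ' _ _ (b2 i)
      have e3 : (fun i : Fin t₂ => ((finCongr h₁pf).permCongr ρ' * π) (natAdd t₁ (natAdd k i))) =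
          fun i => Fin.cast h₁pf (ρ' (castAdd (k + t₁) i)) :=
        funext fun i => pcmul ρ' _ _ (b3 i)
      unfold TS3R
      rw [e1, e2, e3, strictMono_cast_comp, strictMono_cast_comp, strictMono_cast_comp]
      tauto
    have ht : ∀ ρ' : Equiv.Perm (Fin (t₂ + (k + t₁))), TS3R t₂ k t₁ ρ' →
        (innh (B₂ fun i => v (Fin.cast h₁pf (ρ' (castAdd (k + t₁) i))))
          (act (A fun i => v (Fin.cast h₁pf (ρ' (natAdd t₂ (castAdd t₁ i)))))
            (B₁ fun i => v (Fin.cast h₁pf (ρ' (natAdd t₂ (natAdd k i)))))) : ℝ) =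
        (((-1 : ℤˣ) : ℤ)) • (innh
          (B₁ fun i => v (((finCongr h₁pf).permCongr ρ' * π) (castAdd (k + t₂) i)))
          (act (A fun i => v (((finCongr h₁pf).permCongr ρ' * π) (natAdd t₁ (castAdd t₂ i))))
            (B₂ fun i => v (((finCongr h₁pf).permCongr ρ' * π) (natAdd t₁ (natAdd k i)))))) := by
      intro ρ' _
      have a1 : (fun i : Fin t₁ => v (((finCongr h₁pf).permCongr ρ' * π) (castAdd (k + t₂) i))) =
          fun i => v (Fin.cast h₁pf (ρ' (natAdd t₂ (natAdd k i)))) :=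
        funext fun i => congrArg v (pcmul ρ' _ _ (b1 i))
      have a2 : (fun i : Fin k => v (((finCongr h₁pf).permCongr ρ' * π) (natAdd t₁ (castAdd t₂ i)))) =
          fun i => v (Fin.cast h₁pf (ρ' (natAdd t₂ (castAdd t₁ i)))) :=
        funext fun i => congrArg v (pcmul ρ' _ _ (b2 i))
      have a3 : (fun i : Fin t₂ => v (((finCongr h₁pf).permCongr ρ' * π) (natAdd t₁ (natAdd k i)))) =
          fun i => v (Fin.cast h₁pf (ρ' (castAdd (k + t₁) i))) :=
        funext fun i => congrArg v (pcmul ρ' _ _ (b3 i))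
      rw [a1, a2, a3]
      have h1 := innh_act (A fun i => v (Fin.cast h₁pf (ρ' (natAdd t₂ (castAdd t₁ i)))))
        (B₂ fun i => v (Fin.cast h₁pf (ρ' (castAdd (k + t₁) i))))
        (B₁ fun i => v (Fin.cast h₁pf (ρ' (natAdd t₂ (natAdd k i)))))
      rw [h1, innh_symm]
      simp
    have tr := transport (G := ℝ) h₁pf π (TS3R t₁ k t₂) (TS3R t₂ k t₁)
      (fun ρ => (innh (B₁ fun i => v (ρ (castAdd (k + t₂) i)))
        (act (A fun i => v (ρ (natAdd t₁ (castAdd t₂ i))))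
          (B₂ fun i => v (ρ (natAdd t₁ (natAdd k i))))) : ℝ))
      (fun ρ' => (innh (B₂ fun i => v (Fin.cast h₁pf (ρ' (castAdd (k + t₁) i))))
        (act (A fun i => v (Fin.cast h₁pf (ρ' (natAdd t₂ (castAdd t₁ i)))))
          (B₁ fun i => v (Fin.cast h₁pf (ρ' (natAdd t₂ (natAdd k i)))))) : ℝ))
      (-1) hP ht
    have hc : ((-1 : ℝ) ^ (t₂ * (k + t₁) + k * t₁ + 1)) *
        (((((-1) * Equiv.Perm.sign π : ℤˣ) : ℤ) : ℝ)) = 1 := by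
      rw [hπdef, sign_piA]
      have hu : ((-1) * ((-1 : ℤˣ) ^ (k * t₂) * (-1) ^ (t₁ * (k + t₂)))) =
          (-1 : ℤˣ) ^ (1 + k * t₂ + t₁ * (k + t₂)) := by
        rw [pow_add, pow_add, pow_one, mul_assoc]
      rw [hu]
      push_cast
      rw [← pow_add]
      exact Even.neg_one_pow ⟨t₂ * k + t₂ * t₁ + k * t₁ + 1, by ring⟩
    symm
    calc ((-1 : ℝ) ^ (t₂ * (k + t₁) + k * t₁ + 1)) •
          reindex (by omega : t₂ + (k + t₁) = t₁ + (k + t₂))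
            (wedge (fun Y Y' => innh Y Y') ⇑B₂ (wedge (fun X Y => act X Y) ⇑A ⇑B₁)) v
        = ((-1 : ℝ) ^ (t₂ * (k + t₁) + k * t₁ + 1)) •
            (wedge (fun Y Y' => innh Y Y') ⇑B₂ (wedge (fun X Y => act X Y) ⇑A ⇑B₁)
              (fun i => v (Fin.cast h₁pf i))) := rfl
      _ = ((-1 : ℝ) ^ (t₂ * (k + t₁) + k * t₁ + 1)) •
            ((((-1) * Equiv.Perm.sign π : ℤˣ) : ℤ) •
              ∑ ρ : Equiv.Perm (Fin (t₁ + (k + t₂))), if TS3R t₁ k t₂ ρ then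
                (Equiv.Perm.sign ρ : ℤ) • (innh (B₁ fun i => v (ρ (castAdd (k + t₂) i)))
                  (act (A fun i => v (ρ (natAdd t₁ (castAdd t₂ i))))
                    (B₂ fun i => v (ρ (natAdd t₁ (natAdd k i))))) : ℝ)
              else 0) := by
            rw [expandR (fun (Y Y' : h) => (innh Y Y' : ℝ)) (fun (X : g) (Y : h) => act X Y)
              hadd1 hsm1 ⇑B₂ ⇑A ⇑B₁ (fun i => v (Fin.cast h₁pf i))]
            rw [tr]
      _ = ∑ ρ : Equiv.Perm (Fin (t₁ + (k + t₂))), if TS3R t₁ k t₂ ρ then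
                (Equiv.Perm.sign ρ : ℤ) • (innh (B₁ fun i => v (ρ (castAdd (k + t₂) i)))
                  (act (A fun i => v (ρ (natAdd t₁ (castAdd t₂ i))))
                    (B₂ fun i => v (ρ (natAdd t₁ (natAdd k i))))) : ℝ)
              else 0 := by
            rw [smul_eq_mul, zsmul_eq_mul, ← mul_assoc, hc, one_mul]
      _ = wedge (fun Y Y' => innh Y Y') ⇑B₁ (wedge (fun X Y => act X Y) ⇑A ⇑B₂) v :=
            (expandR (fun (Y Y' : h) => (innh Y Y' : ℝ)) (fun (X : g) (Y : h) => act X Y)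
              hadd1 hsm1 ⇑B₁ ⇑A ⇑B₂ v).symm
  · -- claim 2
    funext v
    have h₂pf : (k + t₁) + t₂ = t₁ + (k + t₂) := by omega
    set π := piB t₁ k t₂ with hπdef
    have pcmul : ∀ (ρ' : Equiv.Perm (Fin ((k + t₁) + t₂))) (x : Fin (t₁ + (k + t₂)))
        (z : Fin ((k + t₁) + t₂)), π x = Fin.cast h₂pf z →
        ((finCongr h₂pf).permCongr ρ' * π) x = Fin.cast h₂pf (ρ' z) := by
      intro ρ' x z hz
      rw [Equiv.Perm.mul_apply, hz, Equiv.permCongr_apply]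
      have : (finCongr h₂pf).symm (Fin.cast h₂pf z) = z := by apply Fin.ext; simp
      rw [this]
      simp
    have b1 : ∀ i : Fin t₁, π (castAdd (k + t₂) i) =
        Fin.cast h₂pf (castAdd t₂ (natAdd k i)) := by
      intro i
      have := i.isLt
      apply Fin.ext
      rw [hπdef, piB_val]
      simp only [Fin.coe_castAdd, Fin.coe_natAdd, Fin.coe_cast]
      split_ifs <;> omega
    have b2 : ∀ x : Fin k, π (natAdd t₁ (castAdd t₂ x)) =
        Fin.cast h₂pf (castAdd t₂ (castAdd t₁ x)) := by
      intro x
      have := x.isLt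
      apply Fin.ext
      rw [hπdef, piB_val]
      simp only [Fin.coe_castAdd, Fin.coe_natAdd, Fin.coe_cast]
      split_ifs <;> omega
    have b3 : ∀ j : Fin t₂, π (natAdd t₁ (natAdd k j)) =
        Fin.cast h₂pf (natAdd (k + t₁) j) := by
      intro j
      have := j.isLt
      apply Fin.ext
      rw [hπdef, piB_val]
      simp only [Fin.coe_castAdd, Fin.coe_natAdd, Fin.coe_cast]
      split_ifs <;> omega
    have hP : ∀ ρ' : Equiv.Perm (Fin ((k + t₁) + t₂)), TS3L k t₁ t₂ ρ' ↔
        TS3R t₁ k t₂ ((finCongr h₂pf).permCongr ρ' * π) := by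
      intro ρ'
      have e1 : (fun i : Fin t₁ => ((finCongr h₂pf).permCongr ρ' * π) (castAdd (k + t₂) i)) =
          fun i => Fin.cast h₂pf (ρ' (castAdd t₂ (natAdd k i))) :=
        funext fun i => pcmul ρ' _ _ (b1 i)
      have e2 : (fun i : Fin k => ((finCongr h₂pf).permCongr ρ' * π) (natAdd t₁ (castAdd t₂ i))) =
          fun i => Fin.cast h₂pf (ρ' (castAdd t₂ (castAdd t₁ i))) :=
        funext fun i => pcmul ρ' _ _ (b2 i)
      have e3 : (fun i : Fin t₂ => ((finCongr h₂pf).permCongr ρ' * π) (natAdd t₁ (natAdd k i))) =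
          fun i => Fin.cast h₂pf (ρ' (natAdd (k + t₁) i)) :=
        funext fun i => pcmul ρ' _ _ (b3 i)
      unfold TS3R TS3L
      rw [e1, e2, e3, strictMono_cast_comp, strictMono_cast_comp, strictMono_cast_comp]
      tauto
    have ht : ∀ ρ' : Equiv.Perm (Fin ((k + t₁) + t₂)), TS3L k t₁ t₂ ρ' →
        (innh (act (A fun i => v (Fin.cast h₂pf (ρ' (castAdd t₂ (castAdd t₁ i)))))
            (B₁ fun i => v (Fin.cast h₂pf (ρ' (castAdd t₂ (natAdd k i))))))
          (B₂ fun i => v (Fin.cast h₂pf (ρ' (natAdd (k + t₁) i)))) : ℝ) =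
        (((-1 : ℤˣ) : ℤ)) • (innh
          (B₁ fun i => v (((finCongr h₂pf).permCongr ρ' * π) (castAdd (k + t₂) i)))
          (act (A fun i => v (((finCongr h₂pf).permCongr ρ' * π) (natAdd t₁ (castAdd t₂ i))))
            (B₂ fun i => v (((finCongr h₂pf).permCongr ρ' * π) (natAdd t₁ (natAdd k i)))))) := by
      intro ρ' _
      have a1 : (fun i : Fin t₁ => v (((finCongr h₂pf).permCongr ρ' * π) (castAdd (k + t₂) i))) =
          fun i => v (Fin.cast h₂pf (ρ' (castAdd t₂ (natAdd k i)))) :=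
        funext fun i => congrArg v (pcmul ρ' _ _ (b1 i))
      have a2 : (fun i : Fin k => v (((finCongr h₂pf).permCongr ρ' * π) (natAdd t₁ (castAdd t₂ i)))) =
          fun i => v (Fin.cast h₂pf (ρ' (castAdd t₂ (castAdd t₁ i)))) :=
        funext fun i => congrArg v (pcmul ρ' _ _ (b2 i))
      have a3 : (fun i : Fin t₂ => v (((finCongr h₂pf).permCongr ρ' * π) (natAdd t₁ (natAdd k i)))) =
          fun i => v (Fin.cast h₂pf (ρ' (natAdd (k + t₁) i))) :=
        funext fun i => congrArg v (pcmul ρ' _ _ (b3 i))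
      rw [a1, a2, a3]
      have h1 := innh_act (A fun i => v (Fin.cast h₂pf (ρ' (castAdd t₂ (castAdd t₁ i)))))
        (B₁ fun i => v (Fin.cast h₂pf (ρ' (castAdd t₂ (natAdd k i)))))
        (B₂ fun i => v (Fin.cast h₂pf (ρ' (natAdd (k + t₁) i))))
      rw [h1]
      simp
    have tr := transport (G := ℝ) h₂pf π (TS3R t₁ k t₂) (TS3L k t₁ t₂)
      (fun ρ => (innh (B₁ fun i => v (ρ (castAdd (k + t₂) i)))
        (act (A fun i => v (ρ (natAdd t₁ (castAdd t₂ i))))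
          (B₂ fun i => v (ρ (natAdd t₁ (natAdd k i))))) : ℝ))
      (fun ρ' => (innh (act (A fun i => v (Fin.cast h₂pf (ρ' (castAdd t₂ (castAdd t₁ i)))))
            (B₁ fun i => v (Fin.cast h₂pf (ρ' (castAdd t₂ (natAdd k i))))))
          (B₂ fun i => v (Fin.cast h₂pf (ρ' (natAdd (k + t₁) i)))) : ℝ))
      (-1) hP ht
    have hc : ((-1 : ℝ) ^ (k * t₁ + 1)) *
        (((((-1) * Equiv.Perm.sign π : ℤˣ) : ℤ) : ℝ)) = 1 := by
      rw [hπdef, sign_piB]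
      have hu : ((-1) * ((-1 : ℤˣ) ^ (t₁ * k))) = (-1 : ℤˣ) ^ (1 + t₁ * k) := by
        rw [pow_add, pow_one]
      rw [hu]
      push_cast
      rw [← pow_add]
      exact Even.neg_one_pow ⟨k * t₁ + 1, by ring⟩
    symm
    calc ((-1 : ℝ) ^ (k * t₁ + 1)) •
          reindex (by omega : (k + t₁) + t₂ = t₁ + (k + t₂))
            (wedge (fun Y Y' => innh Y Y') (wedge (fun X Y => act X Y) ⇑A ⇑B₁) ⇑B₂) v
        = ((-1 : ℝ) ^ (k * t₁ + 1)) •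
            (wedge (fun Y Y' => innh Y Y') (wedge (fun X Y => act X Y) ⇑A ⇑B₁) ⇑B₂
              (fun i => v (Fin.cast h₂pf i))) := rfl
      _ = ((-1 : ℝ) ^ (k * t₁ + 1)) •
            ((((-1) * Equiv.Perm.sign π : ℤˣ) : ℤ) •
              ∑ ρ : Equiv.Perm (Fin (t₁ + (k + t₂))), if TS3R t₁ k t₂ ρ then
                (Equiv.Perm.sign ρ : ℤ) • (innh (B₁ fun i => v (ρ (castAdd (k + t₂) i)))
                  (act (A fun i => v (ρ (natAdd t₁ (castAdd t₂ i))))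
                    (B₂ fun i => v (ρ (natAdd t₁ (natAdd k i))))) : ℝ)
              else 0) := by
            rw [expandL (fun (Y Y' : h) => (innh Y Y' : ℝ)) (fun (X : g) (Y : h) => act X Y)
              hadd2 hsm2 ⇑A ⇑B₁ ⇑B₂ (fun i => v (Fin.cast h₂pf i))]
            rw [tr]
      _ = ∑ ρ : Equiv.Perm (Fin (t₁ + (k + t₂))), if TS3R t₁ k t₂ ρ then
                (Equiv.Perm.sign ρ : ℤ) • (innh (B₁ fun i => v (ρ (castAdd (k + t₂) i)))
                  (act (A fun i => v (ρ (natAdd t₁ (castAdd t₂ i))))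
                    (B₂ fun i => v (ρ (natAdd t₁ (natAdd k i))))) : ℝ)
              else 0 := by
            rw [smul_eq_mul, zsmul_eq_mul, ← mul_assoc, hc, one_mul]
      _ = wedge (fun Y Y' => innh Y Y') ⇑B₁ (wedge (fun X Y => act X Y) ⇑A ⇑B₂) v :=
            (expandR (fun (Y Y' : h) => (innh Y Y' : ℝ)) (fun (X : g) (Y : h) => act X Y)
              hadd1 hsm1 ⇑B₁ ⇑A ⇑B₂ v).symm
end

section
/- Let g and h be real vector spaces, ▷ : g × h → h a bilinear action, ⟨,⟩_g a symmetric bilinear form on g, ⟨,⟩_h a symmetric bilinear form on h, and σ : h × h → g a bilinear antisymmetric map (σ(Y', Y) = − σ(Y, Y')) satisfying ⟨σ(Y, Y'), X⟩_g = − ⟨Y, X ▷ Y'⟩_h for all X ∈ g, Y, Y' ∈ h. Define the bilinear map σ̄ on forms as the wedge via σ: σ̄(B₁, B₂) := B₁ ∧^σ B₂. Then for a real vector space V and alternating multilinear maps A : V^k → g, B₁ : V^{t₁} → h, B₂ : V^{t₂} → h, one has ⟨σ̄(B₁, B₂), A⟩ = (−1)^{k t₂ + 1} ⟨B₁, A ∧^▷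 B₂⟩ and ⟨A, σ̄(B₁, B₂)⟩ = (−1)^{t₁ t₂ + 1} ⟨A ∧^▷ B₂, B₁⟩ as alternating (k+t₁+t₂)-linear maps V^{k+t₁+t₂} → ℝ. -/
namespace SigmaBarAux

open Equiv Fin

/-- Embed a permutation of `Fin m` into `Fin (m+n)`, acting on the first block. -/
def padRight {m : ℕ} (n : ℕ) (τ : Equiv.Perm (Fin m)) : Equiv.Perm (Fin (m + n)) :=
  finSumFinEquiv.permCongr (Equiv.Perm.sumCongr τ (Equiv.refl (Fin n)))

/-- Embed a permutation of `Fin n` into `Fin (m+n)`, acting on the last block. -/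
def padLeft (m : ℕ) {n : ℕ} (τ : Equiv.Perm (Fin n)) : Equiv.Perm (Fin (m + n)) :=
  finSumFinEquiv.permCongr (Equiv.Perm.sumCongr (Equiv.refl (Fin m)) τ)

@[simp] lemma padRight_castAdd {m n : ℕ} (τ : Equiv.Perm (Fin m)) (i : Fin m) :
    padRight n τ (Fin.castAdd n i) = Fin.castAdd n (τ i) := by
  simp [padRight]

@[simp] lemma padRight_natAdd {m n : ℕ} (τ : Equiv.Perm (Fin m)) (i : Fin n) :
    padRight n τ (Fin.natAdd m i) = Fin.natAdd m i := by
  simp [padRight]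

@[simp] lemma padLeft_castAdd {m n : ℕ} (τ : Equiv.Perm (Fin n)) (i : Fin m) :
    padLeft m τ (Fin.castAdd n i) = Fin.castAdd n i := by
  simp [padLeft]

@[simp] lemma padLeft_natAdd {m n : ℕ} (τ : Equiv.Perm (Fin n)) (i : Fin n) :
    padLeft m τ (Fin.natAdd m i) = Fin.natAdd m (τ i) := by
  simp [padLeft]

lemma padRight_mul {m n : ℕ} (τ τ' : Equiv.Perm (Fin m)) :
    padRight n (τ * τ') = padRight n τ * padRight n τ' := by
  apply Equiv.ext; intro x
  refine Fin.addCases (fun i => ?_) (fun i => ?_) x <;>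
    simp [Equiv.Perm.mul_apply]

lemma padLeft_mul {m n : ℕ} (τ τ' : Equiv.Perm (Fin n)) :
    padLeft m (τ * τ') = padLeft m τ * padLeft m τ' := by
  apply Equiv.ext; intro x
  refine Fin.addCases (fun i => ?_) (fun i => ?_) x <;>
    simp [Equiv.Perm.mul_apply]

@[simp] lemma padRight_one {m n : ℕ} : padRight n (1 : Equiv.Perm (Fin m)) = 1 := by
  apply Equiv.ext; intro x
  refine Fin.addCases (fun i => ?_) (fun i => ?_) x <;> simp

@[simp] lemma padLeft_one {m n : ℕ} : padLeft m (1 : Equiv.Perm (Fin n)) = 1 := by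
  apply Equiv.ext; intro x
  refine Fin.addCases (fun i => ?_) (fun i => ?_) x <;> simp

@[simp] lemma sign_padRight {m n : ℕ} (τ : Equiv.Perm (Fin m)) :
    Equiv.Perm.sign (padRight n τ) = Equiv.Perm.sign τ := by
  simp [padRight, Equiv.Perm.sign_permCongr, Equiv.Perm.sign_sumCongr]

@[simp] lemma sign_padLeft {m n : ℕ} (τ : Equiv.Perm (Fin n)) :
    Equiv.Perm.sign (padLeft m τ) = Equiv.Perm.sign τ := by
  simp [padLeft, Equiv.Perm.sign_permCongr, Equiv.Perm.sign_sumCongr]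

/-- uniqueness of the sorting permutation for injective tuples -/
lemma sort_unique {n : ℕ} {α : Type*} [LinearOrder α] {f : Fin n → α}
    (hf : Function.Injective f) {σ : Equiv.Perm (Fin n)} (h : Monotone (f ∘ σ)) :
    σ = Tuple.sort f := by
  rw [Tuple.eq_sort_iff]
  refine ⟨h, fun i j hij hfe => ?_⟩
  exact absurd (σ.injective (hf hfe)) (by simp [Fin.ext_iff]; omega)








/-- a 3-block shuffle -/
def Sh3 (a b c : ℕ) (ρ : Equiv.Perm (Fin (a + b + c))) : Prop :=
  (∀ i j : Fin a, i < j →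
      ρ (Fin.castAdd c (Fin.castAdd b i)) < ρ (Fin.castAdd c (Fin.castAdd b j))) ∧
  (∀ i j : Fin b, i < j →
      ρ (Fin.castAdd c (Fin.natAdd a i)) < ρ (Fin.castAdd c (Fin.natAdd a j))) ∧
  (∀ i j : Fin c, i < j → ρ (Fin.natAdd (a + b) i) < ρ (Fin.natAdd (a + b) j))

instance (a b c : ℕ) (ρ : Equiv.Perm (Fin (a + b + c))) : Decidable (Sh3 a b c ρ) := by
  unfold Sh3; infer_instance

/-- triple-shuffle sum -/
def tsum {V E1 E2 E3 W : Type*} [AddCommGroup W] (φ : E1 → E2 → E3 → W) {a b c : ℕ}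
    (A1 : (Fin a → V) → E1) (A2 : (Fin b → V) → E2) (A3 : (Fin c → V) → E3) :
    (Fin (a + b + c) → V) → W :=
  fun v => ∑ ρ : Equiv.Perm (Fin (a + b + c)),
    if Sh3 a b c ρ then
      (Equiv.Perm.sign ρ : ℤ) •
        φ (A1 fun i => v (ρ (Fin.castAdd c (Fin.castAdd b i))))
          (A2 fun i => v (ρ (Fin.castAdd c (Fin.natAdd a i))))
          (A3 fun i => v (ρ (Fin.natAdd (a + b) i)))
    else 0

lemma tsum_neg {V E1 E2 E3 W : Type*} [AddCommGroup W] (φ : E1 → E2 → E3 → W) {a b c : ℕ}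
    (A1 : (Fin a → V) → E1) (A2 : (Fin b → V) → E2) (A3 : (Fin c → V) → E3) :
    tsum (fun x y z => -(φ x y z)) A1 A2 A3 = -(tsum φ A1 A2 A3) := by
  funext v
  simp only [tsum, Pi.neg_apply, ← Finset.sum_neg_distrib]
  refine Finset.sum_congr rfl fun ρ _ => ?_
  split <;> simp

/-- the rotation-by-`b` permutation of `Fin (c+b)` -/
def rotb (c b : ℕ) : Equiv.Perm (Fin (c + b)) :=
  finAddFlip.trans (finCongr (Nat.add_comm b c))

lemma rotb_val (c b : ℕ) (x : Fin (c + b)) :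
    (rotb c b x : ℕ) = (x.val + b) % (c + b) := by
  rcases lt_or_ge x.val c with hx | hx
  · rw [rotb, Equiv.trans_apply, finAddFlip_apply_mk_left hx]
    simp only [finCongr_apply, Fin.coe_cast]
    rw [Nat.mod_eq_of_lt (by omega)]; omega
  · rw [rotb, Equiv.trans_apply, finAddFlip_apply_mk_right hx x.isLt]
    simp only [finCongr_apply, Fin.coe_cast]
    have : x.val + b = (x.val - c) + (c + b) := by omega
    rw [this, Nat.add_mod_right, Nat.mod_eq_of_lt (by omega)]

lemma finRotate_pow_val (n m : ℕ) (x : Fin (n + 1)) :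
    (((finRotate (n + 1)) ^ m) x : ℕ) = (x.val + m) % (n + 1) := by
  induction m with
  | zero => simp [Nat.mod_eq_of_lt x.isLt]
  | succ m ih =>
    rw [pow_succ', Equiv.Perm.mul_apply, finRotate_succ_apply]
    have h1 : ∀ y : Fin (n + 1), ((y + 1 : Fin (n + 1)) : ℕ) = (y.val + 1 % (n + 1)) % (n + 1) := by
      intro y; rw [Fin.add_def]; rfl
    rw [h1, ih, ← Nat.add_mod, Nat.add_assoc]

lemma rotb_eq_pow (c b : ℕ) (h : c + b ≠ 0) :
    rotb c b = (finRotate (c + b)) ^ b := by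
  obtain ⟨n, hn⟩ : ∃ n, c + b = n + 1 := ⟨c + b - 1, by omega⟩
  apply Equiv.ext; intro x
  rw [Fin.ext_iff, rotb_val]
  revert x
  rw [hn]
  intro x
  rw [finRotate_pow_val]

lemma sign_rotb (c b : ℕ) : Equiv.Perm.sign (rotb c b) = (-1) ^ (b * c) := by
  rcases Nat.eq_zero_or_pos (c + b) with h | h
  · have hb : b = 0 := by omega
    have : rotb c b = 1 := by
      apply Equiv.ext; intro x; exact absurd x.isLt (by omega)
    rw [this, hb]; simp
  · rw [rotb_eq_pow c b (by omega), map_pow]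
    obtain ⟨n, hn⟩ : ∃ n, c + b = n + 1 := ⟨c + b - 1, by omega⟩
    rw [hn, sign_finRotate, ← pow_mul]
    -- (-1)^(n*b) = (-1)^(b*c) in ℤˣ
    have hpar : Even (n * b + b * c) := by
      rcases Nat.even_or_odd b with hb | hb
      · exact (hb.mul_left n).add (hb.mul_right c)
      · have : Even (n + c) := by
          obtain ⟨t, ht⟩ := hb
          exact ⟨c + t, by omega⟩
        have : Even ((n + c) * b) := this.mul_right b
        have heq : (n + c) * b = n * b + b * c := by ring
        rwa [heq] at this
    have h1 : ((-1 : ℤˣ) ^ (n * b)) * ((-1) ^ (b * c)) = 1 := by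
      rw [← pow_add]; exact Even.neg_one_pow hpar
    have h2 : ((-1 : ℤˣ) ^ (b * c)) * ((-1) ^ (b * c)) = 1 := by
      rw [← pow_add]; exact Even.neg_one_pow ⟨b * c, rfl⟩
    calc (-1 : ℤˣ) ^ (n * b) = (-1) ^ (n*b) * ((-1) ^ (b*c) * (-1) ^ (b*c)) := by rw [h2, mul_one]
      _ = ((-1) ^ (n*b) * (-1) ^ (b*c)) * (-1) ^ (b*c) := by rw [mul_assoc]
      _ = (-1) ^ (b * c) := by rw [h1, one_mul]



lemma shuffle_strictMono_cast {k l : ℕ} {σ : Equiv.Perm (Fin (k + l))}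
    (h : IsShuffle k l σ) : StrictMono (fun i : Fin k => σ (Fin.castAdd l i)) :=
  fun _ _ hij => h.1 _ _ hij

theorem wedge_wedge_left {V E F G H W : Type*} [AddCommGroup G] [AddCommGroup W]
    (ν : E → F → G) (μ : G → H → W)
    (hadd : ∀ x y z, μ (x + y) z = μ x z + μ y z)
    (hsmul : ∀ (n : ℤ) (x : G) (z : H), μ (n • x) z = n • μ x z)
    {a b c : ℕ} (A1 : (Fin a → V) → E) (A2 : (Fin b → V) → F) (A3 : (Fin c → V) → H) :
    wedge μ (wedge ν A1 A2) A3 = tsum (fun x y z => μ (ν x y) z) A1 A2 A3 := by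
  funext v
  have h0 : ∀ z, μ 0 z = 0 := fun z => by have := hsmul 0 0 z; simpa using this
  simp only [wedge, tsum]
  have step1 : ∀ σ : Equiv.Perm (Fin (a + b + c)),
      (if IsShuffle (a + b) c σ then (Equiv.Perm.sign σ : ℤ) •
        μ (∑ τ : Equiv.Perm (Fin (a + b)), if IsShuffle a b τ then (Equiv.Perm.sign τ : ℤ) •
              ν (A1 fun i => v (σ (Fin.castAdd c (τ (Fin.castAdd b i)))))
                (A2 fun i => v (σ (Fin.castAdd c (τ (Fin.natAdd a i))))) else 0)
          (A3 fun i => v (σ (Fin.natAdd (a + b) i)))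
      else 0)
      = ∑ τ : Equiv.Perm (Fin (a + b)),
          if IsShuffle (a + b) c σ ∧ IsShuffle a b τ then
            ((Equiv.Perm.sign σ : ℤ) * (Equiv.Perm.sign τ : ℤ)) •
              μ (ν (A1 fun i => v (σ (Fin.castAdd c (τ (Fin.castAdd b i)))))
                   (A2 fun i => v (σ (Fin.castAdd c (τ (Fin.natAdd a i))))))
                (A3 fun i => v (σ (Fin.natAdd (a + b) i)))
          else 0 := by
    intro σ
    by_cases hσ : IsShuffle (a + b) c σ
    · rw [if_pos hσ,
        show ∀ (gf : Equiv.Perm (Fin (a + b)) → G) (z : H),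
            μ (∑ τ, gf τ) z = ∑ τ, μ (gf τ) z from fun gf z =>
          map_sum (AddMonoidHom.mk' (fun x => μ x z) (fun x y => hadd x y z)) _ _,
        Finset.smul_sum]
      refine Finset.sum_congr rfl fun τ _ => ?_
      by_cases hτ : IsShuffle a b τ
      · rw [if_pos hτ, if_pos ⟨hσ, hτ⟩]
        show (Equiv.Perm.sign σ : ℤ) • μ ((Equiv.Perm.sign τ : ℤ) • _) _ = _
        rw [hsmul, smul_smul]
      · rw [if_neg hτ, if_neg (fun hc => hτ hc.2)]
        show (Equiv.Perm.sign σ : ℤ) • μ 0 _ = (0 : W)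
        rw [h0, smul_zero]
    · rw [if_neg hσ]
      exact (Finset.sum_eq_zero fun τ _ => if_neg (fun hc => hσ hc.1)).symm
  rw [Finset.sum_congr rfl fun σ _ => step1 σ, ← Finset.sum_product']
  rw [← Finset.sum_filter, ← Finset.sum_filter]
  refine Finset.sum_nbij'
    (i := fun p => p.1 * padRight c p.2)
    (j := fun ρ => (ρ * padRight c (Tuple.sort fun x => ρ (Fin.castAdd c x)),
      (Tuple.sort fun x => ρ (Fin.castAdd c x))⁻¹))
    ?_ ?_ ?_ ?_ ?_
  · -- forward membership
    rintro ⟨σ, τ⟩ hp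
    simp only [Finset.mem_filter, Finset.mem_product, Finset.mem_univ, true_and, and_self, and_true] at hp ⊢
    obtain ⟨hσ, hτ⟩ := hp
    refine ⟨fun i j hij => ?_, fun i j hij => ?_, fun i j hij => ?_⟩ <;>
      simp only [Equiv.Perm.mul_apply, padRight_castAdd, padRight_natAdd]
    · exact hσ.1 _ _ (hτ.1 _ _ hij)
    · exact hσ.1 _ _ (hτ.2 _ _ hij)
    · exact hσ.2 _ _ hij
  · -- backward membership
    intro ρ hρ
    simp only [Finset.mem_filter, Finset.mem_product, Finset.mem_univ, true_and, and_self, and_true] at hρ ⊢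
    set f : Fin (a + b) → Fin (a + b + c) := fun x => ρ (Fin.castAdd c x) with hf
    have hfinj : Function.Injective f := fun x y hxy => Fin.castAdd_inj.mp (ρ.injective hxy)
    have hstrict : StrictMono (f ∘ Tuple.sort f) :=
      (Tuple.monotone_sort f).strictMono_of_injective
        (hfinj.comp (Tuple.sort f).injective)
    constructor
    · -- σ component is a shuffle
      refine ⟨fun i j hij => ?_, fun i j hij => ?_⟩
      · simp only [Equiv.Perm.mul_apply, padRight_castAdd]; exact hstrict hij
      · simpa only [Equiv.Perm.mul_apply, padRight_natAdd] using hρ.2.2 i j hij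
    · -- τ component is a shuffle
      refine ⟨fun i j hij => ?_, fun i j hij => ?_⟩
      · rw [← hstrict.lt_iff_lt]
        simpa [Function.comp_def, Equiv.Perm.coe_inv, Equiv.apply_symm_apply] using hρ.1 i j hij
      · rw [← hstrict.lt_iff_lt]
        simpa [Function.comp_def, Equiv.Perm.coe_inv, Equiv.apply_symm_apply] using hρ.2.1 i j hij
  · -- left inverse
    rintro ⟨σ, τ⟩ hp
    simp only [Finset.mem_filter, Finset.mem_product, Finset.mem_univ, true_and] at hp
    obtain ⟨hσ, hτ⟩ := hp
    have hfun : (fun x => (σ * padRight c τ) (Fin.castAdd c x))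
        = fun x => σ (Fin.castAdd c (τ x)) := by
      funext x; simp [Equiv.Perm.mul_apply]
    have hginj : Function.Injective (fun x => σ (Fin.castAdd c (τ x))) :=
      fun x y hxy => τ.injective (Fin.castAdd_inj.mp (σ.injective hxy))
    have hsort : τ⁻¹ = Tuple.sort (fun x => σ (Fin.castAdd c (τ x))) := by
      apply sort_unique hginj
      have : ((fun x => σ (Fin.castAdd c (τ x))) ∘ ⇑τ⁻¹)
          = fun x => σ (Fin.castAdd c x) := by
        funext x; simp [Function.comp_def, Equiv.Perm.coe_inv, Equiv.apply_symm_apply]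
      rw [this]
      exact ((shuffle_strictMono_cast hσ).monotone)
    simp only [hfun, ← hsort]
    ext : 1
    · show σ * padRight c τ * padRight c τ⁻¹ = σ
      rw [mul_assoc, ← padRight_mul, mul_inv_cancel, padRight_one, mul_one]
    · show (τ⁻¹)⁻¹ = τ
      exact inv_inv τ
  · -- right inverse
    intro ρ _
    show ρ * padRight c _ * padRight c _⁻¹ = ρ
    rw [mul_assoc, ← padRight_mul, mul_inv_cancel, padRight_one, mul_one]
  · -- summands agree
    rintro ⟨σ, τ⟩ hp
    simp only [Equiv.Perm.mul_apply, padRight_castAdd, padRight_natAdd, map_mul,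
      sign_padRight, Units.val_mul]

lemma natAdd_inj' {m n : ℕ} {x y : Fin n} (h : Fin.natAdd m x = Fin.natAdd m y) : x = y := by
  have := congrArg Fin.val h
  simp only [Fin.coe_natAdd] at this
  exact Fin.ext (by omega)

theorem wedge_wedge_right {V E F G H W : Type*} [AddCommGroup G] [AddCommGroup W]
    (μ : E → G → W) (ν : F → H → G)
    (hadd : ∀ x y z, μ x (y + z) = μ x y + μ x z)
    (hsmul : ∀ (n : ℤ) (x : E) (y : G), μ x (n • y) = n • μ x y)
    {a b c : ℕ} (A1 : (Fin a → V) → E) (A2 : (Fin b → V) → F) (A3 : (Fin c → V) → H) :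
    wedge μ A1 (wedge ν A2 A3)
      = reindex (by omega : a + b + c = a + (b + c))
          (tsum (fun x y z => μ x (ν y z)) A1 A2 A3) := by
  have pf : a + b + c = a + (b + c) := by omega
  have heLT : ∀ {x y : Fin (a + (b + c))}, (finCongr pf.symm : Fin (a + (b + c)) ≃ Fin (a + b + c)) x < (finCongr pf.symm : Fin (a + (b + c)) ≃ Fin (a + b + c)) y ↔ x < y := fun {x y} => by
    constructor <;> exact fun h => h
  have heSLT : ∀ {x y : Fin (a + b + c)}, (finCongr pf.symm : Fin (a + (b + c)) ≃ Fin (a + b + c)).symm x < (finCongr pf.symm : Fin (a + (b + c)) ≃ Fin (a + b + c)).symm y ↔ x < y := fun {x y} => by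
    rw [← heLT, Equiv.apply_symm_apply, Equiv.apply_symm_apply]
  have e1 : ∀ i : Fin a, (finCongr pf.symm : Fin (a + (b + c)) ≃ Fin (a + b + c)) (Fin.castAdd (b + c) i) = Fin.castAdd c (Fin.castAdd b i) :=
    fun i => Fin.ext (by simp)
  have e2 : ∀ i : Fin b, (finCongr pf.symm : Fin (a + (b + c)) ≃ Fin (a + b + c)) (Fin.natAdd a (Fin.castAdd c i)) = Fin.castAdd c (Fin.natAdd a i) :=
    fun i => Fin.ext (by simp)
  have e3 : ∀ i : Fin c, (finCongr pf.symm : Fin (a + (b + c)) ≃ Fin (a + b + c)) (Fin.natAdd a (Fin.natAdd b i)) = Fin.natAdd (a + b) i :=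
    fun i => Fin.ext (by simp [Nat.add_assoc])
  have s1 : ∀ i : Fin a, (finCongr pf.symm : Fin (a + (b + c)) ≃ Fin (a + b + c)).symm (Fin.castAdd c (Fin.castAdd b i)) = Fin.castAdd (b + c) i :=
    fun i => by rw [← e1 i, Equiv.symm_apply_apply]
  have s2 : ∀ i : Fin b, (finCongr pf.symm : Fin (a + (b + c)) ≃ Fin (a + b + c)).symm (Fin.castAdd c (Fin.natAdd a i)) = Fin.natAdd a (Fin.castAdd c i) :=
    fun i => by rw [← e2 i, Equiv.symm_apply_apply]
  have s3 : ∀ i : Fin c, (finCongr pf.symm : Fin (a + (b + c)) ≃ Fin (a + b + c)).symm (Fin.natAdd (a + b) i) = Fin.natAdd a (Fin.natAdd b i) :=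
    fun i => by rw [← e3 i, Equiv.symm_apply_apply]
  have hcast : ∀ x : Fin (a + (b + c)), Fin.cast pf ((finCongr pf.symm : Fin (a + (b + c)) ≃ Fin (a + b + c)) x) = x := fun x => Fin.ext (by simp)
  funext v
  have h0 : ∀ z, μ z (0 : G) = 0 := fun z => by have := hsmul 0 z 0; simpa using this
  simp only [wedge, tsum, reindex]
  have step1 : ∀ σ : Equiv.Perm (Fin (a + (b + c))),
      (if IsShuffle a (b + c) σ then (Equiv.Perm.sign σ : ℤ) •
        μ (A1 fun i => v (σ (Fin.castAdd (b + c) i)))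
          (∑ τ : Equiv.Perm (Fin (b + c)), if IsShuffle b c τ then (Equiv.Perm.sign τ : ℤ) •
              ν (A2 fun i => v (σ (Fin.natAdd a (τ (Fin.castAdd c i)))))
                (A3 fun i => v (σ (Fin.natAdd a (τ (Fin.natAdd b i))))) else 0)
      else 0)
      = ∑ τ : Equiv.Perm (Fin (b + c)),
          if IsShuffle a (b + c) σ ∧ IsShuffle b c τ then
            ((Equiv.Perm.sign σ : ℤ) * (Equiv.Perm.sign τ : ℤ)) •
              μ (A1 fun i => v (σ (Fin.castAdd (b + c) i)))
                (ν (A2 fun i => v (σ (Fin.natAdd a (τ (Fin.castAdd c i)))))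
                   (A3 fun i => v (σ (Fin.natAdd a (τ (Fin.natAdd b i))))))
          else 0 := by
    intro σ
    by_cases hσ : IsShuffle a (b + c) σ
    · rw [if_pos hσ,
        show ∀ (x : E) (gf : Equiv.Perm (Fin (b + c)) → G),
            μ x (∑ τ, gf τ) = ∑ τ, μ x (gf τ) from fun x gf =>
          map_sum (AddMonoidHom.mk' (fun y => μ x y) (fun y z => hadd x y z)) _ _,
        Finset.smul_sum]
      refine Finset.sum_congr rfl fun τ _ => ?_
      by_cases hτ : IsShuffle b c τ
      · rw [if_pos hτ, if_pos ⟨hσ, hτ⟩]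
        show (Equiv.Perm.sign σ : ℤ) • μ _ ((Equiv.Perm.sign τ : ℤ) • _) = _
        rw [hsmul, smul_smul]
      · rw [if_neg hτ, if_neg (fun hc => hτ hc.2)]
        show (Equiv.Perm.sign σ : ℤ) • μ _ (0 : G) = (0 : W)
        rw [h0, smul_zero]
    · rw [if_neg hσ]
      exact (Finset.sum_eq_zero fun τ _ => if_neg (fun hc => hσ hc.1)).symm
  rw [Finset.sum_congr rfl fun σ _ => step1 σ, ← Finset.sum_product']
  rw [← Finset.sum_filter, ← Finset.sum_filter]
  refine Finset.sum_nbij'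
    (i := fun p => (finCongr pf.symm : Fin (a + (b + c)) ≃ Fin (a + b + c)).permCongr (p.1 * padLeft a p.2))
    (j := fun ρ => ((finCongr pf.symm : Fin (a + (b + c)) ≃ Fin (a + b + c)).symm.permCongr ρ *
        padLeft a (Tuple.sort fun x => (finCongr pf.symm : Fin (a + (b + c)) ≃ Fin (a + b + c)).symm.permCongr ρ (Fin.natAdd a x)),
      (Tuple.sort fun x => (finCongr pf.symm : Fin (a + (b + c)) ≃ Fin (a + b + c)).symm.permCongr ρ (Fin.natAdd a x))⁻¹))
    ?_ ?_ ?_ ?_ ?_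
  · -- forward membership
    rintro ⟨σ, τ⟩ hp
    simp only [Finset.mem_filter, Finset.mem_product, Finset.mem_univ, true_and,
      and_self, and_true] at hp ⊢
    obtain ⟨hσ, hτ⟩ := hp
    refine ⟨fun i j hij => ?_, fun i j hij => ?_, fun i j hij => ?_⟩ <;>
      simp only [Equiv.permCongr_apply, Equiv.Perm.mul_apply, s1, s2, s3,
        padLeft_castAdd, padLeft_natAdd, heLT]
    · exact hσ.1 _ _ hij
    · exact hσ.2 _ _ (hτ.1 _ _ hij)
    · exact hσ.2 _ _ (hτ.2 _ _ hij)
  · -- backward membership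
    intro ρ hρ
    simp only [Finset.mem_filter, Finset.mem_product, Finset.mem_univ, true_and,
      and_self, and_true] at hρ ⊢
    set q : Equiv.Perm (Fin (a + (b + c))) := (finCongr pf.symm : Fin (a + (b + c)) ≃ Fin (a + b + c)).symm.permCongr ρ with hq
    set f : Fin (b + c) → Fin (a + (b + c)) := fun x => q (Fin.natAdd a x) with hf
    have hfinj : Function.Injective f := fun x y hxy => natAdd_inj' (q.injective hxy)
    have hstrict : StrictMono (f ∘ Tuple.sort f) :=
      (Tuple.monotone_sort f).strictMono_of_injective
        (hfinj.comp (Tuple.sort f).injective)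
    have hqapp : ∀ x, q x = (finCongr pf.symm : Fin (a + (b + c)) ≃ Fin (a + b + c)).symm (ρ ((finCongr pf.symm : Fin (a + (b + c)) ≃ Fin (a + b + c)) x)) := fun x => by
      rw [hq]; rfl
    constructor
    · refine ⟨fun i j hij => ?_, fun i j hij => ?_⟩
      · simp only [Equiv.Perm.mul_apply, padLeft_castAdd]
        rw [hqapp, hqapp, e1, e1, heSLT]
        exact hρ.1 i j hij
      · simp only [Equiv.Perm.mul_apply, padLeft_natAdd]; exact hstrict hij
    · refine ⟨fun i j hij => ?_, fun i j hij => ?_⟩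
      · rw [← hstrict.lt_iff_lt]
        have h1 : ∀ i : Fin b, (f ∘ Tuple.sort f) ((Tuple.sort f)⁻¹ (Fin.castAdd c i))
            = (finCongr pf.symm : Fin (a + (b + c)) ≃ Fin (a + b + c)).symm (ρ (Fin.castAdd c (Fin.natAdd a i))) := fun i => by
          simp only [Function.comp_apply, Equiv.Perm.coe_inv, Equiv.apply_symm_apply, hf, hqapp, e2]
        rw [h1, h1, heSLT]
        exact hρ.2.1 i j hij
      · rw [← hstrict.lt_iff_lt]
        have h1 : ∀ i : Fin c, (f ∘ Tuple.sort f) ((Tuple.sort f)⁻¹ (Fin.natAdd b i))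
            = (finCongr pf.symm : Fin (a + (b + c)) ≃ Fin (a + b + c)).symm (ρ (Fin.natAdd (a + b) i)) := fun i => by
          simp only [Function.comp_apply, Equiv.Perm.coe_inv, Equiv.apply_symm_apply, hf, hqapp, e3]
        rw [h1, h1, heSLT]
        exact hρ.2.2 i j hij
  · -- left inverse
    rintro ⟨σ, τ⟩ hp
    simp only [Finset.mem_filter, Finset.mem_product, Finset.mem_univ, true_and,
      and_self, and_true] at hp
    obtain ⟨hσ, hτ⟩ := hp
    have hback : (finCongr pf.symm : Fin (a + (b + c)) ≃ Fin (a + b + c)).symm.permCongr ((finCongr pf.symm : Fin (a + (b + c)) ≃ Fin (a + b + c)).permCongr (σ * padLeft a τ)) = σ * padLeft a τ := by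
      apply Equiv.ext; intro x; simp [Equiv.permCongr_apply]
    have hfun : (fun x => (σ * padLeft a τ) (Fin.natAdd a x))
        = fun x => σ (Fin.natAdd a (τ x)) := by
      funext x; simp [Equiv.Perm.mul_apply]
    have hginj : Function.Injective (fun x => σ (Fin.natAdd a (τ x))) :=
      fun x y hxy => τ.injective (natAdd_inj' (σ.injective hxy))
    have hsort : τ⁻¹ = Tuple.sort (fun x => σ (Fin.natAdd a (τ x))) := by
      apply sort_unique hginj
      have : ((fun x => σ (Fin.natAdd a (τ x))) ∘ ⇑τ⁻¹)
          = fun x => σ (Fin.natAdd a x) := by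
        funext x; simp [Function.comp_def, Equiv.Perm.coe_inv, Equiv.apply_symm_apply]
      rw [this]
      exact StrictMono.monotone fun x y hxy => hσ.2 x y hxy
    simp only [hback, hfun, ← hsort]
    ext : 1
    · show σ * padLeft a τ * padLeft a τ⁻¹ = σ
      rw [mul_assoc, ← padLeft_mul, mul_inv_cancel, padLeft_one, mul_one]
    · show (τ⁻¹)⁻¹ = τ
      exact inv_inv τ
  · -- right inverse
    intro ρ _
    show (finCongr pf.symm : Fin (a + (b + c)) ≃ Fin (a + b + c)).permCongr ((finCongr pf.symm : Fin (a + (b + c)) ≃ Fin (a + b + c)).symm.permCongr ρ * padLeft a _ * padLeft a _⁻¹) = ρ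
    rw [mul_assoc, ← padLeft_mul, mul_inv_cancel, padLeft_one, mul_one]
    apply Equiv.ext; intro x; simp [Equiv.permCongr_apply]
  · -- summands agree
    rintro ⟨σ, τ⟩ hp
    simp only [Equiv.permCongr_apply, Equiv.Perm.mul_apply, s1, s2, s3, hcast,
      padLeft_castAdd, padLeft_natAdd, Equiv.Perm.sign_permCongr, map_mul,
      sign_padLeft, Units.val_mul]

theorem tsum_swap23 {V E1 E2 E3 W : Type*} [AddCommGroup W] (φ : E1 → E2 → E3 → W)
    {a b c : ℕ} (A1 : (Fin a → V) → E1) (A2 : (Fin b → V) → E2) (A3 : (Fin c → V) → E3) :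
    tsum φ A1 A2 A3 = ((-1 : ℤ) ^ (b * c)) •
      reindex (by omega : a + c + b = a + b + c) (tsum (fun x z y => φ x y z) A1 A3 A2) := by
  have pf : a + c + b = a + b + c := by omega
  have pfE : a + (c + b) = a + c + b := by omega
  -- the block-rotation permutation of `Fin (a+c+b)`
  set w : Equiv.Perm (Fin (a + c + b)) :=
    (finSumFinEquiv.trans (finCongr pfE)).permCongr
      (Equiv.Perm.sumCongr 1 (rotb c b)) with hw
  have c1 : ∀ i : Fin a, Fin.cast pfE.symm (Fin.castAdd b (Fin.castAdd c i))
      = Fin.castAdd (c + b) i := fun i => Fin.ext (by simp)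
  have c2 : ∀ i : Fin c, Fin.cast pfE.symm (Fin.castAdd b (Fin.natAdd a i))
      = Fin.natAdd a (Fin.castAdd b i) := fun i => Fin.ext (by simp)
  have c3 : ∀ i : Fin b, Fin.cast pfE.symm (Fin.natAdd (a + c) i)
      = Fin.natAdd a (Fin.natAdd c i) := fun i => Fin.ext (by simp [Nat.add_assoc])
  have r2 : ∀ i : Fin c, rotb c b (Fin.castAdd b i) = ⟨b + i.val, by omega⟩ := fun i => by
    apply Fin.ext
    rw [rotb_val]
    simp only [Fin.coe_castAdd]
    rw [Nat.mod_eq_of_lt (by omega)]; omega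
  have r3 : ∀ i : Fin b, rotb c b (Fin.natAdd c i) = ⟨i.val, by omega⟩ := fun i => by
    apply Fin.ext
    rw [rotb_val]
    simp only [Fin.coe_natAdd]
    rw [show c + i.val + b = i.val + (c + b) by omega, Nat.add_mod_right,
      Nat.mod_eq_of_lt (by omega)]
  have wapp : ∀ x, w x = Fin.cast pfE (finSumFinEquiv
      ((Equiv.Perm.sumCongr 1 (rotb c b)) (finSumFinEquiv.symm (Fin.cast pfE.symm x)))) :=
    fun x => rfl
  set e : Fin (a + b + c) ≃ Fin (a + c + b) := finCongr pf.symm with he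
  have w1 : ∀ i : Fin a, w (Fin.castAdd b (Fin.castAdd c i)) = Fin.castAdd b (Fin.castAdd c i) :=
    fun i => by
      rw [wapp, c1]
      simp only [finSumFinEquiv_symm_apply_castAdd, Equiv.Perm.sumCongr_apply, Sum.map_inl,
        Equiv.Perm.coe_one, id_eq, finSumFinEquiv_apply_left]
      exact Fin.ext (by simp)
  have w2 : ∀ i : Fin c, w (Fin.castAdd b (Fin.natAdd a i)) = e (Fin.natAdd (a + b) i) :=
    fun i => by
      rw [wapp, c2]
      simp only [finSumFinEquiv_symm_apply_natAdd, Equiv.Perm.sumCongr_apply, Sum.map_inr,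
        finSumFinEquiv_apply_right, r2]
      exact Fin.ext (by simp [he]; omega)
  have w3 : ∀ i : Fin b, w (Fin.natAdd (a + c) i) = e (Fin.castAdd c (Fin.natAdd a i)) :=
    fun i => by
      rw [wapp, c3]
      simp only [finSumFinEquiv_symm_apply_natAdd, Equiv.Perm.sumCongr_apply, Sum.map_inr,
        finSumFinEquiv_apply_right, r3]
      exact Fin.ext (by simp [he])
  have winv1 : ∀ i : Fin a, w⁻¹ (Fin.castAdd b (Fin.castAdd c i))
      = Fin.castAdd b (Fin.castAdd c i) := fun i => by
    conv_lhs => rw [← w1 i]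
    rw [Equiv.Perm.coe_inv, Equiv.symm_apply_apply]
  have winv2 : ∀ i : Fin c, w⁻¹ (e (Fin.natAdd (a + b) i))
      = Fin.castAdd b (Fin.natAdd a i) := fun i => by
    rw [← w2 i, Equiv.Perm.coe_inv, Equiv.symm_apply_apply]
  have winv3 : ∀ i : Fin b, w⁻¹ (e (Fin.castAdd c (Fin.natAdd a i)))
      = Fin.natAdd (a + c) i := fun i => by
    rw [← w3 i, Equiv.Perm.coe_inv, Equiv.symm_apply_apply]
  have heLT : ∀ {x y : Fin (a + b + c)}, e x < e y ↔ x < y := fun {x y} => by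
    constructor <;> exact fun h => h
  have heSLT : ∀ {x y : Fin (a + c + b)}, e.symm x < e.symm y ↔ x < y := fun {x y} => by
    rw [← heLT, Equiv.apply_symm_apply, Equiv.apply_symm_apply]
  have E1 : ∀ i : Fin a, e.symm (Fin.castAdd b (Fin.castAdd c i))
      = Fin.castAdd c (Fin.castAdd b i) := fun i => Fin.ext (by simp [he])
  have E2 : ∀ i : Fin b, e (Fin.castAdd c (Fin.natAdd a i)) = Fin.natAdd (a + c) i ∨ True :=
    fun _ => Or.inr trivial
  have hcast : ∀ x : Fin (a + b + c), Fin.cast pf (e x) = x := fun x => Fin.ext (by simp [he])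
  have hsw : Equiv.Perm.sign w = (-1) ^ (b * c) := by
    rw [hw, Equiv.Perm.sign_permCongr, Equiv.Perm.sign_sumCongr, sign_rotb]
    simp
  funext v
  simp only [tsum, reindex, Pi.smul_apply, Finset.smul_sum, smul_ite, smul_zero]
  rw [← Finset.sum_filter, ← Finset.sum_filter]
  refine Finset.sum_nbij'
    (i := fun ρ => e.permCongr ρ * w)
    (j := fun ρ' => e.symm.permCongr (ρ' * w⁻¹))
    ?_ ?_ ?_ ?_ ?_
  · -- forward membership
    intro ρ hρ
    simp only [Finset.mem_filter, Finset.mem_univ, true_and] at hρ ⊢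
    have iapp : ∀ x, (e.permCongr ρ * w) x = e (ρ (e.symm (w x))) := fun x => rfl
    refine ⟨fun i j hij => ?_, fun i j hij => ?_, fun i j hij => ?_⟩
    · rw [iapp, iapp, w1, w1, E1, E1, heLT]
      exact hρ.1 i j hij
    · rw [iapp, iapp, w2, w2, Equiv.symm_apply_apply, Equiv.symm_apply_apply, heLT]
      exact hρ.2.2 i j hij
    · rw [iapp, iapp, w3, w3, Equiv.symm_apply_apply, Equiv.symm_apply_apply, heLT]
      exact hρ.2.1 i j hij
  · -- backward membership
    intro ρ' hρ'
    simp only [Finset.mem_filter, Finset.mem_univ, true_and] at hρ' ⊢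
    have japp : ∀ x, e.symm.permCongr (ρ' * w⁻¹) x = e.symm (ρ' (w⁻¹ (e x))) := fun x => rfl
    have g1 : ∀ i : Fin a, e (Fin.castAdd c (Fin.castAdd b i))
        = Fin.castAdd b (Fin.castAdd c i) := fun i => by
      rw [← E1 i, Equiv.apply_symm_apply]
    refine ⟨fun i j hij => ?_, fun i j hij => ?_, fun i j hij => ?_⟩
    · rw [japp, japp, g1, g1, winv1, winv1, heSLT]
      exact hρ'.1 i j hij
    · rw [japp, japp, winv3, winv3, heSLT]
      exact hρ'.2.2 i j hij
    · rw [japp, japp]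
      rw [show ∀ i : Fin c, e (Fin.natAdd (a + b) i) = e (Fin.natAdd (a+b) i) from fun _ => rfl]
      rw [winv2, winv2, heSLT]
      exact hρ'.2.1 i j hij
  · -- left inverse
    intro ρ _
    apply Equiv.ext; intro x
    simp [Equiv.permCongr_apply, Equiv.Perm.mul_apply]
  · -- right inverse
    intro ρ' _
    apply Equiv.ext; intro x
    simp [Equiv.permCongr_apply, Equiv.Perm.mul_apply]
  · -- summands agree
    intro ρ hρ
    have iapp : ∀ x, (e.permCongr ρ * w) x = e (ρ (e.symm (w x))) := fun x => rfl
    have harg1 : ∀ i : Fin a, Fin.cast pf ((e.permCongr ρ * w) (Fin.castAdd b (Fin.castAdd c i)))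
        = ρ (Fin.castAdd c (Fin.castAdd b i)) := fun i => by
      rw [iapp, w1, E1, hcast]
    have harg2 : ∀ i : Fin c, Fin.cast pf ((e.permCongr ρ * w) (Fin.castAdd b (Fin.natAdd a i)))
        = ρ (Fin.natAdd (a + b) i) := fun i => by
      rw [iapp, w2, Equiv.symm_apply_apply, hcast]
    have harg3 : ∀ i : Fin b, Fin.cast pf ((e.permCongr ρ * w) (Fin.natAdd (a + c) i))
        = ρ (Fin.castAdd c (Fin.natAdd a i)) := fun i => by
      rw [iapp, w3, Equiv.symm_apply_apply, hcast]
    simp only [harg1, harg2, harg3]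
    rw [map_mul, Equiv.Perm.sign_permCongr, hsw]
    have hcoe : (((Equiv.Perm.sign ρ * (-1) ^ (b * c) : ℤˣ)) : ℤ)
        = (Equiv.Perm.sign ρ : ℤ) * (-1 : ℤ) ^ (b * c) := by
      push_cast; ring
    rw [hcoe, smul_smul]
    congr 1
    have hsq : ((-1 : ℤ) ^ (b * c)) * ((-1 : ℤ) ^ (b * c)) = 1 := by
      rw [← pow_add]; exact Even.neg_one_pow ⟨b * c, rfl⟩
    rw [mul_comm ((Equiv.Perm.sign ρ : ℤ)) _, ← mul_assoc, hsq, one_mul]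

lemma reindex_reindex {V W : Type*} {m n p : ℕ} (h1 : m = n) (h2 : n = p)
    (F : (Fin m → V) → W) : reindex h2 (reindex h1 F) = reindex (h1.trans h2) F := rfl

lemma reindex_zsmul {V : Type*} {m n : ℕ} (h : m = n) (c : ℤ) (F : (Fin m → V) → ℝ) :
    reindex h (c • F) = c • reindex h F := rfl

lemma smul_neg_reindex {V : Type*} {m n : ℕ} (h h' : m = n) (N : ℕ)
    (F : (Fin m → V) → ℝ) :
    ((-1 : ℤ) ^ N) • reindex h (-F) = ((-1 : ℝ) ^ (N + 1)) • reindex h' F := by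
  funext v
  show ((-1 : ℤ) ^ N) • (-(F fun i => v (Fin.cast h i)))
      = ((-1 : ℝ) ^ (N + 1)) • (F fun i => v (Fin.cast h' i))
  have harg : (fun i => v (Fin.cast h i)) = fun i => v (Fin.cast h' i) := rfl
  rw [harg, zsmul_eq_mul, pow_succ, smul_eq_mul]
  push_cast
  ring

end SigmaBarAux


open SigmaBarAux in
/-- For `σ̄(B₁, B₂) := B₁ ∧^σ B₂` with `σ` bilinear antisymmetric satisfying
`⟨σ(Y, Y'), X⟩_g = - ⟨Y, X ▷ Y'⟩_h`, one has
`⟨σ̄(B₁, B₂), A⟩ = (-1)^(k t₂ + 1) ⟨B₁, A ∧^▷ B₂⟩` and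
`⟨A, σ̄(B₁, B₂)⟩ = (-1)^(t₁ t₂ + 1) ⟨A ∧^▷ B₂, B₁⟩`. -/
theorem sigmaBar_inner_identities {g h V : Type*} [AddCommGroup g] [Module ℝ g]
    [AddCommGroup h] [Module ℝ h] [AddCommGroup V] [Module ℝ V]
    (act : g →ₗ[ℝ] h →ₗ[ℝ] h)
    (inng : g →ₗ[ℝ] g →ₗ[ℝ] ℝ) (inng_symm : ∀ X X' : g, inng X X' = inng X' X)
    (innh : h →ₗ[ℝ] h →ₗ[ℝ] ℝ) (innh_symm : ∀ Y Y' : h, innh Y Y' = innh Y' Y)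
    (s : h →ₗ[ℝ] h →ₗ[ℝ] g)
    (s_antisymm : ∀ Y Y' : h, s Y' Y = - s Y Y')
    (s_def : ∀ (X : g) (Y Y' : h), inng (s Y Y') X = - innh Y (act X Y'))
    {k t₁ t₂ : ℕ} (A : AlternatingMap ℝ V g (Fin k))
    (B₁ : AlternatingMap ℝ V h (Fin t₁)) (B₂ : AlternatingMap ℝ V h (Fin t₂)) :
    wedge (fun X X' => inng X X') (wedge (fun Y Y' => s Y Y') ⇑B₁ ⇑B₂) ⇑A =
      ((-1 : ℝ) ^ (k * t₂ + 1)) •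
        reindex (by omega : t₁ + (k + t₂) = (t₁ + t₂) + k)
          (wedge (fun Y Y' => innh Y Y') ⇑B₁ (wedge (fun X Y => act X Y) ⇑A ⇑B₂)) ∧
    wedge (fun X X' => inng X X') ⇑A (wedge (fun Y Y' => s Y Y') ⇑B₁ ⇑B₂) =
      ((-1 : ℝ) ^ (t₁ * t₂ + 1)) •
        reindex (by omega : (k + t₂) + t₁ = k + (t₁ + t₂))
          (wedge (fun Y Y' => innh Y Y') (wedge (fun X Y => act X Y) ⇑A ⇑B₂) ⇑B₁) := by
  have hadd_g : ∀ (x y z : g), inng (x + y) z = inng x z + inng y z := by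
    intro x y z; simp
  have hsmul_g : ∀ (n : ℤ) (x z : g), inng (n • x) z = n • inng x z := by
    intro n x z
    rw [← Int.cast_smul_eq_zsmul ℝ n x, map_smul, LinearMap.smul_apply, smul_eq_mul,
      zsmul_eq_mul]
  have hadd_g2 : ∀ (x : g) (y z : g), inng x (y + z) = inng x y + inng x z := by
    intro x y z; simp
  have hsmul_g2 : ∀ (n : ℤ) (x : g) (y : g), inng x (n • y) = n • inng x y := by
    intro n x y
    rw [← Int.cast_smul_eq_zsmul ℝ n y, map_smul, smul_eq_mul, zsmul_eq_mul]
  have hadd_h : ∀ (x y z : h), innh (x + y) z = innh x z + innh y z := by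
    intro x y z; simp
  have hsmul_h : ∀ (n : ℤ) (x z : h), innh (n • x) z = n • innh x z := by
    intro n x z
    rw [← Int.cast_smul_eq_zsmul ℝ n x, map_smul, LinearMap.smul_apply, smul_eq_mul,
      zsmul_eq_mul]
  have hadd_h2 : ∀ (x : h) (y z : h), innh x (y + z) = innh x y + innh x z := by
    intro x y z; simp
  have hsmul_h2 : ∀ (n : ℤ) (x : h) (y : h), innh x (n • y) = n • innh x y := by
    intro n x y
    rw [← Int.cast_smul_eq_zsmul ℝ n y, map_smul, smul_eq_mul, zsmul_eq_mul]
  constructor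
  · -- first identity
    have h1 : wedge (fun X X' => inng X X') (wedge (fun Y Y' => s Y Y') ⇑B₁ ⇑B₂) ⇑A
        = tsum (fun (x y : h) (z : g) => inng (s x y) z) ⇑B₁ ⇑B₂ ⇑A :=
      wedge_wedge_left _ _ hadd_g hsmul_g ⇑B₁ ⇑B₂ ⇑A
    have h2 : tsum (fun (x y : h) (z : g) => inng (s x y) z) ⇑B₁ ⇑B₂ ⇑A
        = ((-1 : ℤ) ^ (t₂ * k)) •
            reindex (by omega : t₁ + k + t₂ = t₁ + t₂ + k)
              (tsum (fun (x : h) (z : g) (y : h) => inng (s x y) z) ⇑B₁ ⇑A ⇑B₂) :=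
      tsum_swap23 _ ⇑B₁ ⇑B₂ ⇑A
    have hphi : (fun (x : h) (z : g) (y : h) => inng (s x y) z)
        = fun (x : h) (z : g) (y : h) => -(innh x (act z y)) := by
      funext x z y; rw [s_def]
    have h4 : tsum (fun (x : h) (z : g) (y : h) => -(innh x (act z y))) ⇑B₁ ⇑A ⇑B₂
        = - tsum (fun (x : h) (z : g) (y : h) => innh x (act z y)) ⇑B₁ ⇑A ⇑B₂ :=
      tsum_neg _ _ _ _
    have h3 : wedge (fun Y Y' => innh Y Y') ⇑B₁ (wedge (fun X Y => act X Y) ⇑A ⇑B₂)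
        = reindex (by omega : t₁ + k + t₂ = t₁ + (k + t₂))
            (tsum (fun (x : h) (z : g) (y : h) => innh x (act z y)) ⇑B₁ ⇑A ⇑B₂) :=
      wedge_wedge_right _ _ hadd_h2 hsmul_h2 ⇑B₁ ⇑A ⇑B₂
    rw [h1, h2, hphi, h4, h3, reindex_reindex, show k * t₂ + 1 = t₂ * k + 1 by ring]
    exact smul_neg_reindex _ _ _ _
  · -- second identity
    have h1 : wedge (fun X X' => inng X X') ⇑A (wedge (fun Y Y' => s Y Y') ⇑B₁ ⇑B₂)
        = reindex (by omega : k + t₁ + t₂ = k + (t₁ + t₂))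
            (tsum (fun (x : g) (y z : h) => inng x (s y z)) ⇑A ⇑B₁ ⇑B₂) :=
      wedge_wedge_right _ _ hadd_g2 hsmul_g2 ⇑A ⇑B₁ ⇑B₂
    have h2 : wedge (fun Y Y' => innh Y Y') (wedge (fun X Y => act X Y) ⇑A ⇑B₂) ⇑B₁
        = tsum (fun (x : g) (y : h) (z : h) => innh (act x y) z) ⇑A ⇑B₂ ⇑B₁ :=
      wedge_wedge_left _ _ hadd_h hsmul_h ⇑A ⇑B₂ ⇑B₁
    have h3 : tsum (fun (x : g) (y : h) (z : h) => innh (act x y) z) ⇑A ⇑B₂ ⇑B₁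
        = ((-1 : ℤ) ^ (t₂ * t₁)) •
            reindex (by omega : k + t₁ + t₂ = k + t₂ + t₁)
              (tsum (fun (x : g) (z : h) (y : h) => innh (act x y) z) ⇑A ⇑B₁ ⇑B₂) :=
      tsum_swap23 _ ⇑A ⇑B₂ ⇑B₁
    have hphi : (fun (x : g) (z : h) (y : h) => innh (act x y) z)
        = fun (x : g) (z : h) (y : h) => -(inng x (s z y)) := by
      funext x z y
      rw [innh_symm (act x y) z, inng_symm x (s z y), s_def x z y, neg_neg]
    have h4 : tsum (fun (x : g) (z : h) (y : h) => -(inng x (s z y))) ⇑A ⇑B₁ ⇑B₂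
        = - tsum (fun (x : g) (z : h) (y : h) => inng x (s z y)) ⇑A ⇑B₁ ⇑B₂ :=
      tsum_neg _ _ _ _
    rw [h1, h2, h3, hphi, h4, reindex_zsmul, reindex_reindex,
      smul_neg_reindex (by omega : k + t₁ + t₂ = k + (t₁ + t₂))
        (by omega : k + t₁ + t₂ = k + (t₁ + t₂)) (t₂ * t₁)
        (tsum (fun (x : g) (z : h) (y : h) => inng x (s z y)) ⇑A ⇑B₁ ⇑B₂),
      smul_smul, show ((-1 : ℝ) ^ (t₁ * t₂ + 1)) * ((-1 : ℝ) ^ (t₂ * t₁ + 1)) = 1 by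
        rw [← pow_add, show t₁ * t₂ + 1 + (t₂ * t₁ + 1) = 2 * (t₁ * t₂ + 1) by ring,
          pow_mul, neg_one_sq, one_pow], one_smul]
end
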